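/- arXiv:2104.14023 — 6 statements merged into one kernel-verified Lean document; each statement's English description precedes it below -/
import Mathlib

section
/- For probability measures π on ℝ^(p+q) with marginals μ on ℝ^p and ν on ℝ^q (all with finite second moments), and reference measures υ₁ on ℝ^p, υ₂ on ℝ^q with finite second moments, the quantity T(π) = W₂²(π, υ₁ ⊗ υ₂) − W₂²(μ, υ₁) − W₂²(ν, υ₂) is nonnegative, where W₂ is the 2-Wasserstein distance. -/
open MeasureTheory

/-- The set of couplings of two measures. -/
def Couplings {α β : Type*} [MeasurableSpace α] [MeasurableSpace β]
    (μ : Measure α) (ν : Measure β) : Set (Measure (α × β)) :=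
  {γ | γ.map Prod.fst = μ ∧ γ.map Prod.snd = ν}

/-- Squared 2-Wasserstein distance between measures on ℝ^n (Euclidean cost). -/
noncomputable def W2sq {n : ℕ} (μ ν : Measure (Fin n → ℝ)) : ℝ :=
  sInf { c | ∃ γ ∈ Couplings μ ν,
    c = ∫ w, (∑ i, (w.1 i - w.2 i) ^ 2) ∂γ }

/-- Finite second moment. -/
def HasFiniteSecondMoment {n : ℕ} (μ : Measure (Fin n → ℝ)) : Prop :=
  Integrable (fun x => ∑ i, (x i) ^ 2) μ

/-- Projection onto the first `p` coordinates. -/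
def proj1 (p q : ℕ) : (Fin (p + q) → ℝ) → (Fin p → ℝ) :=
  fun x i => x (Fin.castAdd q i)

/-- Projection onto the last `q` coordinates. -/
def proj2 (p q : ℕ) : (Fin (p + q) → ℝ) → (Fin q → ℝ) :=
  fun x i => x (Fin.natAdd p i)

/-- Concatenation map `(ℝ^p) × (ℝ^q) → ℝ^(p+q)`. -/
def pairToVec (p q : ℕ) : (Fin p → ℝ) × (Fin q → ℝ) → (Fin (p + q) → ℝ) :=
  fun z => Fin.append z.1 z.2

lemma measurable_proj1 (p q : ℕ) : Measurable (proj1 p q) :=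
  measurable_pi_lambda _ fun _ => measurable_pi_apply _

lemma measurable_proj2 (p q : ℕ) : Measurable (proj2 p q) :=
  measurable_pi_lambda _ fun _ => measurable_pi_apply _

lemma measurable_pairToVec (p q : ℕ) : Measurable (pairToVec p q) := by
  apply measurable_pi_lambda
  intro i
  refine Fin.addCases (fun j => ?_) (fun j => ?_) i
  · simpa [pairToVec, Fin.append_left, Function.comp_def] using (measurable_pi_apply j).comp measurable_fst
  · simpa [pairToVec, Fin.append_right, Function.comp_def] using (measurable_pi_apply j).comp measurable_snd

lemma measurable_sqsum (n : ℕ) : Measurable (fun x : Fin n → ℝ => ∑ i, (x i) ^ 2) :=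
  Finset.measurable_sum _ fun i _ => (measurable_pi_apply i).pow_const 2

lemma measurable_cost (n : ℕ) :
    Measurable (fun w : (Fin n → ℝ) × (Fin n → ℝ) => ∑ i, (w.1 i - w.2 i) ^ 2) :=
  Finset.measurable_sum _ fun i _ =>
    (((measurable_pi_apply i).comp measurable_fst).sub
      ((measurable_pi_apply i).comp measurable_snd)).pow_const 2

lemma W2sq_bddBelow {n : ℕ} (μ ν : Measure (Fin n → ℝ)) :
    BddBelow { c | ∃ γ ∈ Couplings μ ν, c = ∫ w, (∑ i, (w.1 i - w.2 i) ^ 2) ∂γ } := by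
  refine ⟨0, ?_⟩
  rintro c ⟨γ, -, rfl⟩
  exact integral_nonneg fun w => Finset.sum_nonneg fun i _ => sq_nonneg _

lemma W2sq_le {n : ℕ} {μ ν : Measure (Fin n → ℝ)} {γ : Measure ((Fin n → ℝ) × (Fin n → ℝ))}
    (h : γ ∈ Couplings μ ν) :
    W2sq μ ν ≤ ∫ w, (∑ i, (w.1 i - w.2 i) ^ 2) ∂γ :=
  csInf_le (W2sq_bddBelow μ ν) ⟨γ, h, rfl⟩

/-- Integrability transfer along a map. -/
lemma integrable_comp_of_map {α β : Type*} [MeasurableSpace α] [MeasurableSpace β]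
    {μ : Measure α} {f : α → β} (hf : Measurable f) {g : β → ℝ} (hg : Measurable g)
    (h : Integrable g (μ.map f)) : Integrable (fun x => g (f x)) μ :=
  (integrable_map_measure hg.aestronglyMeasurable hf.aemeasurable).mp h

/-- `T(π) = W₂²(π, υ₁ ⊗ υ₂) − W₂²(μ, υ₁) − W₂²(ν, υ₂) ≥ 0`. -/
theorem T_nonneg (p q : ℕ)
    (π : Measure (Fin (p + q) → ℝ)) [IsProbabilityMeasure π]
    (υ₁ : Measure (Fin p → ℝ)) [IsProbabilityMeasure υ₁]
    (υ₂ : Measure (Fin q → ℝ)) [IsProbabilityMeasure υ₂]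
    (hπ : HasFiniteSecondMoment π)
    (hυ₁ : HasFiniteSecondMoment υ₁) (hυ₂ : HasFiniteSecondMoment υ₂)
    (μ : Measure (Fin p → ℝ)) (ν : Measure (Fin q → ℝ))
    (hμ : μ = π.map (proj1 p q)) (hν : ν = π.map (proj2 p q)) :
    0 ≤ W2sq π ((υ₁.prod υ₂).map (pairToVec p q)) - W2sq μ υ₁ - W2sq ν υ₂ := by
  have hmp1 := measurable_proj1 p q
  have hmp2 := measurable_proj2 p q
  have hmpv := measurable_pairToVec p q
  set X : Measure (Fin (p + q) → ℝ) := (υ₁.prod υ₂).map (pairToVec p q) with hXdef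
  haveI : IsProbabilityMeasure X := Measure.isProbabilityMeasure_map hmpv.aemeasurable
  -- reduce to superadditivity
  have key : W2sq μ υ₁ + W2sq ν υ₂ ≤ W2sq π X := by
    -- nonempty coupling set for the big problem
    have hne : { c | ∃ γ ∈ Couplings π X,
        c = ∫ w, (∑ i, (w.1 i - w.2 i) ^ 2) ∂γ }.Nonempty := by
      refine ⟨_, π.prod X, ⟨?_, ?_⟩, rfl⟩
      · exact Measure.fst_prod
      · exact Measure.snd_prod
    refine le_csInf hne ?_
    rintro c ⟨γ, ⟨hγ1, hγ2⟩, rfl⟩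
    -- second moments of the two marginals of γ
    have hf1 : Integrable (fun w : (Fin (p+q) → ℝ) × (Fin (p+q) → ℝ) => ∑ i, (w.1 i) ^ 2) γ :=
      integrable_comp_of_map measurable_fst (measurable_sqsum _) (by rwa [hγ1])
    have hX2 : HasFiniteSecondMoment X := by
      rw [HasFiniteSecondMoment, hXdef,
        integrable_map_measure (measurable_sqsum _).aestronglyMeasurable hmpv.aemeasurable]
      have hkey : ((fun x : Fin (p + q) → ℝ => ∑ i, (x i) ^ 2) ∘ pairToVec p q)
          = fun z => (∑ i, (z.1 i) ^ 2) + (∑ i, (z.2 i) ^ 2) := by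
        funext z
        simp only [Function.comp, Fin.sum_univ_add, pairToVec, Fin.append_left, Fin.append_right]
      rw [hkey]
      have h1 : Integrable (fun z : (Fin p → ℝ) × (Fin q → ℝ) => ∑ i, (z.1 i) ^ 2)
          (υ₁.prod υ₂) :=
        integrable_comp_of_map measurable_fst (measurable_sqsum p)
          (by rw [show (υ₁.prod υ₂).map Prod.fst = υ₁ from Measure.fst_prod]; exact hυ₁)
      have h2 : Integrable (fun z : (Fin p → ℝ) × (Fin q → ℝ) => ∑ i, (z.2 i) ^ 2)
          (υ₁.prod υ₂) :=
        integrable_comp_of_map measurable_snd (measurable_sqsum q)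
          (by rw [show (υ₁.prod υ₂).map Prod.snd = υ₂ from Measure.snd_prod]; exact hυ₂)
      exact h1.add h2
    have hf2 : Integrable (fun w : (Fin (p+q) → ℝ) × (Fin (p+q) → ℝ) => ∑ i, (w.2 i) ^ 2) γ :=
      integrable_comp_of_map measurable_snd (measurable_sqsum _) (by rwa [hγ2])
    -- total cost is integrable
    have hcost : Integrable
        (fun w : (Fin (p+q) → ℝ) × (Fin (p+q) → ℝ) => ∑ i, (w.1 i - w.2 i) ^ 2) γ := by
      refine ((hf1.const_mul 2).add (hf2.const_mul 2)).mono'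
        (measurable_cost _).aestronglyMeasurable (Filter.Eventually.of_forall fun w => ?_)
      rw [Real.norm_eq_abs, abs_of_nonneg (Finset.sum_nonneg fun i _ => sq_nonneg _)]
      calc ∑ i, (w.1 i - w.2 i) ^ 2
          ≤ ∑ i, (2 * (w.1 i) ^ 2 + 2 * (w.2 i) ^ 2) := by
            refine Finset.sum_le_sum fun i _ => ?_
            nlinarith [sq_nonneg (w.1 i + w.2 i)]
        _ = 2 * (∑ i, (w.1 i) ^ 2) + 2 * (∑ i, (w.2 i) ^ 2) := by
            rw [Finset.sum_add_distrib, Finset.mul_sum, Finset.mul_sum]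
    -- the two partial costs
    set g₁ : (Fin (p+q) → ℝ) × (Fin (p+q) → ℝ) → ℝ :=
      fun w => ∑ i : Fin p, (w.1 (Fin.castAdd q i) - w.2 (Fin.castAdd q i)) ^ 2 with hg₁def
    set g₂ : (Fin (p+q) → ℝ) × (Fin (p+q) → ℝ) → ℝ :=
      fun w => ∑ i : Fin q, (w.1 (Fin.natAdd p i) - w.2 (Fin.natAdd p i)) ^ 2 with hg₂def
    have hmg₁ : Measurable g₁ := Finset.measurable_sum _ fun i _ =>
      (((measurable_pi_apply _).comp measurable_fst).sub
        ((measurable_pi_apply _).comp measurable_snd)).pow_const 2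
    have hmg₂ : Measurable g₂ := Finset.measurable_sum _ fun i _ =>
      (((measurable_pi_apply _).comp measurable_fst).sub
        ((measurable_pi_apply _).comp measurable_snd)).pow_const 2
    have hsplit : ∀ w : (Fin (p+q) → ℝ) × (Fin (p+q) → ℝ),
        (∑ i, (w.1 i - w.2 i) ^ 2) = g₁ w + g₂ w := fun w => Fin.sum_univ_add _
    have hle : ∀ (g : (Fin (p+q) → ℝ) × (Fin (p+q) → ℝ) → ℝ), (∀ w, 0 ≤ g w) →
        (∀ w, g w ≤ ∑ i, (w.1 i - w.2 i) ^ 2) → Measurable g → Integrable g γ := by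
      intro g hnn hb hm
      refine hcost.mono' hm.aestronglyMeasurable (Filter.Eventually.of_forall fun w => ?_)
      rw [Real.norm_eq_abs, abs_of_nonneg (hnn w)]
      exact hb w
    have hi₁ : Integrable g₁ γ := by
      refine hle g₁ (fun w => Finset.sum_nonneg fun i _ => sq_nonneg _) (fun w => ?_) hmg₁
      rw [hsplit w]
      have : 0 ≤ g₂ w := Finset.sum_nonneg fun i _ => sq_nonneg _
      linarith
    have hi₂ : Integrable g₂ γ := by
      refine hle g₂ (fun w => Finset.sum_nonneg fun i _ => sq_nonneg _) (fun w => ?_) hmg₂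
      rw [hsplit w]
      have : 0 ≤ g₁ w := Finset.sum_nonneg fun i _ => sq_nonneg _
      linarith
    -- marginal couplings
    have hpm1 : Measurable (Prod.map (proj1 p q) (proj1 p q)) := hmp1.prodMap hmp1
    have hpm2 : Measurable (Prod.map (proj2 p q) (proj2 p q)) := hmp2.prodMap hmp2
    have hc1 : γ.map (Prod.map (proj1 p q) (proj1 p q)) ∈ Couplings μ υ₁ := by
      constructor
      · rw [Measure.map_map measurable_fst hpm1]
        have h0 : (Prod.fst ∘ Prod.map (proj1 p q) (proj1 p q)) = proj1 p q ∘ Prod.fst := rfl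
        rw [h0, ← Measure.map_map hmp1 measurable_fst, hγ1, hμ]
      · rw [Measure.map_map measurable_snd hpm1]
        have h0 : (Prod.snd ∘ Prod.map (proj1 p q) (proj1 p q)) = proj1 p q ∘ Prod.snd := rfl
        rw [h0, ← Measure.map_map hmp1 measurable_snd, hγ2, hXdef,
          Measure.map_map hmp1 hmpv]
        have h2 : (proj1 p q ∘ pairToVec p q) = Prod.fst := by
          funext z
          funext i
          simp [proj1, pairToVec, Fin.append_left]
        rw [h2]
        exact Measure.fst_prod
    have hc2 : γ.map (Prod.map (proj2 p q) (proj2 p q)) ∈ Couplings ν υ₂ := by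
      constructor
      · rw [Measure.map_map measurable_fst hpm2]
        have h0 : (Prod.fst ∘ Prod.map (proj2 p q) (proj2 p q)) = proj2 p q ∘ Prod.fst := rfl
        rw [h0, ← Measure.map_map hmp2 measurable_fst, hγ1, hν]
      · rw [Measure.map_map measurable_snd hpm2]
        have h0 : (Prod.snd ∘ Prod.map (proj2 p q) (proj2 p q)) = proj2 p q ∘ Prod.snd := rfl
        rw [h0, ← Measure.map_map hmp2 measurable_snd, hγ2, hXdef,
          Measure.map_map hmp2 hmpv]
        have h2 : (proj2 p q ∘ pairToVec p q) = Prod.snd := by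
          funext z
          funext i
          simp [proj2, pairToVec, Fin.append_right]
        rw [h2]
        exact Measure.snd_prod
    have hb1 : W2sq μ υ₁ ≤ ∫ w, g₁ w ∂γ := by
      refine le_trans (W2sq_le hc1) (le_of_eq ?_)
      rw [integral_map hpm1.aemeasurable (measurable_cost p).aestronglyMeasurable]
      rfl
    have hb2 : W2sq ν υ₂ ≤ ∫ w, g₂ w ∂γ := by
      refine le_trans (W2sq_le hc2) (le_of_eq ?_)
      rw [integral_map hpm2.aemeasurable (measurable_cost q).aestronglyMeasurable]
      rfl
    have htotal : (∫ w, (∑ i, (w.1 i - w.2 i) ^ 2) ∂γ) = (∫ w, g₁ w ∂γ) + (∫ w, g₂ w ∂γ) := by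
      rw [← integral_add hi₁ hi₂]
      exact integral_congr_ae (Filter.Eventually.of_forall hsplit)
    rw [htotal]
    exact add_le_add hb1 hb2
  linarith
end

section
/- Let Σ and Ξ be positive semidefinite d×d real matrices. The squared Bures–Wasserstein distance d_W²(Σ, Ξ) = trace(Σ) + trace(Ξ) − 2·trace((Σ^{1/2} Ξ Σ^{1/2})^{1/2}) is nonnegative, and equals zero if and only if Σ = Ξ. -/
open Matrix
open scoped Classical

/-- Positive semidefinite matrix square root, extended by `0` to all matrices. -/
noncomputable def msqrt {n : Type*} [Fintype n] [DecidableEq n]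
    (A : Matrix n n ℝ) : Matrix n n ℝ :=
  if h : A.PosSemidef then
    (h.1.eigenvectorUnitary : Matrix n n ℝ) * diagonal ((↑) ∘ (√·) ∘ h.1.eigenvalues) *
      (star h.1.eigenvectorUnitary : Matrix n n ℝ)
  else 0

/-- Squared Bures–Wasserstein distance. -/
noncomputable def BW2 {n : Type*} [Fintype n] [DecidableEq n]
    (S X : Matrix n n ℝ) : ℝ :=
  S.trace + X.trace - 2 * (msqrt (msqrt S * X * msqrt S)).trace

namespace Matrix.PosSemidef
open scoped MatrixOrder
variable {n : Type*} [Fintype n] [DecidableEq n]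

noncomputable def sqrt {A : Matrix n n ℝ} (h : A.PosSemidef) : Matrix n n ℝ :=
  (h.1.eigenvectorUnitary : Matrix n n ℝ) * diagonal ((↑) ∘ (√·) ∘ h.1.eigenvalues) *
      (star h.1.eigenvectorUnitary : Matrix n n ℝ)

lemma sqrt_eq_cfc {A : Matrix n n ℝ} (h : A.PosSemidef) : h.sqrt = CFC.sqrt A := by
  rw [CFC.sqrt_eq_cfc, cfc_nnreal_eq_real _ A h.nonneg, h.1.cfc_eq, IsHermitian.cfc,
    Unitary.conjStarAlgAut_apply, sqrt]
  congr 3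
  funext i
  simp [Real.coe_toNNReal', h.eigenvalues_nonneg i]

lemma posSemidef_sqrt {A : Matrix n n ℝ} (h : A.PosSemidef) : h.sqrt.PosSemidef := by
  rw [sqrt_eq_cfc, ← nonneg_iff_posSemidef]; exact CFC.sqrt_nonneg A

lemma sqrt_mul_self {A : Matrix n n ℝ} (h : A.PosSemidef) : h.sqrt * h.sqrt = A := by
  rw [sqrt_eq_cfc]; exact CFC.sqrt_mul_sqrt_self A h.nonneg

lemma sq_sqrt {A : Matrix n n ℝ} (h : A.PosSemidef) : h.sqrt ^ 2 = A := by
  rw [pow_two, sqrt_mul_self]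

lemma eq_sqrt_of_sq_eq {A B : Matrix n n ℝ} (hA : A.PosSemidef) (hB : B.PosSemidef)
    (hAB : A ^ 2 = B) : A = hB.sqrt := by
  rw [sqrt_eq_cfc, eq_comm]
  exact CFC.sqrt_unique (by rw [← pow_two, hAB]) hA.nonneg

end Matrix.PosSemidef

section aux
variable {n : Type*} [Fintype n] [DecidableEq n]

lemma trace_conjTranspose_mul_self_nonneg (C : Matrix n n ℝ) :
    0 ≤ (Cᴴ * C).trace := by
  rw [Matrix.trace]
  refine Finset.sum_nonneg fun j _ => ?_
  simp only [Matrix.diag_apply, Matrix.mul_apply, Matrix.conjTranspose_apply, star_trivial]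
  exact Finset.sum_nonneg fun i _ => mul_self_nonneg _

lemma eq_zero_of_trace_conjTranspose_mul_self (C : Matrix n n ℝ)
    (h : (Cᴴ * C).trace = 0) : C = 0 := by
  rw [Matrix.trace] at h
  have hz : ∀ j ∈ Finset.univ, ((Cᴴ * C).diag j) = 0 := by
    refine (Finset.sum_eq_zero_iff_of_nonneg fun j _ => ?_).mp h
    simp only [Matrix.diag_apply, Matrix.mul_apply, Matrix.conjTranspose_apply, star_trivial]
    exact Finset.sum_nonneg fun i _ => mul_self_nonneg _
  ext i j
  have := hz j (Finset.mem_univ j)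
  simp only [Matrix.diag_apply, Matrix.mul_apply, Matrix.conjTranspose_apply, star_trivial] at this
  have := (Finset.sum_eq_zero_iff_of_nonneg fun i _ => mul_self_nonneg (C i j)).mp this i
    (Finset.mem_univ i)
  simpa using mul_self_eq_zero.mp this

lemma psd_trace_nonneg {M : Matrix n n ℝ} (hM : M.PosSemidef) : 0 ≤ M.trace := by
  have h := trace_conjTranspose_mul_self_nonneg hM.sqrt
  rwa [hM.posSemidef_sqrt.1.eq, hM.sqrt_mul_self] at h

lemma psd_eq_zero_of_trace {M : Matrix n n ℝ} (hM : M.PosSemidef) (h : M.trace = 0) :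
    M = 0 := by
  have h' : (hM.sqrtᴴ * hM.sqrt).trace = 0 := by
    rwa [hM.posSemidef_sqrt.1.eq, hM.sqrt_mul_self]
  have := eq_zero_of_trace_conjTranspose_mul_self _ h'
  rw [← hM.sqrt_mul_self, this, mul_zero]

lemma exists_partial_isometry {P C : Matrix n n ℝ} (hP : P.PosSemidef)
    (hC : Cᴴ * C = P ^ 2) :
    ∃ U : Matrix n n ℝ, Uᴴ * C = P ∧ (U * Uᴴ) * (U * Uᴴ) = U * Uᴴ := by
  set μ : n → ℝ := hP.1.eigenvalues with hμ
  set V : Matrix n n ℝ := (hP.1.eigenvectorUnitary : Matrix n n ℝ) with hV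
  have hVV : Vᴴ * V = 1 := by
    simpa [hV, Matrix.star_eq_conjTranspose] using
      (Matrix.mem_unitaryGroup_iff'.mp hP.1.eigenvectorUnitary.2)
  have hVc : ∀ Z : Matrix n n ℝ, Vᴴ * (V * Z) = Z := fun Z => by
    rw [← Matrix.mul_assoc, hVV, Matrix.one_mul]
  have hPdec : P = V * diagonal μ * Vᴴ := by
    simpa [hV, hμ, Matrix.star_eq_conjTranspose, Function.comp] using hP.1.spectral_theorem
  set R : Matrix n n ℝ := V * diagonal (fun i => (μ i)⁻¹) * Vᴴ with hR
  have hRH : Rᴴ = R := by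
    simp [hR, Matrix.conjTranspose_mul, Matrix.diagonal_conjTranspose, Matrix.mul_assoc]
  have key1 : diagonal (fun i => (μ i)⁻¹) * (diagonal μ * diagonal μ) = diagonal μ := by
    rw [Matrix.diagonal_mul_diagonal, Matrix.diagonal_mul_diagonal]
    refine congrArg Matrix.diagonal (funext fun i => ?_)
    rcases eq_or_ne (μ i) 0 with h | h
    · rw [h]; simp
    · field_simp
  have key1' : ∀ Z : Matrix n n ℝ,
      diagonal (fun i => (μ i)⁻¹) * (diagonal μ * (diagonal μ * Z)) = diagonal μ * Z := by
    intro Z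
    rw [show diagonal (fun i : n => (μ i)⁻¹) * (diagonal μ * (diagonal μ * Z))
        = (diagonal (fun i : n => (μ i)⁻¹) * (diagonal μ * diagonal μ)) * Z from by
      simp only [Matrix.mul_assoc], key1]
  have key2 : diagonal (fun i : n => (μ i)⁻¹) * (diagonal μ * diagonal (fun i => (μ i)⁻¹))
      = diagonal (fun i => (μ i)⁻¹) := by
    rw [Matrix.diagonal_mul_diagonal, Matrix.diagonal_mul_diagonal]
    refine congrArg Matrix.diagonal (funext fun i => ?_)
    rcases eq_or_ne (μ i) 0 with h | h
    · rw [h]; simp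
    · field_simp
  have key2' : ∀ Z : Matrix n n ℝ,
      diagonal (fun i : n => (μ i)⁻¹) * (diagonal μ * (diagonal (fun i => (μ i)⁻¹) * Z))
      = diagonal (fun i : n => (μ i)⁻¹) * Z := by
    intro Z
    rw [show diagonal (fun i : n => (μ i)⁻¹) * (diagonal μ * (diagonal (fun i => (μ i)⁻¹) * Z))
        = (diagonal (fun i : n => (μ i)⁻¹) * (diagonal μ * diagonal (fun i => (μ i)⁻¹))) * Z from by
      rw [Matrix.mul_assoc, Matrix.mul_assoc], key2]
  have hRP2 : R * P ^ 2 = P := by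
    rw [pow_two, hPdec, hR]
    simp only [Matrix.mul_assoc]
    simp only [hVc]
    rw [key1' Vᴴ]
  refine ⟨C * R, ?_, ?_⟩
  · rw [Matrix.conjTranspose_mul, hRH, Matrix.mul_assoc R Cᴴ C, hC, hRP2]
  · have hUU : (C * R)ᴴ * (C * R) = P * R := by
      rw [Matrix.conjTranspose_mul, hRH, Matrix.mul_assoc R Cᴴ (C * R),
        ← Matrix.mul_assoc Cᴴ C R, hC, ← Matrix.mul_assoc, hRP2]
    have hstep : (C * R) * ((C * R)ᴴ * (C * R)) = C * R := by
      rw [hUU, hPdec, hR]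
      simp only [Matrix.mul_assoc]
      simp only [hVc]
      rw [key2' Vᴴ]
    calc (C * R) * (C * R)ᴴ * ((C * R) * (C * R)ᴴ)
        = ((C * R) * ((C * R)ᴴ * (C * R))) * (C * R)ᴴ := by
          simp only [Matrix.mul_assoc]
      _ = (C * R) * (C * R)ᴴ := by rw [hstep]


lemma BW2_self {M : Matrix n n ℝ} (hM : M.PosSemidef) : BW2 M M = 0 := by
  set N := hM.sqrt with hNdef
  have hA : msqrt M = N := by unfold msqrt; exact dif_pos hM
  have hAA : N * N = M := hM.sqrt_mul_self
  have hNH : Nᴴ = N := hM.posSemidef_sqrt.1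
  have hM2 : (N * M * N).PosSemidef := by
    have h := Matrix.posSemidef_conjTranspose_mul_self (N * N)
    rw [Matrix.conjTranspose_mul, hNH] at h
    rw [show N * M * N = N * N * (N * N) from by
      rw [← hAA]; simp only [Matrix.mul_assoc]]
    exact h
  have hsq : M ^ 2 = N * M * N := by
    rw [pow_two, ← hAA]; simp only [Matrix.mul_assoc]
  have hMroot : M = hM2.sqrt := hM.eq_sqrt_of_sq_eq hM2 hsq
  have : msqrt (msqrt M * M * msqrt M) = M := by
    rw [hA]
    unfold msqrt
    rw [dif_pos hM2]; exact hMroot.symm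
  rw [BW2, this]
  ring

end aux

/-- the squared Bures–Wasserstein distance between positive semidefinite
matrices is nonnegative, and vanishes iff the two matrices are equal. -/
theorem BW2_nonneg_and_eq_zero_iff {d : ℕ} (S X : Matrix (Fin d) (Fin d) ℝ)
    (hS : S.PosSemidef) (hX : X.PosSemidef) :
    0 ≤ BW2 S X ∧ (BW2 S X = 0 ↔ S = X) := by
  have hA : msqrt S = hS.sqrt := by unfold msqrt; exact dif_pos hS
  set A := hS.sqrt with hAdef
  set B := hX.sqrt with hBdef
  have hAH : Aᴴ = A := hS.posSemidef_sqrt.1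
  have hBH : Bᴴ = B := hX.posSemidef_sqrt.1
  have hAA : A * A = S := hS.sqrt_mul_self
  have hBB : B * B = X := hX.sqrt_mul_self
  have hMeq : (B * A)ᴴ * (B * A) = A * X * A := by
    rw [Matrix.conjTranspose_mul, hAH, hBH, ← hBB]
    simp only [Matrix.mul_assoc]
  have hM : (A * X * A).PosSemidef := hMeq ▸ Matrix.posSemidef_conjTranspose_mul_self (B * A)
  set P := hM.sqrt with hPdef
  have hPH : Pᴴ = P := hM.posSemidef_sqrt.1
  have hMsq : msqrt (msqrt S * X * msqrt S) = P := by
    rw [hA]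
    unfold msqrt
    rw [dif_pos hM]; exact hPdef.symm
  have hBW : BW2 S X = S.trace + X.trace - 2 * P.trace := by rw [BW2, hMsq]
  have hC : (B * A)ᴴ * (B * A) = P ^ 2 := by rw [hMeq, hM.sq_sqrt]
  obtain ⟨U, hUC, hQQ⟩ := exists_partial_isometry hM.posSemidef_sqrt hC
  set Q := U * Uᴴ with hQdef
  have hQH : Qᴴ = Q := by
    rw [hQdef, Matrix.conjTranspose_mul, Matrix.conjTranspose_conjTranspose]
  have hQ1 : (1 - Q).PosSemidef := by
    have h1 : (1 - Q)ᴴ = 1 - Q := by rw [Matrix.conjTranspose_sub, hQH, Matrix.conjTranspose_one]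
    have h2 : (1 - Q)ᴴ * (1 - Q) = 1 - Q := by
      rw [h1, Matrix.sub_mul, Matrix.one_mul, Matrix.mul_sub, Matrix.mul_one, hQQ]
      abel
    exact h2 ▸ Matrix.posSemidef_conjTranspose_mul_self (1 - Q)
  have hT1ps : (B * (1 - Q) * B).PosSemidef := by
    have := hQ1.conjTranspose_mul_mul_same B
    rwa [hBH] at this
  have hT2ps : ((B * U - A)ᴴ * (B * U - A)).PosSemidef :=
    Matrix.posSemidef_conjTranspose_mul_self (B * U - A)
  have expand1 : B * (1 - Q) * B = B * B - B * (Q * B) := by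
    rw [Matrix.mul_sub, Matrix.mul_one, Matrix.sub_mul, Matrix.mul_assoc]
  have expand2 : (B * U - A)ᴴ * (B * U - A)
      = Uᴴ * (B * (B * U)) - Uᴴ * (B * A) - (A * (B * U) - A * A) := by
    rw [Matrix.conjTranspose_sub, Matrix.conjTranspose_mul, hBH, hAH,
      Matrix.sub_mul, Matrix.mul_sub, Matrix.mul_sub]
    simp only [Matrix.mul_assoc]
  have c1 : (Uᴴ * (B * (B * U))).trace = (B * (Q * B)).trace := by
    calc (Uᴴ * (B * (B * U))).trace
        = ((B * (B * U)) * Uᴴ).trace := Matrix.trace_mul_comm _ _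
      _ = (B * (B * Q)).trace := by rw [hQdef]; simp only [Matrix.mul_assoc]
      _ = ((B * Q) * B).trace := by rw [Matrix.trace_mul_comm]
      _ = (B * (Q * B)).trace := by simp only [Matrix.mul_assoc]
  have c2 : (Uᴴ * (B * A)).trace = P.trace := by rw [hUC]
  have c3 : (A * (B * U)).trace = P.trace := by
    have hT : (A * (B * U))ᴴ = Uᴴ * (B * A) := by
      rw [Matrix.conjTranspose_mul, Matrix.conjTranspose_mul, hAH, hBH]
      simp only [Matrix.mul_assoc]
    have h := Matrix.trace_conjTranspose (A * (B * U))
    rw [hT, star_trivial] at h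
    rw [← h, c2]
  have c4 : (A * A).trace = S.trace := by rw [hAA]
  have c5 : (B * B).trace = X.trace := by rw [hBB]
  have main : S.trace + X.trace - 2 * P.trace
      = (B * (1 - Q) * B).trace + ((B * U - A)ᴴ * (B * U - A)).trace := by
    rw [expand1, expand2]
    simp only [Matrix.trace_sub]
    linarith [c1, c2, c3, c4, c5]
  have t1 := psd_trace_nonneg hT1ps
  have t2 := psd_trace_nonneg hT2ps
  refine ⟨by rw [hBW]; linarith, ?_, fun h => by rw [h]; exact BW2_self hX⟩
  intro h0
  rw [hBW] at h0
  have hN : B * U - A = 0 := eq_zero_of_trace_conjTranspose_mul_self _ (by linarith)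
  have hBQ0 : B * (1 - Q) * B = 0 := psd_eq_zero_of_trace hT1ps (by linarith)
  have hBU : B * U = A := by rwa [sub_eq_zero] at hN
  have hUB : Uᴴ * B = A := by
    have := congrArg Matrix.conjTranspose hBU
    rwa [Matrix.conjTranspose_mul, hBH, hAH] at this
  have hQBS : B * (Q * B) = S := by
    rw [hQdef]
    calc B * (U * Uᴴ * B) = (B * U) * (Uᴴ * B) := by simp only [Matrix.mul_assoc]
      _ = A * A := by rw [hBU, hUB]
      _ = S := hAA
  have : X - S = 0 := by rw [← hBB, ← hQBS, ← expand1, hBQ0]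
  have := sub_eq_zero.mp this
  exact this.symm
end

section
/- Let Σ₁ be a p×p positive semidefinite matrix with eigendecomposition Σ₁ = U₁Λ₁U₁ᵀ and Σ₂ a q×q positive semidefinite matrix with eigendecomposition Σ₂ = U₂Λ₂U₂ᵀ, eigenvalues ordered decreasingly. With Π the p×q upper-left block of the (p+q)×(p+q) identity and Ψ_m = U₁Λ₁^{1/2}ΠΛ₂^{1/2}U₂ᵀ, the block matrix Σ_m = [[Σ₁, Ψ_m],[Ψ_mᵀ, Σ₂]] has eigenvalues λ_{j,1} + λ_{j,2} for j = 1,…,p+q, where λ_{j,1} (resp. λ_{j,2}) denotes the j-th largest eigenvalue of Σ₁ (resp. Σ₂), with the convention λ_{j,1} = 0 for j > p and λ_{j,2} = 0 for j > q. In particular, Σ_m is positive semidefinite. -/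
open Matrix Polynomial
open Fin.NatCast


/-- rectangular "ℕ-diagonal" matrix -/
def nd (p q : ℕ) (f : ℕ → ℝ) : Matrix (Fin p) (Fin q) ℝ :=
  Matrix.of fun i j => if (i : ℕ) = (j : ℕ) then f i else 0

lemma nd_apply {p q : ℕ} (f : ℕ → ℝ) (i : Fin p) (j : Fin q) :
    nd p q f i j = if (i : ℕ) = (j : ℕ) then f i else 0 := rfl

lemma nd_transpose {p q : ℕ} (f : ℕ → ℝ) : (nd p q f)ᵀ = nd q p f := by
  ext j i
  simp only [transpose_apply, nd_apply]
  by_cases h : (i : ℕ) = (j : ℕ)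
  · simp [h]
  · rw [if_neg h, if_neg (Ne.symm h)]

lemma nd_diagonal {p : ℕ} (f : ℕ → ℝ) :
    nd p p f = Matrix.diagonal (fun i : Fin p => f i) := by
  ext i j
  by_cases h : i = j
  · subst h; simp [nd_apply]
  · rw [Matrix.diagonal_apply_ne _ h, nd_apply, if_neg (by simpa [Fin.ext_iff] using h)]

lemma aux_sum_fin {q : ℕ} (m : ℕ) (F : ℕ → ℝ) :
    (∑ k : Fin q, if m = (k : ℕ) then F k else 0) = if m < q then F m else 0 := by
  by_cases h : m < q
  · rw [if_pos h, Finset.sum_eq_single (⟨m, h⟩ : Fin q)]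
    · simp
    · intro k _ hk
      rw [if_neg]
      intro he
      exact hk (by simp [Fin.ext_iff, ← he])
    · simp
  · rw [if_neg h]
    apply Finset.sum_eq_zero
    intro k _
    rw [if_neg]
    intro he
    exact h (he ▸ k.isLt)

lemma nd_mul_nd {p q r : ℕ} (f g : ℕ → ℝ) :
    nd p q f * nd q r g = nd p r (fun m => if m < q then f m * g m else 0) := by
  ext i j
  rw [Matrix.mul_apply, nd_apply]
  have : ∀ k : Fin q, nd p q f i k * nd q r g k j
      = if (i : ℕ) = (k : ℕ) then (if (k : ℕ) = (j : ℕ) then f (k : ℕ) * g (k : ℕ) else 0) else 0 := by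
    intro k
    rw [nd_apply, nd_apply]
    by_cases h : (i : ℕ) = (k : ℕ)
    · rw [if_pos h, if_pos h, ← h, mul_ite, mul_zero]
    · simp [h]
  rw [Finset.sum_congr rfl (fun k _ => this k)]
  have hs := aux_sum_fin (q := q) (i : ℕ) (fun m => if m = (j : ℕ) then f m * g m else 0)
  rw [hs]
  by_cases h2 : (i : ℕ) = (j : ℕ) <;> by_cases h3 : (i : ℕ) < q <;> simp [h2, h3]

lemma nd_add {p q : ℕ} (f g : ℕ → ℝ) : nd p q f + nd p q g = nd p q (fun m => f m + g m) := by
  ext i j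
  by_cases h : (i : ℕ) = (j : ℕ) <;> simp [nd_apply, h]

lemma nd_congr {p q : ℕ} {f g : ℕ → ℝ} (h : ∀ m, m < p → m < q → f m = g m) :
    nd p q f = nd p q g := by
  ext i j
  rw [nd_apply, nd_apply]
  by_cases h2 : (i : ℕ) = (j : ℕ)
  · rw [if_pos h2, if_pos h2, h i i.isLt (h2 ▸ j.isLt)]
  · simp [h2]


/-- permutation from multiset equality -/
lemma aux_exists_perm {n : ℕ} (f g : Fin n → ℝ)
    (h : Multiset.map f Finset.univ.val = Multiset.map g Finset.univ.val) :
    ∃ σ : Equiv.Perm (Fin n), f ∘ σ = g := by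
  have hperm : (List.ofFn f).Perm (List.ofFn g) := by
    rw [← Multiset.coe_eq_coe, ← Fin.univ_val_map, ← Fin.univ_val_map]; exact h
  have key : f ∘ Tuple.sort f = g ∘ Tuple.sort g := by
    apply List.ofFn_injective
    exact List.Perm.eq_of_sortedLE
      (Tuple.monotone_sort f).sortedLE_ofFn (Tuple.monotone_sort g).sortedLE_ofFn
      ((((Tuple.sort f).ofFn_comp_perm f).trans hperm).trans
        ((Tuple.sort g).ofFn_comp_perm g).symm)
  refine ⟨(Tuple.sort g).symm.trans (Tuple.sort f), ?_⟩
  funext j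
  have := congrFun key ((Tuple.sort g).symm j)
  simpa using this

/-- charpoly invariant under orthogonal conjugation -/
lemma aux_charpoly_conj {n : Type*} [Fintype n] [DecidableEq n]
    (W D : Matrix n n ℝ) (hW : W * Wᵀ = 1) : (W * D * Wᵀ).charpoly = D.charpoly := by
  have hW' : Wᵀ * W = 1 := mul_eq_one_comm.mp hW
  set f : Matrix n n ℝ →+* Matrix n n ℝ[X] := (Polynomial.C : ℝ →+* ℝ[X]).mapMatrix with hf
  have h1 : f W * f Wᵀ = 1 := by rw [← _root_.map_mul, hW, _root_.map_one]
  have key : charmatrix (W * D * Wᵀ) = f W * charmatrix D * f Wᵀ := by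
    unfold charmatrix
    rw [_root_.map_mul, _root_.map_mul, mul_sub, sub_mul]
    congr 1
    · -- f W * scalar n X * f Wᵀ = scalar n X
      have : f W * Matrix.scalar n (X : ℝ[X]) = Matrix.scalar n (X : ℝ[X]) * f W :=
        (Matrix.scalar_commute (X : ℝ[X]) (fun r => Commute.all _ _) (f W)).symm
      rw [this, mul_assoc, h1, mul_one]
  rw [Matrix.charpoly, key, det_mul, det_mul, mul_comm, ← mul_assoc]
  have : (f Wᵀ).det * (f W).det = 1 := by
    rw [← det_mul, ← _root_.map_mul, hW', _root_.map_one, det_one]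
  rw [this, one_mul, Matrix.charpoly]

lemma aux_charpoly_diagonal {n : Type*} [Fintype n] [DecidableEq n] (d : n → ℝ) :
    (Matrix.diagonal d).charpoly = ∏ i, (X - C (d i)) := by
  have : charmatrix (Matrix.diagonal d) = Matrix.diagonal (fun i => (X : ℝ[X]) - C (d i)) := by
    ext i j
    by_cases h : i = j
    · subst h; simp
    · simp [h, Matrix.diagonal_apply_ne _ h]
  rw [Matrix.charpoly, this, det_diagonal]

lemma aux_roots_prod {n : Type*} [Fintype n] (d : n → ℝ) :
    (∏ i, ((X : ℝ[X]) - C (d i))).roots = Multiset.map d Finset.univ.val := by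
  have : ∏ i, ((X : ℝ[X]) - C (d i))
      = ((Multiset.map d Finset.univ.val).map fun a => (X : ℝ[X]) - C a).prod := by
    rw [Multiset.map_map]; rfl
  rw [this, Polynomial.roots_multiset_prod_X_sub_C]

/-- eigenvalue multiset from an orthogonal diagonalization -/
lemma aux_multiset_eigenvalues {n : ℕ} (A W : Matrix (Fin n) (Fin n) ℝ) (d : Fin n → ℝ)
    (hW : W * Wᵀ = 1) (hA : A = W * Matrix.diagonal d * Wᵀ) (hherm : A.IsHermitian) :
    Multiset.map hherm.eigenvalues Finset.univ.val = Multiset.map d Finset.univ.val := by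
  have h1 : A.charpoly = ∏ i, ((X : ℝ[X]) - C (d i)) := by
    rw [hA, aux_charpoly_conj _ _ hW, aux_charpoly_diagonal]
  set U : Matrix (Fin n) (Fin n) ℝ := (Matrix.IsHermitian.eigenvectorUnitary hherm : Matrix (Fin n) (Fin n) ℝ) with hU
  have hUo : U * Uᵀ = 1 := by
    have := (Matrix.mem_unitaryGroup_iff).mp (Matrix.IsHermitian.eigenvectorUnitary hherm).2
    simpa [Matrix.star_eq_conjTranspose, Matrix.conjTranspose_eq_transpose_of_trivial] using this
  have hspec : A = U * Matrix.diagonal hherm.eigenvalues * Uᵀ := by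
    have := hherm.spectral_theorem
    simpa [Matrix.star_eq_conjTranspose, Matrix.conjTranspose_eq_transpose_of_trivial,
      Function.comp] using this
  have h2 : A.charpoly = ∏ i, ((X : ℝ[X]) - C (hherm.eigenvalues i)) := by
    conv_lhs => rw [hspec]
    rw [aux_charpoly_conj _ _ hUo, aux_charpoly_diagonal]
  have := congrArg Polynomial.roots (h2.symm.trans h1)
  rwa [aux_roots_prod, aux_roots_prod] at this

lemma nd_zero {p q : ℕ} : nd p q (fun _ => 0) = 0 := by
  ext i j; simp [nd]

lemma nd_one {p : ℕ} : nd p p (fun _ => 1) = 1 := by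
  rw [nd_diagonal]; simp

/-- The core construction: orthogonal diagonalization of the middle block matrix. -/
lemma aux_main (p q : ℕ) (L1 L2 : ℕ → ℝ) (hL1 : ∀ k, 0 ≤ L1 k) (hL2 : ∀ k, 0 ≤ L2 k)
    (hL2q : ∀ k, q ≤ k → L2 k = 0) :
    ∃ W : Matrix (Sum (Fin p) (Fin q)) (Sum (Fin p) (Fin q)) ℝ,
      W * Wᵀ = 1 ∧
      W * fromBlocks (nd p p (fun m => L1 m + L2 m)) 0 0
            (nd q q (fun m => if m < p then 0 else L2 m)) * Wᵀ
        = fromBlocks (nd p p L1) (nd p q (fun k => Real.sqrt (L1 k) * Real.sqrt (L2 k)))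
            (nd q p (fun k => Real.sqrt (L1 k) * Real.sqrt (L2 k))) (nd q q L2) := by
  set a : ℕ → ℝ := fun k => Real.sqrt (L1 k) with ha
  set b : ℕ → ℝ := fun k => Real.sqrt (L2 k) with hb
  set nn : ℕ → ℝ := fun k => Real.sqrt (L1 k + L2 k) with hnn
  set c : ℕ → ℝ := fun k => if L1 k + L2 k = 0 then 1 else a k / nn k with hc
  set s : ℕ → ℝ := fun k => if L1 k + L2 k = 0 then 0 else b k / nn k with hs
  set e2 : ℕ → ℝ := fun k => if k < p then -(c k) else 1 with he2
  set dA : ℕ → ℝ := fun k => L1 k + L2 k with hdA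
  set dB : ℕ → ℝ := fun k => if k < p then 0 else L2 k with hdB
  -- scalar facts
  have ha2 : ∀ k, a k * a k = L1 k := fun k => Real.mul_self_sqrt (hL1 k)
  have hb2 : ∀ k, b k * b k = L2 k := fun k => Real.mul_self_sqrt (hL2 k)
  have hn2 : ∀ k, nn k * nn k = L1 k + L2 k :=
    fun k => Real.mul_self_sqrt (add_nonneg (hL1 k) (hL2 k))
  have hnne : ∀ k, L1 k + L2 k ≠ 0 → nn k ≠ 0 := by
    intro k h
    rw [hnn]
    simp only [ne_eq, Real.sqrt_eq_zero (add_nonneg (hL1 k) (hL2 k))]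
    exact h
  have hcn : ∀ k, c k * nn k = a k := by
    intro k
    by_cases h : L1 k + L2 k = 0
    · have h1 : L1 k = 0 := by have := hL1 k; have := hL2 k; linarith
      have h2 : L2 k = 0 := by linarith
      simp only [hc, ha, hnn, if_pos h, h, h1, h2]
      simp
    · simp only [hc, if_neg h]
      exact div_mul_cancel₀ _ (hnne k h)
  have hsn : ∀ k, s k * nn k = b k := by
    intro k
    by_cases h : L1 k + L2 k = 0
    · have h1 : L2 k = 0 := by have := hL1 k; have := hL2 k; linarith
      have h0 : L1 k = 0 := by have := hL1 k; have := hL2 k; linarith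
      simp only [hs, hb, hnn, if_pos h, h, h1, h0]
      simp
    · simp only [hs, if_neg h]
      exact div_mul_cancel₀ _ (hnne k h)
  have hcs : ∀ k, c k * c k + s k * s k = 1 := by
    intro k
    by_cases h : L1 k + L2 k = 0
    · simp only [hc, hs, if_pos h]; norm_num
    · simp only [hc, hs, if_neg h]
      rw [div_mul_div_comm, div_mul_div_comm, ← add_div, ha2, hb2, hn2, div_self h]
  have hs0 : ∀ k, q ≤ k → s k = 0 := by
    intro k hk
    have h2 : L2 k = 0 := hL2q k hk
    by_cases h : L1 k + L2 k = 0
    · simp only [hs, if_pos h]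
    · simp only [hs, if_neg h, hb, h2]
      simp
  -- the orthogonal matrix
  refine ⟨fromBlocks (nd p p c) (nd p q s) (nd q p s) (nd q q e2), ?_, ?_⟩
  · -- orthogonality
    have hTL : nd p p c * nd p p c + nd p q s * nd q p s = 1 := by
      rw [nd_mul_nd, nd_mul_nd, nd_add, ← nd_one]
      apply nd_congr
      intro m hm _
      simp only [if_pos hm]
      by_cases hq : m < q
      · rw [if_pos hq]; exact hcs m
      · rw [if_neg hq]
        have h1 := hcs m
        rw [hs0 m (not_lt.mp hq)] at h1
        linarith
    have hTR : nd p p c * nd p q s + nd p q s * nd q q e2 = 0 := by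
      rw [nd_mul_nd, nd_mul_nd, nd_add, ← nd_zero]
      apply nd_congr
      intro m hm hq
      simp only [if_pos hm, if_pos hq, he2]
      ring
    have hBL : nd q p s * nd p p c + nd q q e2 * nd q p s = 0 := by
      rw [nd_mul_nd, nd_mul_nd, nd_add, ← nd_zero]
      apply nd_congr
      intro m hq hm
      simp only [if_pos hm, if_pos hq, he2]
      ring
    have hBR : nd q p s * nd p q s + nd q q e2 * nd q q e2 = 1 := by
      rw [nd_mul_nd, nd_mul_nd, nd_add, ← nd_one]
      apply nd_congr
      intro m hq _
      simp only [if_pos hq]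
      by_cases hp : m < p
      · rw [if_pos hp]
        simp only [he2, if_pos hp]
        linear_combination hcs m
      · rw [if_neg hp]
        simp only [he2, if_neg hp]
        norm_num
    rw [fromBlocks_transpose, nd_transpose, nd_transpose, nd_transpose, nd_transpose,
      fromBlocks_multiply, hTL, hTR, hBL, hBR, fromBlocks_one]
  · -- diagonalization
    have hdBm : ∀ m, m < p → dB m = 0 := by
      intro m hm; simp only [hdB, if_pos hm]
    have hTL : (nd p p c * nd p p dA) * nd p p c + (nd p q s * nd q q dB) * nd q p s
        = nd p p L1 := by
      rw [nd_mul_nd, nd_mul_nd, nd_mul_nd, nd_mul_nd, nd_add]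
      apply nd_congr
      intro m hm _
      simp only [if_pos hm]
      have h2 : (if m < q then (if m < q then s m * dB m else 0) * s m else 0) = 0 := by
        by_cases hq : m < q
        · rw [if_pos hq, if_pos hq]
          by_cases hp2 : m < p
          · rw [hdBm m hp2]; ring
          · exact absurd hm hp2
        · rw [if_neg hq]
      rw [h2, add_zero]
      calc c m * dA m * c m = (c m * nn m) * (c m * nn m) := by
            rw [show dA m = nn m * nn m from (hn2 m).symm]; ring
        _ = L1 m := by rw [hcn m, ha2 m]
    have hTR : (nd p p c * nd p p dA) * nd p q s + (nd p q s * nd q q dB) * nd q q e2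
        = nd p q (fun k => Real.sqrt (L1 k) * Real.sqrt (L2 k)) := by
      rw [nd_mul_nd, nd_mul_nd, nd_mul_nd, nd_mul_nd, nd_add]
      apply nd_congr
      intro m hm hq
      simp only [if_pos hm, if_pos hq, hdBm m hm]
      rw [mul_zero, zero_mul, add_zero]
      calc c m * dA m * s m = (c m * nn m) * (s m * nn m) := by
            rw [show dA m = nn m * nn m from (hn2 m).symm]; ring
        _ = Real.sqrt (L1 m) * Real.sqrt (L2 m) := by rw [hcn m, hsn m]
    have hBL : (nd q p s * nd p p dA) * nd p p c + (nd q q e2 * nd q q dB) * nd q p s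
        = nd q p (fun k => Real.sqrt (L1 k) * Real.sqrt (L2 k)) := by
      rw [nd_mul_nd, nd_mul_nd, nd_mul_nd, nd_mul_nd, nd_add]
      apply nd_congr
      intro m hq hm
      simp only [if_pos hm, if_pos hq, hdBm m hm]
      rw [mul_zero, zero_mul, add_zero]
      calc s m * dA m * c m = (c m * nn m) * (s m * nn m) := by
            rw [show dA m = nn m * nn m from (hn2 m).symm]; ring
        _ = Real.sqrt (L1 m) * Real.sqrt (L2 m) := by rw [hcn m, hsn m]
    have hBR : (nd q p s * nd p p dA) * nd p q s + (nd q q e2 * nd q q dB) * nd q q e2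
        = nd q q L2 := by
      rw [nd_mul_nd, nd_mul_nd, nd_mul_nd, nd_mul_nd, nd_add]
      apply nd_congr
      intro m hq _
      simp only [if_pos hq]
      by_cases hp : m < p
      · rw [if_pos hp, if_pos hp, hdBm m hp]
        have : s m * dA m * s m = L2 m := by
          calc s m * dA m * s m = (s m * nn m) * (s m * nn m) := by
                rw [show dA m = nn m * nn m from (hn2 m).symm]; ring
            _ = L2 m := by rw [hsn m, hb2 m]
        rw [this]; ring
      · rw [if_neg hp]
        simp only [he2, hdB, if_neg hp]
        ring
    rw [fromBlocks_transpose, nd_transpose, nd_transpose, nd_transpose, nd_transpose,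
      fromBlocks_multiply, fromBlocks_multiply]
    simp only [Matrix.mul_zero, Matrix.zero_mul, add_zero, zero_add]
    rw [hTL, hTR, hBL, hBR]

/-- The `p × q` upper-left block of the identity matrix. -/
def PiBlock (p q : ℕ) : Matrix (Fin p) (Fin q) ℝ :=
  Matrix.of fun i j => if (i : ℕ) = (j : ℕ) then 1 else 0

/-- The maximal off-diagonal block `Ψ_m = U₁ Λ₁^{1/2} Π Λ₂^{1/2} U₂ᵀ`. -/
noncomputable def PsiM {p q : ℕ} (U₁ : Matrix (Fin p) (Fin p) ℝ)
    (l1 : Fin p → ℝ) (U₂ : Matrix (Fin q) (Fin q) ℝ) (l2 : Fin q → ℝ) :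
    Matrix (Fin p) (Fin q) ℝ :=
  U₁ * Matrix.diagonal (fun i => Real.sqrt (l1 i)) * PiBlock p q *
    Matrix.diagonal (fun j => Real.sqrt (l2 j)) * U₂ᵀ

/-- A partitioned `(p+q) × (p+q)` matrix with given blocks, indexed by `Fin (p+q)`. -/
def blockMat {p q : ℕ} (S₁ : Matrix (Fin p) (Fin p) ℝ) (Ψ : Matrix (Fin p) (Fin q) ℝ)
    (S₂ : Matrix (Fin q) (Fin q) ℝ) : Matrix (Fin (p + q)) (Fin (p + q)) ℝ :=
  (Matrix.fromBlocks S₁ Ψ Ψᵀ S₂).submatrix finSumFinEquiv.symm finSumFinEquiv.symm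

/-- Extension of a vector on `Fin p` to `Fin (p+q)` by zero. -/
def extVec {p : ℕ} (q : ℕ) (l : Fin p → ℝ) : Fin (p + q) → ℝ :=
  fun j => if h : (j : ℕ) < p then l ⟨j, h⟩ else 0

/-- the eigenvalues of `Σ_m` are `λ_{j,1} + λ_{j,2}`, `j = 1, …, p+q`
(in particular `Σ_m` is positive semidefinite). -/
theorem eigenvalues_blockMat_PsiM {p q : ℕ}
    (S₁ : Matrix (Fin p) (Fin p) ℝ) (S₂ : Matrix (Fin q) (Fin q) ℝ)
    (hS₁ : S₁.PosSemidef) (hS₂ : S₂.PosSemidef)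
    (U₁ : Matrix (Fin p) (Fin p) ℝ) (l1 : Fin p → ℝ)
    (U₂ : Matrix (Fin q) (Fin q) ℝ) (l2 : Fin q → ℝ)
    (hU₁ : U₁ * U₁ᵀ = 1) (hU₂ : U₂ * U₂ᵀ = 1)
    (hl1 : Antitone l1) (hl2 : Antitone l2)
    (hdec1 : S₁ = U₁ * Matrix.diagonal l1 * U₁ᵀ)
    (hdec2 : S₂ = U₂ * Matrix.diagonal l2 * U₂ᵀ) :
    (blockMat S₁ (PsiM U₁ l1 U₂ l2) S₂).PosSemidef ∧
    ∀ hSm : (blockMat S₁ (PsiM U₁ l1 U₂ l2) S₂).IsHermitian,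
      ∃ e : Equiv.Perm (Fin (p + q)),
        ∀ j, hSm.eigenvalues (e j)
          = extVec (p := p) q l1 j + extVec (p := q) p l2 (Fin.cast (Nat.add_comm p q) j) := by
  -- orthogonality both ways
  have hU₁' : U₁ᵀ * U₁ = 1 := mul_eq_one_comm.mp hU₁
  have hU₂' : U₂ᵀ * U₂ = 1 := mul_eq_one_comm.mp hU₂
  -- eigenvalues are nonnegative
  have hl1nn : ∀ i, 0 ≤ l1 i := by
    have h1 : U₁ᵀ * S₁ * U₁ = Matrix.diagonal l1 := by
      rw [hdec1]
      simp only [← mul_assoc]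
      rw [hU₁', one_mul, mul_assoc, hU₁', mul_one]
    have h2 : (Matrix.diagonal l1).PosSemidef := by
      rw [← h1]
      have := hS₁.conjTranspose_mul_mul_same U₁
      rwa [Matrix.conjTranspose_eq_transpose_of_trivial] at this
    exact fun i => Matrix.posSemidef_diagonal_iff.mp h2 i
  have hl2nn : ∀ i, 0 ≤ l2 i := by
    have h1 : U₂ᵀ * S₂ * U₂ = Matrix.diagonal l2 := by
      rw [hdec2]
      simp only [← mul_assoc]
      rw [hU₂', one_mul, mul_assoc, hU₂', mul_one]
    have h2 : (Matrix.diagonal l2).PosSemidef := by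
      rw [← h1]
      have := hS₂.conjTranspose_mul_mul_same U₂
      rwa [Matrix.conjTranspose_eq_transpose_of_trivial] at this
    exact fun i => Matrix.posSemidef_diagonal_iff.mp h2 i
  -- the extended eigenvalue sequences
  set L1 : ℕ → ℝ := fun k => if h : k < p then l1 ⟨k, h⟩ else 0 with hL1def
  set L2 : ℕ → ℝ := fun k => if h : k < q then l2 ⟨k, h⟩ else 0 with hL2def
  have hL1 : ∀ k, 0 ≤ L1 k := by
    intro k; simp only [hL1def]; split
    · exact hl1nn _
    · exact le_refl 0
  have hL2 : ∀ k, 0 ≤ L2 k := by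
    intro k; simp only [hL2def]; split
    · exact hl2nn _
    · exact le_refl 0
  have hL2q : ∀ k, q ≤ k → L2 k = 0 := fun k hk => dif_neg (by omega)
  obtain ⟨W2, hW2o, hW2d⟩ := aux_main p q L1 L2 hL1 hL2 hL2q
  -- the outer orthogonal matrix
  set V : Matrix (Sum (Fin p) (Fin q)) (Sum (Fin p) (Fin q)) ℝ := fromBlocks U₁ 0 0 U₂ with hVdef
  have hV : V * Vᵀ = 1 := by
    rw [hVdef, fromBlocks_transpose, fromBlocks_multiply]
    simp [hU₁, hU₂, fromBlocks_one]
  set K : Matrix (Sum (Fin p) (Fin q)) (Sum (Fin p) (Fin q)) ℝ := V * W2 with hKdef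
  have hK : K * Kᵀ = 1 := by
    rw [hKdef, transpose_mul, mul_assoc, ← mul_assoc W2, hW2o, one_mul, hV]
  set dA : ℕ → ℝ := fun m => L1 m + L2 m with hdAdef
  set dB : ℕ → ℝ := fun m => if m < p then 0 else L2 m with hdBdef
  set DD : Matrix (Sum (Fin p) (Fin q)) (Sum (Fin p) (Fin q)) ℝ :=
    fromBlocks (nd p p dA) 0 0 (nd q q dB) with hDDdef
  -- conversions between nd matrices and the data
  have hfun1 : (fun i : Fin p => L1 (i : ℕ)) = l1 := by
    funext i
    simp only [hL1def]
    exact dif_pos i.isLt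
  have hfun2 : (fun i : Fin q => L2 (i : ℕ)) = l2 := by
    funext i
    simp only [hL2def]
    exact dif_pos i.isLt
  have hndL1 : nd p p L1 = Matrix.diagonal l1 := by
    rw [nd_diagonal, hfun1]
  have hndL2 : nd q q L2 = Matrix.diagonal l2 := by
    rw [nd_diagonal, hfun2]
  have hndPsi : Matrix.diagonal (fun i => Real.sqrt (l1 i)) * PiBlock p q *
      Matrix.diagonal (fun j => Real.sqrt (l2 j))
      = nd p q (fun k => Real.sqrt (L1 k) * Real.sqrt (L2 k)) := by
    have e1 : Matrix.diagonal (fun i : Fin p => Real.sqrt (l1 i))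
        = nd p p (fun k => Real.sqrt (L1 k)) := by
      rw [nd_diagonal, show (fun i : Fin p => Real.sqrt (L1 (i : ℕ)))
        = fun i : Fin p => Real.sqrt (l1 i) from by rw [← hfun1]]
    have e2 : Matrix.diagonal (fun j : Fin q => Real.sqrt (l2 j))
        = nd q q (fun k => Real.sqrt (L2 k)) := by
      rw [nd_diagonal, show (fun j : Fin q => Real.sqrt (L2 (j : ℕ)))
        = fun j : Fin q => Real.sqrt (l2 j) from by rw [← hfun2]]
    have e3 : PiBlock p q = nd p q (fun _ => 1) := rfl
    rw [e1, e2, e3, nd_mul_nd, nd_mul_nd]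
    apply nd_congr
    intro m hm hq
    simp only [if_pos hm, if_pos hq, mul_one]
  -- the block matrix as an orthogonal conjugate of a diagonal matrix
  have hPsiEq : PsiM U₁ l1 U₂ l2
      = U₁ * nd p q (fun k => Real.sqrt (L1 k) * Real.sqrt (L2 k)) * U₂ᵀ := by
    rw [← hndPsi]
    unfold PsiM
    simp only [Matrix.mul_assoc]
  have hSig : fromBlocks S₁ (PsiM U₁ l1 U₂ l2) (PsiM U₁ l1 U₂ l2)ᵀ S₂ = K * DD * Kᵀ := by
    have hKDK : K * DD * Kᵀ = V * (W2 * DD * W2ᵀ) * Vᵀ := by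
      rw [hKdef, transpose_mul]
      simp only [mul_assoc]
    rw [hKDK, hW2d]
    rw [hVdef, fromBlocks_transpose, fromBlocks_multiply, fromBlocks_multiply]
    simp only [Matrix.mul_zero, Matrix.zero_mul, add_zero, zero_add, Matrix.transpose_zero]
    rw [Matrix.fromBlocks_inj]
    refine ⟨?_, ?_, ?_, ?_⟩
    · rw [hndL1]
      exact hdec1
    · rw [hPsiEq]
    · rw [hPsiEq, transpose_mul, transpose_mul, transpose_transpose, nd_transpose]
      rw [Matrix.mul_assoc]
    · rw [hndL2]
      exact hdec2
  -- move to Fin (p+q)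
  set esym := (finSumFinEquiv (m := p) (n := q)).symm with hesym
  set dd : Fin (p + q) → ℝ :=
    (Sum.elim (fun i : Fin p => dA (i : ℕ)) (fun j : Fin q => dB (j : ℕ))) ∘ ⇑esym with hdd
  have hDDdiag : DD = Matrix.diagonal
      (Sum.elim (fun i : Fin p => dA (i : ℕ)) (fun j : Fin q => dB (j : ℕ))) := by
    rw [hDDdef]
    ext x y
    rcases x with i | i <;> rcases y with j | j
    · by_cases h : i = j
      · subst h; simp [nd]
      · rw [Matrix.diagonal_apply_ne _ (by simp [h])]
        show nd p p dA i j = 0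
        rw [nd_apply, if_neg (by simpa [Fin.ext_iff] using h)]
    · simp [Matrix.diagonal_apply_ne]
    · simp [Matrix.diagonal_apply_ne]
    · by_cases h : i = j
      · subst h; simp [nd]
      · rw [Matrix.diagonal_apply_ne _ (by simp [h])]
        show nd q q dB i j = 0
        rw [nd_apply, if_neg (by simpa [Fin.ext_iff] using h)]
  set Wsq : Matrix (Fin (p + q)) (Fin (p + q)) ℝ := K.submatrix ⇑esym ⇑esym with hWsq
  have hsub : blockMat S₁ (PsiM U₁ l1 U₂ l2) S₂ = Wsq * Matrix.diagonal dd * Wsqᵀ := by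
    rw [blockMat, hSig]
    rw [Matrix.submatrix_mul (K * DD) Kᵀ ⇑esym ⇑esym ⇑esym esym.bijective,
      Matrix.submatrix_mul K DD ⇑esym ⇑esym ⇑esym esym.bijective]
    rw [hDDdiag, Matrix.submatrix_diagonal_equiv, Matrix.transpose_submatrix]
  have hWsqo : Wsq * Wsqᵀ = 1 := by
    rw [hWsq, Matrix.transpose_submatrix, ← Matrix.submatrix_mul K Kᵀ ⇑esym ⇑esym ⇑esym
      esym.bijective, hK, Matrix.submatrix_one_equiv]
  have hddnn : ∀ j, 0 ≤ dd j := by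
    intro j
    rw [hdd, Function.comp_apply]
    rcases esym j with i | i
    · exact add_nonneg (hL1 _) (hL2 _)
    · show 0 ≤ if (i : ℕ) < p then 0 else L2 (i : ℕ)
      split
      · exact le_refl 0
      · exact hL2 _
  constructor
  · rw [hsub]
    have h1 : (Matrix.diagonal dd).PosSemidef := Matrix.posSemidef_diagonal_iff.mpr hddnn
    have := h1.mul_mul_conjTranspose_same Wsq
    rwa [Matrix.conjTranspose_eq_transpose_of_trivial] at this
  · intro hSm
    have hms := aux_multiset_eigenvalues _ Wsq dd hWsqo hsub hSm
    -- the target eigenvalue sequence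
    set dt : Fin (p + q) → ℝ := fun j => extVec (p := p) q l1 j
      + extVec (p := q) p l2 (Fin.cast (Nat.add_comm p q) j) with hdt
    have hdteq : ∀ j : Fin (p + q), dt j = L1 (j : ℕ) + L2 (j : ℕ) := by
      intro j
      rw [hdt]
      congr 1
    -- multiset equality between dd and dt
    have hper : Multiset.map dt Finset.univ.val = Multiset.map dd Finset.univ.val := by
      rcases Nat.eq_zero_or_pos q with hq0 | hq0
      · refine Multiset.map_congr rfl (fun j _ => ?_)
        have hj : (j : ℕ) < p := by have := j.isLt; omega
        have h1 : esym j = Sum.inl ⟨(j : ℕ), hj⟩ := by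
          rw [hesym, Equiv.symm_apply_eq]
          apply Fin.ext
          simp
        rw [hdteq j, hdd, Function.comp_apply, h1]
        rfl
      · haveI : NeZero q := ⟨hq0.ne'⟩
        set ρ : Equiv.Perm (Fin q) := Equiv.addRight ((p : ℕ) : Fin q) with hρ
        set τ : Equiv.Perm (Fin (p + q)) :=
          (esym.trans (Equiv.sumCongr (Equiv.refl (Fin p)) ρ)).trans finSumFinEquiv with hτ
        have hpt : ∀ j, dt j = dd (τ j) := by
          intro j
          rcases h : esym j with i | t
          · have hτj : τ j = j := by
              rw [hτ]
              simp only [Equiv.trans_apply, h, Equiv.sumCongr_apply, Sum.map_inl,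
                Equiv.coe_refl, id_eq]
              rw [hesym] at h
              rw [← h, Equiv.apply_symm_apply]
            rw [hτj, hdd, Function.comp_apply, h, hdteq j]
            have hji : (j : ℕ) = (i : ℕ) := by
              rw [hesym] at h
              have := congrArg (⇑finSumFinEquiv) h
              rw [Equiv.apply_symm_apply] at this
              rw [this]
              simp
            rw [hji]
            rfl
          · have hjt : (j : ℕ) = p + (t : ℕ) := by
              rw [hesym] at h
              have := congrArg (⇑finSumFinEquiv) h
              rw [Equiv.apply_symm_apply] at this
              rw [this]
              simp
            have hτj : τ j = finSumFinEquiv (Sum.inr (ρ t)) := by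
              rw [hτ]
              simp only [Equiv.trans_apply, h, Equiv.sumCongr_apply, Sum.map_inr]
            have hddτ : dd (τ j) = dB ((ρ t : Fin q) : ℕ) := by
              rw [hτj, hdd, Function.comp_apply, hesym, Equiv.symm_apply_apply]
              rfl
            have hv : ((ρ t : Fin q) : ℕ) = ((t : ℕ) + p) % q := by
              rw [hρ]
              show ((t + ((p : ℕ) : Fin q) : Fin q) : ℕ) = _
              rw [Fin.add_def]
              simp only [Fin.val_natCast]
              rw [Nat.add_mod_mod]
            have hdBlow : ∀ m, m < p → dB m = 0 := by
              intro m hm; simp only [hdBdef]; rw [if_pos hm]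
            have hdBhigh : ∀ m, p ≤ m → dB m = L2 m := by
              intro m hm; simp only [hdBdef]; rw [if_neg (by omega)]
            rw [hddτ, hdteq j, hv]
            have hL1j : L1 (j : ℕ) = 0 := dif_neg (by omega)
            rw [hL1j, zero_add]
            by_cases hlt : (t : ℕ) + p < q
            · rw [Nat.mod_eq_of_lt hlt, hdBhigh _ (by omega),
                show ((t : ℕ) + p) = (j : ℕ) from by omega]
            · have h5 : ((t : ℕ) + p) % q = ((t : ℕ) + p - q) % q :=
                Nat.mod_eq_sub_mod (le_of_not_gt hlt)
              have h6 : ((t : ℕ) + p - q) % q ≤ (t : ℕ) + p - q := Nat.mod_le _ _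
              have ht : (t : ℕ) < q := t.isLt
              have hvlt : ((t : ℕ) + p) % q < p := by rw [h5]; omega
              rw [hdBlow _ hvlt]
              exact dif_neg (by omega)
        have huniv : Multiset.map (⇑τ) Finset.univ.val = Finset.univ.val := by
          have := congrArg Finset.val (Finset.map_univ_equiv τ)
          rwa [Finset.map_val] at this
        calc Multiset.map dt Finset.univ.val
            = Multiset.map (dd ∘ ⇑τ) Finset.univ.val :=
              Multiset.map_congr rfl (fun j _ => hpt j)
          _ = Multiset.map dd (Multiset.map (⇑τ) Finset.univ.val) :=
              (Multiset.map_map dd (⇑τ) Finset.univ.val).symm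
          _ = Multiset.map dd Finset.univ.val := by rw [huniv]
    obtain ⟨σ, hσ⟩ := aux_exists_perm hSm.eigenvalues dt (by rw [hms, ← hper])
    exact ⟨σ, fun j => congrFun hσ j⟩
end

section
/- Let Σ₁ ∈ 𝕊^p_≥ and Σ₂ ∈ 𝕊^q_≥ be positive semidefinite matrices with decreasing eigenvalues (λ_{j,1}) and (λ_{j,2}). For any positive semidefinite (p+q)×(p+q) matrix Σ with upper-left diagonal block Σ₁ and lower-right diagonal block Σ₂, the vector of eigenvalues of Σ (in decreasing order) is majorized by the vector (λ_{j,1} + λ_{j,2})_{j=1}^{p+q} (with λ_{j,1} = 0 for j > p and λ_{j,2} = 0 for j > q). -/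
open Matrix

/-- `x` is majorized by `y`: after decreasing rearrangement, the partial sums of `x`
are dominated by those of `y`, and the total sums agree. -/
def Majorized {d : ℕ} (x y : Fin d → ℝ) : Prop :=
  ∃ σ τ : Equiv.Perm (Fin d), Antitone (x ∘ σ) ∧ Antitone (y ∘ τ) ∧
    (∀ k : Fin d, ∑ i ∈ Finset.Iic k, x (σ i) ≤ ∑ i ∈ Finset.Iic k, y (τ i)) ∧
    ∑ i, x i = ∑ i, y i

section Helpers
open Finset

lemma dotProduct_sum' {n : ℕ} {ι : Type} (s : Finset ι) (f : ι → Fin n → ℝ) (z : Fin n → ℝ) :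
    z ⬝ᵥ (∑ i ∈ s, f i) = ∑ i ∈ s, z ⬝ᵥ f i := by
  simp only [dotProduct, Finset.sum_apply, Finset.mul_sum]
  exact Finset.sum_comm

lemma sum_dotProduct' {n : ℕ} {ι : Type} (s : Finset ι) (f : ι → Fin n → ℝ) (z : Fin n → ℝ) :
    (∑ i ∈ s, f i) ⬝ᵥ z = ∑ i ∈ s, f i ⬝ᵥ z := by
  simp only [dotProduct, Finset.sum_apply, Finset.sum_mul]
  exact Finset.sum_comm

lemma myBessel {n : ℕ} {ι : Type} [DecidableEq ι] (S : Finset ι) (w : ι → Fin n → ℝ)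
    (hw : ∀ i ∈ S, ∀ j ∈ S, w i ⬝ᵥ w j = if i = j then 1 else 0) (z : Fin n → ℝ) :
    ∑ i ∈ S, (z ⬝ᵥ w i) ^ 2 ≤ z ⬝ᵥ z := by
  have h0 : (0:ℝ) ≤ (z - ∑ i ∈ S, (z ⬝ᵥ w i) • w i) ⬝ᵥ (z - ∑ i ∈ S, (z ⬝ᵥ w i) • w i) :=
    Finset.sum_nonneg fun i _ => mul_self_nonneg _
  have hexp : (z - ∑ i ∈ S, (z ⬝ᵥ w i) • w i) ⬝ᵥ (z - ∑ i ∈ S, (z ⬝ᵥ w i) • w i)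
      = z ⬝ᵥ z - ∑ i ∈ S, (z ⬝ᵥ w i) ^ 2 := by
    rw [sub_dotProduct, dotProduct_sub, dotProduct_sub]
    rw [sum_dotProduct', dotProduct_sum']
    simp only [smul_dotProduct, dotProduct_smul, smul_eq_mul]
    have h1 : ∑ i ∈ S, (z ⬝ᵥ w i) * (w i ⬝ᵥ z) = ∑ i ∈ S, (z ⬝ᵥ w i) ^ 2 := by
      refine Finset.sum_congr rfl fun i _ => ?_
      rw [dotProduct_comm, sq]
    have h2 : ∑ i ∈ S, (z ⬝ᵥ w i) * (z ⬝ᵥ w i) = ∑ i ∈ S, (z ⬝ᵥ w i) ^ 2 := by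
      simp [sq]
    have h3 : (∑ i ∈ S, (z ⬝ᵥ w i) • w i) ⬝ᵥ (∑ j ∈ S, (z ⬝ᵥ w j) • w j)
        = ∑ i ∈ S, (z ⬝ᵥ w i) ^ 2 := by
      rw [sum_dotProduct']
      simp only [smul_dotProduct, smul_eq_mul]
      refine Finset.sum_congr rfl fun i hi => ?_
      rw [dotProduct_sum']
      simp only [dotProduct_smul, smul_eq_mul]
      rw [Finset.sum_eq_single i]
      · rw [hw i hi i hi]; simp [sq]
      · intro j hj hji; rw [hw i hi j hj, if_neg (Ne.symm hji), mul_zero]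
      · intro h; exact absurd hi h
    rw [h1, h3]
    ring
  linarith [h0, hexp]

lemma scalar_bound {r m : ℕ} (l c : Fin r → ℝ) (hl : Antitone l) (hl0 : ∀ j, 0 ≤ l j)
    (hc0 : ∀ j, 0 ≤ c j) (hc1 : ∀ j, c j ≤ 1) (hcs : ∑ j, c j ≤ (m : ℝ)) :
    ∑ j, l j * c j ≤ ∑ j ∈ Finset.univ.filter (fun j : Fin r => (j : ℕ) < m), l j := by
  by_cases h : r ≤ m
  · have hfil : Finset.univ.filter (fun j : Fin r => (j : ℕ) < m) = Finset.univ := by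
      ext j; simp [lt_of_lt_of_le j.isLt h]
    rw [hfil]
    exact Finset.sum_le_sum fun j _ => by nlinarith [hl0 j, hc1 j, hc0 j]
  · push_neg at h
    set jm : Fin r := ⟨m, h⟩ with hjm
    have hP : Finset.univ.filter (fun j : Fin r => (j : ℕ) < m) = Finset.Iio jm := by
      ext j; simp only [Finset.mem_filter, Finset.mem_univ, true_and, Finset.mem_Iio]; exact Iff.rfl
    rw [hP]
    have hcard : (Finset.Iio jm).card = m := by
      exact (Fin.card_Iio (b := jm)).trans rfl
    have hsplit : ∑ j, l j * c j
        = ∑ j ∈ Finset.Iio jm, l j * c j + ∑ j ∈ (Finset.Iio jm)ᶜ, l j * c j :=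
      (Finset.sum_add_sum_compl _ _).symm
    have h1 : ∑ j ∈ Finset.Iio jm, l j * c j - ∑ j ∈ Finset.Iio jm, l j
        ≤ ∑ j ∈ Finset.Iio jm, l jm * (c j - 1) := by
      rw [← Finset.sum_sub_distrib]
      refine Finset.sum_le_sum fun j hj => ?_
      have := hl (le_of_lt (Finset.mem_Iio.mp hj))
      nlinarith [hc1 j]
    have h2 : ∑ j ∈ (Finset.Iio jm)ᶜ, l j * c j ≤ ∑ j ∈ (Finset.Iio jm)ᶜ, l jm * c j := by
      refine Finset.sum_le_sum fun j hj => ?_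
      have hj' : jm ≤ j := le_of_not_gt (by simpa [Finset.mem_compl, Finset.mem_Iio] using hj)
      have := hl hj'
      nlinarith [hc0 j]
    have e1 : ∑ j ∈ Finset.Iio jm, l jm * (c j - 1)
        = l jm * (∑ j ∈ Finset.Iio jm, c j) - m * l jm := by
      rw [← Finset.mul_sum, Finset.sum_sub_distrib, Finset.sum_const, hcard]
      push_cast; ring
    have e2 : ∑ j ∈ (Finset.Iio jm)ᶜ, l jm * c j
        = l jm * ∑ j ∈ (Finset.Iio jm)ᶜ, c j := (Finset.mul_sum _ _ _).symm
    have hc : ∑ j ∈ Finset.Iio jm, c j + ∑ j ∈ (Finset.Iio jm)ᶜ, c j = ∑ j, c j :=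
      Finset.sum_add_sum_compl _ _
    have e3 : l jm * (∑ j ∈ Finset.Iio jm, c j) + l jm * ∑ j ∈ (Finset.Iio jm)ᶜ, c j
        = l jm * ∑ j, c j := by rw [← mul_add, hc]
    nlinarith [mul_nonneg (hl0 jm) (by linarith : (0:ℝ) ≤ (m:ℝ) - ∑ j, c j)]
lemma family_bound {n r : ℕ} {ι : Type} [DecidableEq ι] (S : Finset ι) (m : ℕ)
    (hcard : S.card ≤ m)
    (w : ι → Fin n → ℝ) (hw : ∀ i ∈ S, ∀ j ∈ S, w i ⬝ᵥ w j = if i = j then 1 else 0)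
    (g : Fin r → Fin n → ℝ) (d : Fin r → ℝ) (hd : Antitone d)
    (hg : ∀ j k, g j ⬝ᵥ g k = if j = k then d j else 0) :
    ∑ i ∈ S, ∑ j, (g j ⬝ᵥ w i) ^ 2
      ≤ ∑ j ∈ Finset.univ.filter (fun j : Fin r => (j : ℕ) < m), d j := by
  classical
  have hgd : ∀ j, g j ⬝ᵥ g j = d j := fun j => by simpa using hg j j
  have hd0 : ∀ j, 0 ≤ d j := fun j => (hgd j) ▸ Finset.sum_nonneg fun i _ => mul_self_nonneg _
  set c : Fin r → ℝ := fun j => if d j = 0 then 0 else (∑ i ∈ S, (g j ⬝ᵥ w i) ^ 2) / d j with hc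
  -- the rescaled family
  set gh : Fin r → Fin n → ℝ := fun j => (Real.sqrt (d j))⁻¹ • g j with hgh
  have hghd : ∀ j k, gh j ⬝ᵥ gh k = if j = k ∧ d j ≠ 0 then 1 else 0 := by
    intro j k
    simp only [hgh, smul_dotProduct, dotProduct_smul, smul_eq_mul, hg]
    by_cases hjk : j = k
    · subst hjk
      by_cases hdj : d j = 0
      · simp [hdj]
      · have hdj' : 0 < d j := lt_of_le_of_ne (hd0 j) (Ne.symm hdj)
        rw [if_pos rfl, if_pos ⟨rfl, hdj⟩]
        rw [← mul_assoc, ← mul_inv]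
        rw [← Real.sqrt_mul_self (le_of_lt hdj')]
        field_simp
        rw [Real.sq_sqrt (Real.sqrt_nonneg _)]
    · simp [hjk]
  have hkey : ∀ j, ∑ i ∈ S, (g j ⬝ᵥ w i) ^ 2 = d j * c j := by
    intro j
    by_cases hdj : d j = 0
    · have hgj : g j = 0 := dotProduct_self_eq_zero.mp (by rw [hgd j, hdj])
      simp [hc, hdj, hgj]
    · simp only [hc, if_neg hdj]
      field_simp
  have hsq : ∀ j i, (gh j ⬝ᵥ w i) ^ 2 = (g j ⬝ᵥ w i) ^ 2 / d j ∨ d j = 0 := by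
    intro j i
    by_cases hdj : d j = 0
    · exact Or.inr hdj
    · left
      simp only [hgh, smul_dotProduct, smul_eq_mul]
      rw [mul_pow, ← Real.sqrt_inv, Real.sq_sqrt (inv_nonneg.mpr (hd0 j))]
      rw [div_eq_inv_mul]
  have hcgh : ∀ j, d j ≠ 0 → c j = ∑ i ∈ S, (gh j ⬝ᵥ w i) ^ 2 := by
    intro j hdj
    simp only [hc, if_neg hdj]
    rw [Finset.sum_div]
    refine Finset.sum_congr rfl fun i _ => ?_
    rcases hsq j i with h | h
    · exact h.symm
    · exact absurd h hdj
  have hc0 : ∀ j, 0 ≤ c j := by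
    intro j
    by_cases hdj : d j = 0
    · simp [hc, hdj]
    · rw [hcgh j hdj]; exact Finset.sum_nonneg fun i _ => sq_nonneg _
  have hc1 : ∀ j, c j ≤ 1 := by
    intro j
    by_cases hdj : d j = 0
    · simp [hc, hdj]
    · rw [hcgh j hdj]
      calc ∑ i ∈ S, (gh j ⬝ᵥ w i) ^ 2 ≤ gh j ⬝ᵥ gh j := myBessel S w hw (gh j)
        _ = 1 := by rw [hghd j j, if_pos ⟨rfl, hdj⟩]
  have hcs : ∑ j, c j ≤ (m : ℝ) := by
    set T : Finset (Fin r) := Finset.univ.filter (fun j => d j ≠ 0) with hT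
    have :  ∑ j, c j = ∑ j ∈ T, c j := by
      rw [hT]
      rw [Finset.sum_filter_of_ne]
      intro j _ hcj
      intro hdj
      exact hcj (by simp [hc, hdj])
    rw [this]
    have hTge : ∀ j ∈ T, c j = ∑ i ∈ S, (gh j ⬝ᵥ w i) ^ 2 := by
      intro j hj
      exact hcgh j (by simpa [hT] using hj)
    rw [Finset.sum_congr rfl hTge, Finset.sum_comm]
    have hstep : ∀ i ∈ S, ∑ j ∈ T, (gh j ⬝ᵥ w i) ^ 2 ≤ 1 := by
      intro i hi
      have hB := myBessel T gh (fun a ha b hb => by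
        rw [hghd a b]
        have hda : d a ≠ 0 := by simpa [hT] using ha
        simp [hda]) (w i)
      calc ∑ j ∈ T, (gh j ⬝ᵥ w i) ^ 2 = ∑ j ∈ T, (w i ⬝ᵥ gh j) ^ 2 := by
            refine Finset.sum_congr rfl fun j _ => by rw [dotProduct_comm]
        _ ≤ w i ⬝ᵥ w i := hB
        _ = 1 := by rw [hw i hi i hi, if_pos rfl]
    calc ∑ i ∈ S, ∑ j ∈ T, (gh j ⬝ᵥ w i) ^ 2 ≤ ∑ i ∈ S, (1:ℝ) := Finset.sum_le_sum hstep
      _ = S.card := by simp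
      _ ≤ (m : ℝ) := by exact_mod_cast hcard
  calc ∑ i ∈ S, ∑ j, (g j ⬝ᵥ w i) ^ 2 = ∑ j, ∑ i ∈ S, (g j ⬝ᵥ w i) ^ 2 := Finset.sum_comm
    _ = ∑ j, d j * c j := Finset.sum_congr rfl fun j _ => hkey j
    _ ≤ _ := scalar_bound d c hd hd0 hc0 hc1 hcs

lemma myParseval {r : ℕ} (U : Matrix (Fin r) (Fin r) ℝ) (hU : U * Uᵀ = 1) (z : Fin r → ℝ) :
    ∑ j, ((fun i => U i j) ⬝ᵥ z) ^ 2 = z ⬝ᵥ z := by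
  have hcol : ∀ j, (fun i => U i j) ⬝ᵥ z = (Uᵀ *ᵥ z) j := by
    intro j
    simp [dotProduct, mulVec, transpose_apply]
  calc ∑ j, ((fun i => U i j) ⬝ᵥ z) ^ 2 = ∑ j, (Uᵀ *ᵥ z) j * (Uᵀ *ᵥ z) j := by
        refine Finset.sum_congr rfl fun j _ => by rw [hcol, sq]
    _ = (Uᵀ *ᵥ z) ⬝ᵥ (Uᵀ *ᵥ z) := rfl
    _ = z ⬝ᵥ z := by
        rw [dotProduct_mulVec, vecMul_transpose, mulVec_mulVec, hU, one_mulVec]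

section eigen
variable {r : ℕ} (M : Matrix (Fin r) (Fin r) ℝ) (hM : M.IsHermitian)

lemma star_eigU : star (hM.eigenvectorUnitary : Matrix (Fin r) (Fin r) ℝ)
    = (hM.eigenvectorUnitary : Matrix (Fin r) (Fin r) ℝ)ᵀ := by
  rw [Matrix.star_eq_conjTranspose, conjTranspose_eq_transpose_of_trivial]

lemma eigU_mul_transpose : (hM.eigenvectorUnitary : Matrix (Fin r) (Fin r) ℝ)
    * (hM.eigenvectorUnitary : Matrix (Fin r) (Fin r) ℝ)ᵀ = 1 := by
  rw [← star_eigU]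
  exact Matrix.mem_unitaryGroup_iff.mp hM.eigenvectorUnitary.2

lemma transpose_mul_eigU : (hM.eigenvectorUnitary : Matrix (Fin r) (Fin r) ℝ)ᵀ
    * (hM.eigenvectorUnitary : Matrix (Fin r) (Fin r) ℝ) = 1 := by
  rw [← star_eigU]
  exact Matrix.mem_unitaryGroup_iff'.mp hM.eigenvectorUnitary.2

lemma spectral_real : M = (hM.eigenvectorUnitary : Matrix (Fin r) (Fin r) ℝ)
    * diagonal hM.eigenvalues * (hM.eigenvectorUnitary : Matrix (Fin r) (Fin r) ℝ)ᵀ := by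
  have h := hM.spectral_theorem
  rwa [Unitary.conjStarAlgAut_apply, star_eigU] at h

lemma eigU_col_eig (j : Fin r) :
    M *ᵥ (fun i => (hM.eigenvectorUnitary : Matrix (Fin r) (Fin r) ℝ) i j)
      = hM.eigenvalues j • (fun i => (hM.eigenvectorUnitary : Matrix (Fin r) (Fin r) ℝ) i j) := by
  set U := (hM.eigenvectorUnitary : Matrix (Fin r) (Fin r) ℝ)
  have hMU : M * U = U * diagonal hM.eigenvalues := by
    conv_lhs => rw [spectral_real M hM]
    rw [mul_assoc, mul_assoc, transpose_mul_eigU, mul_one]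
  funext i
  have : (M *ᵥ fun i => U i j) i = (M * U) i j := by
    simp [mulVec, dotProduct, Matrix.mul_apply]
  rw [this, hMU, mul_diagonal]
  simp [mul_comm]

lemma eigU_col_ortho (j k : Fin r) :
    (fun i => (hM.eigenvectorUnitary : Matrix (Fin r) (Fin r) ℝ) i j)
      ⬝ᵥ (fun i => (hM.eigenvectorUnitary : Matrix (Fin r) (Fin r) ℝ) i k)
      = if j = k then 1 else 0 := by
  have h := transpose_mul_eigU M hM
  have := congrFun (congrFun h j) k
  rw [Matrix.mul_apply] at this
  simp only [transpose_apply] at this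
  rw [show ((1 : Matrix (Fin r) (Fin r) ℝ) j k) = if j = k then 1 else 0 from Matrix.one_apply]
    at this
  simpa [dotProduct] using this

lemma trace_eq_sum_eig : M.trace = ∑ j, hM.eigenvalues j := by
  conv_lhs => rw [spectral_real M hM]
  rw [Matrix.trace_mul_comm, ← mul_assoc, transpose_mul_eigU, one_mul, trace_diagonal]
end eigen

lemma sum_filter_ext {r n : ℕ} (m : ℕ) (hrn : r ≤ n) (L : ℕ → ℝ) (hL : ∀ t, r ≤ t → L t = 0) :
    ∑ i ∈ Finset.univ.filter (fun i : Fin n => (i:ℕ) < m), L (i:ℕ)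
      = ∑ j ∈ Finset.univ.filter (fun j : Fin r => (j:ℕ) < m), L (j:ℕ) := by
  rw [Finset.sum_filter, Finset.sum_filter]
  rw [Fin.sum_univ_eq_sum_range (fun t => if t < m then L t else 0) n,
      Fin.sum_univ_eq_sum_range (fun t => if t < m then L t else 0) r]
  refine (Finset.sum_subset (Finset.range_subset_range.mpr hrn) (fun t ht hnt => ?_)).symm
  have hrt : r ≤ t := le_of_not_gt (fun hc => hnt (Finset.mem_range.mpr hc))
  simp [hL t hrt]

lemma Iic_eq_filter {n : ℕ} (k : Fin n) :
    Finset.Iic k = Finset.univ.filter (fun i : Fin n => (i:ℕ) < (k:ℕ)+1) := by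
  ext i
  simp only [Finset.mem_Iic, Finset.mem_filter, Finset.mem_univ, true_and, Nat.lt_succ_iff]
  exact Fin.le_def

end Helpers

lemma Lnat_anti {p : ℕ} (l : Fin p → ℝ) (hl : Antitone l) (hl0 : ∀ j, 0 ≤ l j)
    {s t : ℕ} (hst : s ≤ t) :
    (if h : t < p then l ⟨t, h⟩ else 0) ≤ (if h : s < p then l ⟨s, h⟩ else 0) := by
  by_cases ht : t < p
  · have hs : s < p := lt_of_le_of_lt hst ht
    simp only [dif_pos ht, dif_pos hs]
    exact hl (show (⟨s, hs⟩ : Fin p) ≤ ⟨t, ht⟩ from hst)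
  · simp only [dif_neg ht]
    by_cases hs : s < p
    · simp only [dif_pos hs]; exact hl0 _
    · simp only [dif_neg hs]
      exact le_rfl

/-- for any positive semidefinite `Σ` with diagonal blocks `Σ₁`, `Σ₂`,
the eigenvalues of `Σ` are majorized by `(λ_{j,1} + λ_{j,2})_j`. -/
theorem eigenvalues_majorized {p q : ℕ}
    (S₁ : Matrix (Fin p) (Fin p) ℝ) (S₂ : Matrix (Fin q) (Fin q) ℝ)
    (hS₁ : S₁.PosSemidef) (hS₂ : S₂.PosSemidef)
    (l1 : Fin p → ℝ) (l2 : Fin q → ℝ) (hl1 : Antitone l1) (hl2 : Antitone l2)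
    (hev1 : ∀ h : S₁.IsHermitian, ∃ e : Equiv.Perm (Fin p), ∀ i, h.eigenvalues (e i) = l1 i)
    (hev2 : ∀ h : S₂.IsHermitian, ∃ e : Equiv.Perm (Fin q), ∀ i, h.eigenvalues (e i) = l2 i)
    (Ψ : Matrix (Fin p) (Fin q) ℝ)
    (hS : (blockMat S₁ Ψ S₂).PosSemidef)
    (hSm : (blockMat S₁ Ψ S₂).IsHermitian) :
    Majorized hSm.eigenvalues
      (fun j => extVec (p := p) q l1 j + extVec (p := q) p l2 (Fin.cast (Nat.add_comm p q) j)) := by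
  classical
  obtain ⟨e1, he1⟩ := hev1 hS₁.1
  obtain ⟨e2, he2⟩ := hev2 hS₂.1
  have hl10 : ∀ i, 0 ≤ l1 i := fun i => he1 i ▸ hS₁.eigenvalues_nonneg (e1 i)
  have hl20 : ∀ i, 0 ≤ l2 i := fun i => he2 i ▸ hS₂.eigenvalues_nonneg (e2 i)
  set lam : Fin (p+q) → ℝ := hSm.eigenvalues with hlamdef
  set U : Matrix (Fin (p+q)) (Fin (p+q)) ℝ := (hSm.eigenvectorUnitary : Matrix (Fin (p+q)) (Fin (p+q)) ℝ) with hUdef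
  set v : Fin (p+q) → Fin (p+q) → ℝ := fun j i => U i j with hvdef
  open scoped MatrixOrder in
  set A : Matrix (Fin (p+q)) (Fin (p+q)) ℝ := CFC.sqrt (blockMat S₁ Ψ S₂) with hAdef
  open scoped MatrixOrder in
  have hA2 : A * A = blockMat S₁ Ψ S₂ := CFC.sqrt_mul_sqrt_self _ hS.nonneg
  have hAt : Aᵀ = A := by
    open scoped MatrixOrder in
    have h := (CFC.sqrt_nonneg (blockMat S₁ Ψ S₂)).posSemidef.1
    rwa [Matrix.IsHermitian, conjTranspose_eq_transpose_of_trivial] at h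
  have hAsymm : ∀ i j, A i j = A j i := fun i j =>
    (congrFun (congrFun hAt.symm j) i).symm
  set ι₁ : Fin p → Fin (p+q) := fun a => finSumFinEquiv (Sum.inl a) with hι₁
  set ι₂ : Fin q → Fin (p+q) := fun b => finSumFinEquiv (Sum.inr b) with hι₂
  have hblk1 : ∀ a b, blockMat S₁ Ψ S₂ (ι₁ a) (ι₁ b) = S₁ a b := by
    intro a b; simp [blockMat, hι₁]
  have hblk2 : ∀ a b, blockMat S₁ Ψ S₂ (ι₂ a) (ι₂ b) = S₂ a b := by
    intro a b; simp [blockMat, hι₂]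
  -- the two rectangular pieces of A
  set C : Matrix (Fin (p+q)) (Fin p) ℝ := Matrix.of (fun i a => A i (ι₁ a)) with hCdef
  set D : Matrix (Fin (p+q)) (Fin q) ℝ := Matrix.of (fun i b => A i (ι₂ b)) with hDdef
  have hCtC : Cᵀ * C = S₁ := by
    ext a b
    rw [Matrix.mul_apply]
    have : ∀ i, Cᵀ a i * C i b = A (ι₁ a) i * A i (ι₁ b) := by
      intro i; simp [hCdef, transpose_apply, hAsymm i (ι₁ a)]
    rw [Finset.sum_congr rfl fun i _ => this i, ← Matrix.mul_apply, hA2, hblk1]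
  have hDtD : Dᵀ * D = S₂ := by
    ext a b
    rw [Matrix.mul_apply]
    have : ∀ i, Dᵀ a i * D i b = A (ι₂ a) i * A i (ι₂ b) := by
      intro i; simp [hDdef, transpose_apply, hAsymm i (ι₂ a)]
    rw [Finset.sum_congr rfl fun i _ => this i, ← Matrix.mul_apply, hA2, hblk2]
  -- eigenvector columns of the blocks
  set U₁ : Matrix (Fin p) (Fin p) ℝ := (hS₁.1.eigenvectorUnitary : Matrix (Fin p) (Fin p) ℝ) with hU₁def
  set U₂ : Matrix (Fin q) (Fin q) ℝ := (hS₂.1.eigenvectorUnitary : Matrix (Fin q) (Fin q) ℝ) with hU₂def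
  set u1 : Fin p → Fin p → ℝ := fun j a => U₁ a (e1 j) with hu1def
  set u2 : Fin q → Fin q → ℝ := fun j b => U₂ b (e2 j) with hu2def
  set g1 : Fin p → Fin (p+q) → ℝ := fun j => C *ᵥ u1 j with hg1def
  set g2 : Fin q → Fin (p+q) → ℝ := fun j => D *ᵥ u2 j with hg2def
  have hg1o : ∀ j k, g1 j ⬝ᵥ g1 k = if j = k then l1 j else 0 := by
    intro j k
    rw [hg1def]
    calc (C *ᵥ u1 j) ⬝ᵥ (C *ᵥ u1 k)
        = ((C *ᵥ u1 j) ᵥ* C) ⬝ᵥ u1 k := dotProduct_mulVec _ _ _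
      _ = ((Cᵀ * C) *ᵥ u1 j) ⬝ᵥ u1 k := by
          rw [← mulVec_transpose, mulVec_mulVec, ← transpose_transpose C,
            ← transpose_mul, transpose_transpose]
      _ = (l1 j • u1 j) ⬝ᵥ u1 k := by
          rw [hCtC, hu1def, eigU_col_eig S₁ hS₁.1 (e1 j), he1 j]
      _ = l1 j * (u1 j ⬝ᵥ u1 k) := smul_dotProduct _ _ _
      _ = if j = k then l1 j else 0 := by
          rw [hu1def, eigU_col_ortho S₁ hS₁.1 (e1 j) (e1 k)]
          by_cases h : j = k <;> simp [h, e1.injective.eq_iff]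
  have hg2o : ∀ j k, g2 j ⬝ᵥ g2 k = if j = k then l2 j else 0 := by
    intro j k
    rw [hg2def]
    calc (D *ᵥ u2 j) ⬝ᵥ (D *ᵥ u2 k)
        = ((D *ᵥ u2 j) ᵥ* D) ⬝ᵥ u2 k := dotProduct_mulVec _ _ _
      _ = ((Dᵀ * D) *ᵥ u2 j) ⬝ᵥ u2 k := by
          rw [← mulVec_transpose, mulVec_mulVec, ← transpose_transpose D,
            ← transpose_mul, transpose_transpose]
      _ = (l2 j • u2 j) ⬝ᵥ u2 k := by
          rw [hDtD, hu2def, eigU_col_eig S₂ hS₂.1 (e2 j), he2 j]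
      _ = l2 j * (u2 j ⬝ᵥ u2 k) := smul_dotProduct _ _ _
      _ = if j = k then l2 j else 0 := by
          rw [hu2def, eigU_col_ortho S₂ hS₂.1 (e2 j) (e2 k)]
          by_cases h : j = k <;> simp [h, e2.injective.eq_iff]
  -- splitting the quadratic form
  have hsplitv : ∀ x : Fin (p+q) → ℝ,
      x ⬝ᵥ (blockMat S₁ Ψ S₂ *ᵥ x) = ∑ j, (g1 j ⬝ᵥ x) ^ 2 + ∑ j, (g2 j ⬝ᵥ x) ^ 2 := by
    intro x
    set z : Fin (p+q) → ℝ := A *ᵥ x with hzdef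
    have hxz : x ⬝ᵥ (blockMat S₁ Ψ S₂ *ᵥ x) = z ⬝ᵥ z := by
      rw [← hA2, ← mulVec_mulVec, dotProduct_mulVec, ← mulVec_transpose, hAt]
    have hz1 : Cᵀ *ᵥ x = fun a => z (ι₁ a) := by
      funext a
      simp only [mulVec, dotProduct, hCdef, transpose_apply, Matrix.of_apply, hzdef]
      exact Finset.sum_congr rfl fun i _ => by rw [hAsymm i (ι₁ a)]
    have hz2 : Dᵀ *ᵥ x = fun b => z (ι₂ b) := by
      funext b
      simp only [mulVec, dotProduct, hDdef, transpose_apply, Matrix.of_apply, hzdef]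
      exact Finset.sum_congr rfl fun i _ => by rw [hAsymm i (ι₂ b)]
    have hgx1 : ∀ j, g1 j ⬝ᵥ x = (fun a => U₁ a (e1 j)) ⬝ᵥ (fun a => z (ι₁ a)) := by
      intro j
      rw [hg1def, dotProduct_comm, dotProduct_mulVec, ← mulVec_transpose, hz1,
        dotProduct_comm]
    have hgx2 : ∀ j, g2 j ⬝ᵥ x = (fun b => U₂ b (e2 j)) ⬝ᵥ (fun b => z (ι₂ b)) := by
      intro j
      rw [hg2def, dotProduct_comm, dotProduct_mulVec, ← mulVec_transpose, hz2,
        dotProduct_comm]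
    have hsum1 : ∑ j, (g1 j ⬝ᵥ x) ^ 2 = (fun a => z (ι₁ a)) ⬝ᵥ (fun a => z (ι₁ a)) := by
      calc ∑ j, (g1 j ⬝ᵥ x) ^ 2
          = ∑ j, ((fun a => U₁ a (e1 j)) ⬝ᵥ (fun a => z (ι₁ a))) ^ 2 :=
            Finset.sum_congr rfl fun j _ => by rw [hgx1 j]
        _ = ∑ j', ((fun a => U₁ a j') ⬝ᵥ (fun a => z (ι₁ a))) ^ 2 :=
            Equiv.sum_comp e1 (fun j' => ((fun a => U₁ a j') ⬝ᵥ (fun a => z (ι₁ a))) ^ 2)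
        _ = _ := myParseval U₁ (eigU_mul_transpose S₁ hS₁.1) _
    have hsum2 : ∑ j, (g2 j ⬝ᵥ x) ^ 2 = (fun b => z (ι₂ b)) ⬝ᵥ (fun b => z (ι₂ b)) := by
      calc ∑ j, (g2 j ⬝ᵥ x) ^ 2
          = ∑ j, ((fun b => U₂ b (e2 j)) ⬝ᵥ (fun b => z (ι₂ b))) ^ 2 :=
            Finset.sum_congr rfl fun j _ => by rw [hgx2 j]
        _ = ∑ j', ((fun b => U₂ b j') ⬝ᵥ (fun b => z (ι₂ b))) ^ 2 :=
            Equiv.sum_comp e2 (fun j' => ((fun b => U₂ b j') ⬝ᵥ (fun b => z (ι₂ b))) ^ 2)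
        _ = _ := myParseval U₂ (eigU_mul_transpose S₂ hS₂.1) _
    rw [hxz, hsum1, hsum2]
    unfold dotProduct
    rw [← Equiv.sum_comp finSumFinEquiv (fun i => z i * z i), Fintype.sum_sum_type]
  -- the sorting permutation
  set σ : Equiv.Perm (Fin (p+q)) := (Fin.revPerm).trans (Tuple.sort lam) with hσdef
  refine ⟨σ, Equiv.refl _, ?_, ?_, ?_, ?_⟩
  · -- antitone
    have : lam ∘ σ = (lam ∘ Tuple.sort lam) ∘ Fin.rev := rfl
    rw [this]
    exact (Tuple.monotone_sort lam).comp_antitone fun a b h => Fin.rev_le_rev.mpr h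
  · -- antitone RHS
    intro a b hab
    simp only [Equiv.refl_apply, Function.comp_apply]
    have hab' : (a : ℕ) ≤ (b : ℕ) := hab
    exact add_le_add (Lnat_anti l1 hl1 hl10 hab') (Lnat_anti l2 hl2 hl20 hab')
  · -- partial sums
    intro k
    simp only [Equiv.refl_apply]
    set m : ℕ := (k : ℕ) + 1 with hmdef
    have hcard : (Finset.Iic k).card ≤ m := by rw [Fin.card_Iic]
    have hw : ∀ i ∈ Finset.Iic k, ∀ i' ∈ Finset.Iic k,
        v (σ i) ⬝ᵥ v (σ i') = if i = i' then 1 else 0 := by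
      intro i _ i' _
      rw [hvdef]
      rw [eigU_col_ortho (blockMat S₁ Ψ S₂) hSm (σ i) (σ i')]
      exact if_congr σ.injective.eq_iff rfl rfl
    have hlameq : ∀ i, lam i = v i ⬝ᵥ (blockMat S₁ Ψ S₂ *ᵥ v i) := by
      intro i
      rw [hvdef]
      rw [eigU_col_eig (blockMat S₁ Ψ S₂) hSm i, dotProduct_smul]
      rw [eigU_col_ortho (blockMat S₁ Ψ S₂) hSm i i]
      simp [hlamdef]
    calc ∑ i ∈ Finset.Iic k, lam (σ i)
        = ∑ i ∈ Finset.Iic k, (∑ j, (g1 j ⬝ᵥ v (σ i)) ^ 2 + ∑ j, (g2 j ⬝ᵥ v (σ i)) ^ 2) := by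
          refine Finset.sum_congr rfl fun i _ => ?_
          rw [hlameq (σ i), hsplitv]
      _ = (∑ i ∈ Finset.Iic k, ∑ j, (g1 j ⬝ᵥ v (σ i)) ^ 2)
          + ∑ i ∈ Finset.Iic k, ∑ j, (g2 j ⬝ᵥ v (σ i)) ^ 2 := Finset.sum_add_distrib
      _ ≤ (∑ j ∈ Finset.univ.filter (fun j : Fin p => (j : ℕ) < m), l1 j)
          + ∑ j ∈ Finset.univ.filter (fun j : Fin q => (j : ℕ) < m), l2 j :=
          add_le_add
            (family_bound (Finset.Iic k) m hcard (fun i => v (σ i)) hw g1 l1 hl1 hg1o)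
            (family_bound (Finset.Iic k) m hcard (fun i => v (σ i)) hw g2 l2 hl2 hg2o)
      _ = ∑ i ∈ Finset.Iic k,
            (extVec q l1 i + extVec p l2 (Fin.cast (Nat.add_comm p q) i)) := by
          rw [Iic_eq_filter k, Finset.sum_add_distrib]
          have hE1 : ∑ i ∈ Finset.univ.filter (fun i : Fin (p+q) => (i:ℕ) < m), extVec q l1 i
              = ∑ j ∈ Finset.univ.filter (fun j : Fin p => (j:ℕ) < m), l1 j := by
            calc ∑ i ∈ Finset.univ.filter (fun i : Fin (p+q) => (i:ℕ) < m), extVec q l1 i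
                = ∑ j ∈ Finset.univ.filter (fun j : Fin p => (j:ℕ) < m),
                    (fun t : ℕ => if h : t < p then l1 ⟨t, h⟩ else 0) (j:ℕ) :=
                  sum_filter_ext m (Nat.le_add_right p q)
                    (fun t : ℕ => if h : t < p then l1 ⟨t, h⟩ else 0)
                    (fun t ht => dif_neg (not_lt.mpr ht))
              _ = ∑ j ∈ Finset.univ.filter (fun j : Fin p => (j:ℕ) < m), l1 j := by
                  refine Finset.sum_congr rfl fun j _ => ?_
                  simp [j.isLt]
          have hE2 : ∑ i ∈ Finset.univ.filter (fun i : Fin (p+q) => (i:ℕ) < m),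
                extVec p l2 (Fin.cast (Nat.add_comm p q) i)
              = ∑ j ∈ Finset.univ.filter (fun j : Fin q => (j:ℕ) < m), l2 j := by
            calc ∑ i ∈ Finset.univ.filter (fun i : Fin (p+q) => (i:ℕ) < m),
                  extVec p l2 (Fin.cast (Nat.add_comm p q) i)
                = ∑ j ∈ Finset.univ.filter (fun j : Fin q => (j:ℕ) < m),
                    (fun t : ℕ => if h : t < q then l2 ⟨t, h⟩ else 0) (j:ℕ) :=
                  sum_filter_ext m (Nat.le_add_left q p)
                    (fun t : ℕ => if h : t < q then l2 ⟨t, h⟩ else 0)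
                    (fun t ht => dif_neg (not_lt.mpr ht))
              _ = ∑ j ∈ Finset.univ.filter (fun j : Fin q => (j:ℕ) < m), l2 j := by
                  refine Finset.sum_congr rfl fun j _ => ?_
                  simp [j.isLt]
          rw [hE1, hE2]
  · -- total sums
    have htr : (blockMat S₁ Ψ S₂).trace = S₁.trace + S₂.trace := by
      calc (blockMat S₁ Ψ S₂).trace
          = ∑ i, blockMat S₁ Ψ S₂ i i := rfl
        _ = ∑ s : Fin p ⊕ Fin q,
              blockMat S₁ Ψ S₂ (finSumFinEquiv s) (finSumFinEquiv s) :=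
            (Equiv.sum_comp finSumFinEquiv _).symm
        _ = (∑ a, blockMat S₁ Ψ S₂ (ι₁ a) (ι₁ a))
            + ∑ b, blockMat S₁ Ψ S₂ (ι₂ b) (ι₂ b) := Fintype.sum_sum_type _
        _ = S₁.trace + S₂.trace := by
            rw [Finset.sum_congr rfl fun a _ => hblk1 a a,
              Finset.sum_congr rfl fun b _ => hblk2 b b]
            rfl
    have hL1 : ∑ j : Fin (p+q), extVec q l1 j = ∑ j : Fin p, l1 j := by
      have hfil1 : Finset.univ.filter (fun i : Fin (p+q) => (i:ℕ) < p + q) = Finset.univ := by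
        ext i; simp [i.isLt]
      have hfil2 : Finset.univ.filter (fun j : Fin p => (j:ℕ) < p + q) = Finset.univ := by
        ext j; simp [lt_of_lt_of_le j.isLt (Nat.le_add_right p q)]
      calc ∑ j : Fin (p+q), extVec q l1 j
          = ∑ i ∈ Finset.univ.filter (fun i : Fin (p+q) => (i:ℕ) < p + q), extVec q l1 i := by
            rw [hfil1]
        _ = ∑ j ∈ Finset.univ.filter (fun j : Fin p => (j:ℕ) < p + q),
              (fun t : ℕ => if h : t < p then l1 ⟨t, h⟩ else 0) (j:ℕ) :=
            sum_filter_ext (p+q) (Nat.le_add_right p q)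
              (fun t : ℕ => if h : t < p then l1 ⟨t, h⟩ else 0)
              (fun t ht => dif_neg (not_lt.mpr ht))
        _ = ∑ j : Fin p, l1 j := by
            rw [hfil2]
            refine Finset.sum_congr rfl fun j _ => ?_
            simp [j.isLt]
    have hL2 : ∑ j : Fin (p+q), extVec p l2 (Fin.cast (Nat.add_comm p q) j) = ∑ j : Fin q, l2 j := by
      have hfil1 : Finset.univ.filter (fun i : Fin (p+q) => (i:ℕ) < p + q) = Finset.univ := by
        ext i; simp [i.isLt]
      have hfil2 : Finset.univ.filter (fun j : Fin q => (j:ℕ) < p + q) = Finset.univ := by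
        ext j; simp [lt_of_lt_of_le j.isLt (Nat.le_add_left q p)]
      calc ∑ j : Fin (p+q), extVec p l2 (Fin.cast (Nat.add_comm p q) j)
          = ∑ i ∈ Finset.univ.filter (fun i : Fin (p+q) => (i:ℕ) < p + q),
              extVec p l2 (Fin.cast (Nat.add_comm p q) i) := by
            rw [hfil1]
        _ = ∑ j ∈ Finset.univ.filter (fun j : Fin q => (j:ℕ) < p + q),
              (fun t : ℕ => if h : t < q then l2 ⟨t, h⟩ else 0) (j:ℕ) :=
            sum_filter_ext (p+q) (Nat.le_add_left q p)
              (fun t : ℕ => if h : t < q then l2 ⟨t, h⟩ else 0)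
              (fun t ht => dif_neg (not_lt.mpr ht))
        _ = ∑ j : Fin q, l2 j := by
            rw [hfil2]
            refine Finset.sum_congr rfl fun j _ => ?_
            simp [j.isLt]
    calc ∑ i, lam i = (blockMat S₁ Ψ S₂).trace := (trace_eq_sum_eig _ hSm).symm
      _ = S₁.trace + S₂.trace := htr
      _ = (∑ j, hS₁.1.eigenvalues j) + ∑ j, hS₂.1.eigenvalues j := by
          rw [trace_eq_sum_eig S₁ hS₁.1, trace_eq_sum_eig S₂ hS₂.1]
      _ = (∑ j, l1 j) + ∑ j, l2 j := by
          rw [← Equiv.sum_comp e1 hS₁.1.eigenvalues, ← Equiv.sum_comp e2 hS₂.1.eigenvalues]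
          rw [Finset.sum_congr rfl fun j _ => he1 j, Finset.sum_congr rfl fun j _ => he2 j]
      _ = ∑ j : Fin (p+q),
            (extVec q l1 j + extVec p l2 (Fin.cast (Nat.add_comm p q) j)) := by
          rw [Finset.sum_add_distrib, hL1, hL2]
end

section
/- Let Σ₁ ∈ 𝕊^p_≥ and Σ₂ ∈ 𝕊^q_≥, and let Σ_m be the block matrix with diagonal blocks Σ₁, Σ₂ and off-diagonal block Ψ_m = U₁Λ₁^{1/2}ΠΛ₂^{1/2}U₂ᵀ built from the eigendecompositions of Σ₁ and Σ₂. Then among all positive semidefinite matrices Σ with diagonal blocks Σ₁ and Σ₂, the matrix Σ_m maximizes trace(ΨΨᵀ), where Ψ is the off-diagonal block of Σ; the maximum value is Σ_{j=1}^{min(p,q)} λ_{j,1} λ_{j,2}, where λ_{j,1}, λ_{j,2} are the decreasingly ordered eigenvalues of Σ₁ and Σ₂. -/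
open Matrix

open Finset



lemma telescope (a : ℕ → ℝ) {i p : ℕ} (h : i ≤ p) :
    ∑ k ∈ Ico i p, (a k - a (k+1)) = a i - a p := by
  induction p, h using Nat.le_induction with
  | base => simp
  | succ n hn ih => rw [Finset.sum_Ico_succ_top hn, ih]; ring

lemma abel_sum (b c : ℕ → ℝ) (q : ℕ) (hq : b q = 0) :
    ∑ j ∈ range q, c j * b j
      = ∑ l ∈ range q, (b l - b (l+1)) * ∑ j ∈ range (l+1), c j := by
  have h1 : ∀ j ∈ range q, c j * b j = ∑ l ∈ Ico j q, c j * (b l - b (l+1)) := by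
    intro j hj
    rw [← Finset.mul_sum, telescope b (le_of_lt (mem_range.mp hj)), hq, sub_zero]
  rw [Finset.sum_congr rfl h1, range_eq_Ico, sum_Ico_Ico_comm]
  refine Finset.sum_congr rfl fun l _ => ?_
  rw [← range_eq_Ico, Finset.mul_sum]
  exact Finset.sum_congr rfl fun j _ => mul_comm _ _

lemma sum_ite_le_eq_Ico (f : ℕ → ℝ) (j p : ℕ) :
    ∑ k ∈ range p, (if j ≤ k then f k else 0) = ∑ k ∈ Ico j p, f k := by
  rw [← Finset.sum_filter]
  congr 1
  ext k
  simp only [Finset.mem_filter, Finset.mem_range, Finset.mem_Ico]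
  tauto

lemma sum_ite_lt (t m : ℕ) (h : t ≤ m) :
    ∑ j ∈ range m, (if j < t then (1:ℝ) else 0) = t := by
  rw [Finset.sum_boole]
  congr 1
  rw [show (range m).filter (fun j => j < t) = range t by ext k; simp; omega]
  simp

lemma rearrange (p q : ℕ) (a b : ℕ → ℝ) (d : ℕ → ℕ → ℝ)
    (ha : Antitone a) (hb : Antitone b)
    (ha0 : ∀ i, p ≤ i → a i = 0) (hb0 : ∀ j, q ≤ j → b j = 0)
    (hd0 : ∀ i j, 0 ≤ d i j)
    (hrow : ∀ i < p, ∑ j ∈ range q, d i j ≤ 1)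
    (hcol : ∀ j < q, ∑ i ∈ range p, d i j ≤ 1) :
    ∑ i ∈ range p, ∑ j ∈ range q, d i j * (a i * b j)
      ≤ ∑ j ∈ range (min p q), a j * b j := by
  set α : ℕ → ℝ := fun k => a k - a (k+1) with hα
  set β : ℕ → ℝ := fun l => b l - b (l+1) with hβ
  have hαnn : ∀ k, 0 ≤ α k := fun k => sub_nonneg.mpr (ha (Nat.le_succ k))
  have hβnn : ∀ l, 0 ≤ β l := fun l => sub_nonneg.mpr (hb (Nat.le_succ l))
  -- T k l : partial block sums of d
  set T : ℕ → ℕ → ℝ := fun k l => ∑ j ∈ range (l+1), ∑ i ∈ range (k+1), d i j with hT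
  -- rewrite LHS
  have lhs_eq : ∑ i ∈ range p, ∑ j ∈ range q, d i j * (a i * b j)
      = ∑ k ∈ range p, α k * ∑ l ∈ range q, β l * T k l := by
    have step1 : ∑ i ∈ range p, ∑ j ∈ range q, d i j * (a i * b j)
        = ∑ i ∈ range p, (∑ j ∈ range q, d i j * b j) * a i := by
      refine Finset.sum_congr rfl fun i _ => ?_
      rw [Finset.sum_mul]
      exact Finset.sum_congr rfl fun j _ => by ring
    rw [step1, abel_sum a (fun i => ∑ j ∈ range q, d i j * b j) p (ha0 p le_rfl)]
    refine Finset.sum_congr rfl fun k hk => ?_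
    congr 1
    have swap : ∑ i ∈ range (k+1), ∑ j ∈ range q, d i j * b j
        = ∑ j ∈ range q, (∑ i ∈ range (k+1), d i j) * b j := by
      rw [Finset.sum_comm]
      exact Finset.sum_congr rfl fun j _ => (Finset.sum_mul _ _ _).symm
    rw [swap, abel_sum b (fun j => ∑ i ∈ range (k+1), d i j) q (hb0 q le_rfl)]
  rw [lhs_eq]
  -- bound T k l ≤ min (k+1) (l+1)
  have hTle : ∀ k < p, ∀ l < q, T k l ≤ ((min (k+1) (l+1) : ℕ) : ℝ) := by
    intro k hk l hl
    have h1 : T k l ≤ (k+1 : ℕ) := by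
      rw [hT]
      calc ∑ j ∈ range (l+1), ∑ i ∈ range (k+1), d i j
          = ∑ i ∈ range (k+1), ∑ j ∈ range (l+1), d i j := Finset.sum_comm
        _ ≤ ∑ i ∈ range (k+1), ∑ j ∈ range q, d i j := by
            refine Finset.sum_le_sum fun i _ => ?_
            exact Finset.sum_le_sum_of_subset_of_nonneg
              (Finset.range_subset_range.mpr hl) (fun j _ _ => hd0 i j)
        _ ≤ ∑ i ∈ range (k+1), 1 := by
            refine Finset.sum_le_sum fun i hi => hrow i (lt_of_lt_of_le (mem_range.mp hi) hk)
        _ = (k+1 : ℕ) := by simp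
    have h2 : T k l ≤ (l+1 : ℕ) := by
      rw [hT]
      calc ∑ j ∈ range (l+1), ∑ i ∈ range (k+1), d i j
          ≤ ∑ j ∈ range (l+1), ∑ i ∈ range p, d i j := by
            refine Finset.sum_le_sum fun j _ => ?_
            exact Finset.sum_le_sum_of_subset_of_nonneg
              (Finset.range_subset_range.mpr hk) (fun i _ _ => hd0 i j)
        _ ≤ ∑ j ∈ range (l+1), 1 := by
            refine Finset.sum_le_sum fun j hj => hcol j (lt_of_lt_of_le (mem_range.mp hj) hl)
        _ = (l+1 : ℕ) := by simp
    rcases le_total (k+1) (l+1) with h | h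
    · rw [Nat.min_eq_left h]; exact h1
    · rw [Nat.min_eq_right h]; exact h2
  -- bound sum
  have bound : ∑ k ∈ range p, α k * ∑ l ∈ range q, β l * T k l
      ≤ ∑ k ∈ range p, α k * ∑ l ∈ range q, β l * ((min (k+1) (l+1) : ℕ) : ℝ) := by
    refine Finset.sum_le_sum fun k hk => ?_
    refine mul_le_mul_of_nonneg_left ?_ (hαnn k)
    refine Finset.sum_le_sum fun l hl => ?_
    exact mul_le_mul_of_nonneg_left (hTle k (mem_range.mp hk) l (mem_range.mp hl)) (hβnn l)
  refine le_trans bound (le_of_eq ?_)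
  -- identity: ∑ k α k ∑ l β l min(k+1,l+1) = ∑_{j<min p q} a j * b j
  set m := min p q with hm
  have hmin : ∀ k < p, ∀ l < q, ((min (k+1) (l+1) : ℕ) : ℝ)
      = ∑ j ∈ range m, (if j ≤ k then (1:ℝ) else 0) * (if j ≤ l then (1:ℝ) else 0) := by
    intro k hk l hl
    have : ∀ j, (if j ≤ k then (1:ℝ) else 0) * (if j ≤ l then (1:ℝ) else 0)
        = if j < min (k+1) (l+1) then (1:ℝ) else 0 := by
      intro j
      by_cases h1 : j ≤ k <;> by_cases h2 : j ≤ l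
      · rw [if_pos h1, if_pos h2, if_pos (by omega), one_mul]
      · rw [if_pos h1, if_neg h2, if_neg (by omega), mul_zero]
      · rw [if_neg h1, if_pos h2, if_neg (by omega), zero_mul]
      · rw [if_neg h1, if_neg h2, if_neg (by omega), zero_mul]
    rw [Finset.sum_congr rfl fun j _ => this j, sum_ite_lt _ _ (by omega)]
  calc ∑ k ∈ range p, α k * ∑ l ∈ range q, β l * ((min (k+1) (l+1) : ℕ) : ℝ)
      = ∑ k ∈ range p, ∑ l ∈ range q, ∑ j ∈ range m,
          (α k * (if j ≤ k then (1:ℝ) else 0)) * (β l * (if j ≤ l then (1:ℝ) else 0)) := by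
        refine Finset.sum_congr rfl fun k hk => ?_
        rw [Finset.mul_sum]
        refine Finset.sum_congr rfl fun l hl => ?_
        rw [hmin k (mem_range.mp hk) l (mem_range.mp hl), Finset.mul_sum, Finset.mul_sum]
        exact Finset.sum_congr rfl fun j _ => by ring
    _ = ∑ j ∈ range m, (∑ k ∈ range p, α k * (if j ≤ k then (1:ℝ) else 0))
          * (∑ l ∈ range q, β l * (if j ≤ l then (1:ℝ) else 0)) := by
        rw [Finset.sum_congr rfl fun k (_ : k ∈ range p) => Finset.sum_comm, Finset.sum_comm]
        refine Finset.sum_congr rfl fun j _ => ?_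
        rw [Finset.sum_mul]
        exact Finset.sum_congr rfl fun k _ => (Finset.mul_sum _ _ _).symm
    _ = ∑ j ∈ range m, a j * b j := by
        refine Finset.sum_congr rfl fun j hj => ?_
        have hjp : j ≤ p := le_of_lt (lt_of_lt_of_le (mem_range.mp hj) (Nat.min_le_left p q))
        have hjq : j ≤ q := le_of_lt (lt_of_lt_of_le (mem_range.mp hj) (Nat.min_le_right p q))
        congr 1
        · have : ∀ k, α k * (if j ≤ k then (1:ℝ) else 0) = if j ≤ k then α k else 0 := by
            intro k; by_cases h : j ≤ k <;> simp [h]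
          rw [Finset.sum_congr rfl fun k _ => this k, sum_ite_le_eq_Ico, telescope a hjp,
            ha0 p le_rfl, sub_zero]
        · have : ∀ l, β l * (if j ≤ l then (1:ℝ) else 0) = if j ≤ l then β l else 0 := by
            intro l; by_cases h : j ≤ l <;> simp [h]
          rw [Finset.sum_congr rfl fun l _ => this l, sum_ite_le_eq_Ico, telescope b hjq,
            hb0 q le_rfl, sub_zero]

lemma row_bound {p q : ℕ} (l1 : Fin p → ℝ) (l2 : Fin q → ℝ)
    (K : Matrix (Fin p) (Fin q) ℝ)
    (h1 : ∀ i, 0 ≤ l1 i) (h2 : ∀ j, 0 ≤ l2 j)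
    (hq : ∀ (u : Fin p → ℝ) (v : Fin q → ℝ),
      (∑ i, ∑ j, u i * K i j * v j)^2
        ≤ (∑ i, l1 i * u i^2) * (∑ j, l2 j * v j^2))
    (i : Fin p) :
    ∑ j, (if l1 i = 0 ∨ l2 j = 0 then 0 else K i j^2 / (l1 i * l2 j)) ≤ 1 := by
  by_cases hli : l1 i = 0
  · simp [hli]
  have hlipos : 0 < l1 i := lt_of_le_of_ne (h1 i) (Ne.symm hli)
  set Q : ℝ := ∑ j, (if l2 j = 0 then 0 else K i j^2 / l2 j) with hQ
  have hQnn : 0 ≤ Q := by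
    refine Finset.sum_nonneg fun j _ => ?_
    by_cases h : l2 j = 0
    · simp [h]
    · have : 0 < l2 j := lt_of_le_of_ne (h2 j) (Ne.symm h)
      simp only [h, if_false]
      positivity
  have key : Q ≤ l1 i := by
    have := hq (fun i' => if i' = i then 1 else 0)
      (fun j => if l2 j = 0 then 0 else K i j / l2 j)
    have hB : (∑ i', ∑ j, (if i' = i then (1:ℝ) else 0) * K i' j *
        (if l2 j = 0 then 0 else K i j / l2 j)) = Q := by
      rw [Finset.sum_eq_single i]
      · refine Finset.sum_congr rfl fun j _ => ?_
        by_cases h : l2 j = 0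
        · simp [h]
        · rw [if_pos rfl, one_mul, if_neg h, if_neg h, pow_two, mul_div_assoc]
      · intro b _ hb
        refine Finset.sum_eq_zero fun j _ => ?_
        rw [if_neg hb, zero_mul, zero_mul]
      · intro h; exact absurd (Finset.mem_univ i) h
    have hA : (∑ i', l1 i' * (if i' = i then (1:ℝ) else 0)^2) = l1 i := by
      rw [Finset.sum_eq_single i]
      · rw [if_pos rfl, one_pow, mul_one]
      · intro b _ hb; rw [if_neg hb]; ring
      · intro h; exact absurd (Finset.mem_univ i) h
    have hC : (∑ j, l2 j * (if l2 j = 0 then 0 else K i j / l2 j)^2) = Q := by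
      refine Finset.sum_congr rfl fun j _ => ?_
      by_cases h : l2 j = 0
      · simp [h]
      · simp only [if_neg h]
        field_simp
    rw [hB, hA, hC] at this
    rcases eq_or_lt_of_le hQnn with h | h
    · rw [← h]; exact hlipos.le
    · nlinarith
  have sum_eq : ∑ j, (if l1 i = 0 ∨ l2 j = 0 then 0 else K i j^2 / (l1 i * l2 j))
      = Q / l1 i := by
    rw [hQ, Finset.sum_div]
    refine Finset.sum_congr rfl fun j _ => ?_
    by_cases h : l2 j = 0
    · simp [h]
    · rw [if_neg (by tauto), if_neg h, div_div]
      rw [mul_comm (l2 j) (l1 i)]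
  rw [sum_eq, div_le_one hlipos]
  exact key

open Matrix in
lemma quad_of_psd {p q : ℕ} (l1 : Fin p → ℝ) (l2 : Fin q → ℝ)
    (K : Matrix (Fin p) (Fin q) ℝ)
    (hN : (Matrix.fromBlocks (Matrix.diagonal l1) K Kᵀ (Matrix.diagonal l2)).PosSemidef)
    (u : Fin p → ℝ) (v : Fin q → ℝ) :
    (∑ i, ∑ j, u i * K i j * v j)^2
      ≤ (∑ i, l1 i * u i^2) * (∑ j, l2 j * v j^2) := by
  set S := ∑ i, ∑ j, u i * K i j * v j with hS
  set A := ∑ i, l1 i * u i^2 with hA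
  set C := ∑ j, l2 j * v j^2 with hC
  have key : ∀ t : ℝ, 0 ≤ C * (t*t) + (2*S)*t + A := by
    intro t
    have h0 := hN.dotProduct_mulVec_nonneg (Sum.elim u (t • v))
    have hsx : star (Sum.elim u (t • v)) = Sum.elim u (t • v) :=
      funext fun i => star_trivial _
    rw [hsx, Matrix.fromBlocks_mulVec, sumElim_dotProduct_sumElim,
      dotProduct_add, dotProduct_add] at h0
    simp only [Sum.elim_comp_inl, Sum.elim_comp_inr] at h0
    have e1 : u ⬝ᵥ (Matrix.diagonal l1 *ᵥ u) = A := by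
      simp only [dotProduct, Matrix.mulVec_diagonal, hA]
      exact Finset.sum_congr rfl fun i _ => by ring
    have e2 : (t • v) ⬝ᵥ (Matrix.diagonal l2 *ᵥ (t • v)) = C * (t*t) := by
      simp only [dotProduct, Matrix.mulVec_diagonal, Pi.smul_apply, smul_eq_mul, hC]
      rw [Finset.sum_mul]
      exact Finset.sum_congr rfl fun j _ => by ring
    have e3 : u ⬝ᵥ (K *ᵥ (t • v)) = S * t := by
      simp only [dotProduct, Matrix.mulVec, Pi.smul_apply, smul_eq_mul, hS]
      rw [Finset.sum_mul]
      refine Finset.sum_congr rfl fun i _ => ?_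
      rw [Finset.mul_sum, Finset.sum_mul]
      exact Finset.sum_congr rfl fun j _ => by ring
    have hS' : S = ∑ j, ∑ i, u i * K i j * v j := by
      rw [hS]; exact Finset.sum_comm
    have e4 : (t • v) ⬝ᵥ (Kᵀ *ᵥ u) = S * t := by
      simp only [dotProduct, Matrix.mulVec, Matrix.transpose_apply, Pi.smul_apply,
        smul_eq_mul]
      rw [hS', Finset.sum_mul]
      refine Finset.sum_congr rfl fun j _ => ?_
      rw [Finset.mul_sum, Finset.sum_mul]
      exact Finset.sum_congr rfl fun i _ => by ring
    rw [e1, e2, e3, e4] at h0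
    linarith
  have hd := discrim_le_zero key
  rw [discrim] at hd
  nlinarith [hd]

lemma fin_sum_ite {q : ℕ} (c : Fin q → ℝ) (n : ℕ) :
    ∑ j : Fin q, (if n = (j:ℕ) then c j else 0) = if h : n < q then c ⟨n, h⟩ else 0 := by
  by_cases h : n < q
  · rw [dif_pos h, Finset.sum_eq_single ⟨n, h⟩]
    · rw [if_pos rfl]
    · intro b _ hb
      rw [if_neg fun he => hb (by exact Fin.ext he.symm)]
    · intro h'; exact absurd (Finset.mem_univ _) h'
  · rw [dif_neg h]
    refine Finset.sum_eq_zero fun j _ => ?_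
    exact if_neg fun he => h (lt_of_eq_of_lt he j.isLt)

lemma sum_truncate (p q : ℕ) (f : ℕ → ℝ) :
    ∑ n ∈ range p, (if n < q then f n else 0) = ∑ n ∈ range (min p q), f n := by
  rw [← Finset.sum_filter]
  congr 1
  ext n
  simp only [Finset.mem_filter, Finset.mem_range, Finset.mem_Ico]
  omega

open Matrix in
lemma trace_mul_transpose {m n : ℕ} (M : Matrix (Fin m) (Fin n) ℝ) :
    (M * Mᵀ).trace = ∑ i, ∑ j, M i j ^ 2 := by
  simp [Matrix.trace, Matrix.diag, Matrix.mul_apply, sq]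

open Matrix in
lemma piT_pi (p q : ℕ) : (PiBlock p q)ᵀ * PiBlock p q
    = Matrix.diagonal (fun j : Fin q => if (j:ℕ) < p then (1:ℝ) else 0) := by
  ext j k
  rw [Matrix.mul_apply]
  by_cases hjk : j = k
  · subst hjk
    simp only [Matrix.transpose_apply, PiBlock, Matrix.of_apply, Matrix.diagonal_apply_eq]
    have : ∀ i : Fin p, (if (i:ℕ) = (j:ℕ) then (1:ℝ) else 0) * (if (i:ℕ) = (j:ℕ) then (1:ℝ) else 0)
        = if (j:ℕ) = (i:ℕ) then (1:ℝ) else 0 := by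
      intro i
      by_cases h : (i:ℕ) = (j:ℕ)
      · rw [if_pos h, if_pos h.symm, mul_one]
      · rw [if_neg h, if_neg (fun hh => h hh.symm), mul_zero]
    rw [Finset.sum_congr rfl fun i _ => this i,
      fin_sum_ite (fun _ => (1:ℝ)) (j:ℕ)]
    by_cases h : (j:ℕ) < p
    · rw [dif_pos h, if_pos h]
    · rw [dif_neg h, if_neg h]
  · rw [Matrix.diagonal_apply_ne _ hjk]
    refine Finset.sum_eq_zero fun i _ => ?_
    simp only [Matrix.transpose_apply, PiBlock, Matrix.of_apply]
    by_cases h : (i:ℕ) = (j:ℕ)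
    · rw [if_neg (fun hh : (i:ℕ) = (k:ℕ) => hjk (Fin.ext (h.symm.trans hh))), mul_zero]
    · rw [if_neg h, zero_mul]
noncomputable def extSeq {p : ℕ} (l : Fin p → ℝ) : ℕ → ℝ :=
  fun n => if h : n < p then l ⟨n, h⟩ else 0

lemma extSeq_lt {p : ℕ} (l : Fin p → ℝ) {n : ℕ} (h : n < p) :
    extSeq l n = l ⟨n, h⟩ := dif_pos h

lemma extSeq_fin {p : ℕ} (l : Fin p → ℝ) (i : Fin p) : extSeq l (i:ℕ) = l i := by
  rw [extSeq_lt l i.isLt]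

lemma extSeq_zero {p : ℕ} (l : Fin p → ℝ) {n : ℕ} (h : p ≤ n) :
    extSeq l n = 0 := dif_neg (not_lt.mpr h)

lemma extSeq_nonneg {p : ℕ} (l : Fin p → ℝ) (hl : ∀ i, 0 ≤ l i) (n : ℕ) :
    0 ≤ extSeq l n := by
  unfold extSeq
  by_cases h : n < p
  · rw [dif_pos h]; exact hl _
  · rw [dif_neg h]

lemma extSeq_antitone {p : ℕ} (l : Fin p → ℝ) (hl : Antitone l) (hnn : ∀ i, 0 ≤ l i) :
    Antitone (extSeq l) := by
  intro m n hmn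
  by_cases hn : n < p
  · have hm : m < p := lt_of_le_of_lt hmn hn
    rw [extSeq_lt l hn, extSeq_lt l hm]
    exact hl hmn
  · rw [extSeq_zero l (not_lt.mp hn)]
    exact extSeq_nonneg l hnn m

open Matrix in
lemma trace_conj {p q : ℕ} (U₁ : Matrix (Fin p) (Fin p) ℝ) (U₂ : Matrix (Fin q) (Fin q) ℝ)
    (Ψ : Matrix (Fin p) (Fin q) ℝ) (hU₁ : U₁ * U₁ᵀ = 1) (hU₂ : U₂ * U₂ᵀ = 1) :
    ((U₁ᵀ * Ψ * U₂) * (U₁ᵀ * Ψ * U₂)ᵀ).trace = (Ψ * Ψᵀ).trace := by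
  have c2 : ∀ (Z : Matrix (Fin q) (Fin p) ℝ), U₂ * (U₂ᵀ * Z) = Z := fun Z => by
    rw [← Matrix.mul_assoc, hU₂, Matrix.one_mul]
  have e : (U₁ᵀ * Ψ * U₂) * (U₁ᵀ * Ψ * U₂)ᵀ = U₁ᵀ * (Ψ * Ψᵀ) * U₁ := by
    simp only [Matrix.transpose_mul, Matrix.transpose_transpose, Matrix.mul_assoc]
    rw [c2]
  rw [e, Matrix.trace_mul_cycle, ← Matrix.mul_assoc, hU₁, Matrix.one_mul]

open Matrix in
lemma psiM_trace {p q : ℕ} (U₁ : Matrix (Fin p) (Fin p) ℝ) (l1 : Fin p → ℝ)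
    (U₂ : Matrix (Fin q) (Fin q) ℝ) (l2 : Fin q → ℝ)
    (hU₁ : U₁ * U₁ᵀ = 1) (hU₂ : U₂ * U₂ᵀ = 1)
    (h1 : ∀ i, 0 ≤ l1 i) (h2 : ∀ j, 0 ≤ l2 j) :
    (PsiM U₁ l1 U₂ l2 * (PsiM U₁ l1 U₂ l2)ᵀ).trace
      = ∑ n ∈ Finset.range (min p q), extSeq l1 n * extSeq l2 n := by
  have hU₁' : U₁ᵀ * U₁ = 1 := mul_eq_one_comm.mp hU₁
  have hU₂' : U₂ᵀ * U₂ = 1 := mul_eq_one_comm.mp hU₂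
  have hfold : U₁ᵀ * PsiM U₁ l1 U₂ l2 * U₂
      = Matrix.diagonal (fun i => Real.sqrt (l1 i)) * PiBlock p q *
          Matrix.diagonal (fun j => Real.sqrt (l2 j)) := by
    rw [PsiM]
    simp only [Matrix.mul_assoc]
    rw [hU₂', Matrix.mul_one, ← Matrix.mul_assoc, hU₁', Matrix.one_mul]
  rw [← trace_conj U₁ U₂ (PsiM U₁ l1 U₂ l2) hU₁ hU₂, hfold, trace_mul_transpose]
  have hentry : ∀ (i : Fin p) (j : Fin q),
      ((Matrix.diagonal (fun i => Real.sqrt (l1 i)) * PiBlock p q *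
        Matrix.diagonal (fun j => Real.sqrt (l2 j))) i j)^2
      = if (i:ℕ) = (j:ℕ) then l1 i * l2 j else 0 := by
    intro i j
    rw [Matrix.mul_diagonal, Matrix.diagonal_mul]
    show (Real.sqrt (l1 i) * (if (i:ℕ) = (j:ℕ) then (1:ℝ) else 0) * Real.sqrt (l2 j))^2 = _
    by_cases h : (i:ℕ) = (j:ℕ)
    · rw [if_pos h, if_pos h, mul_one, mul_pow, Real.sq_sqrt (h1 i), Real.sq_sqrt (h2 j)]
    · rw [if_neg h, if_neg h, mul_zero, zero_mul, zero_pow two_ne_zero]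
  calc ∑ i : Fin p, ∑ j : Fin q,
        ((Matrix.diagonal (fun i => Real.sqrt (l1 i)) * PiBlock p q *
          Matrix.diagonal (fun j => Real.sqrt (l2 j))) i j)^2
      = ∑ i : Fin p, ∑ j : Fin q, (if (i:ℕ) = (j:ℕ) then l1 i * l2 j else 0) := by
        exact Finset.sum_congr rfl fun i _ => Finset.sum_congr rfl fun j _ => hentry i j
    _ = ∑ i : Fin p, (if (i:ℕ) < q then extSeq l1 (i:ℕ) * extSeq l2 (i:ℕ) else 0) := by
        refine Finset.sum_congr rfl fun i _ => ?_
        rw [fin_sum_ite (fun j => l1 i * l2 j) (i:ℕ)]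
        by_cases h : (i:ℕ) < q
        · rw [dif_pos h]
          simp only [if_pos h]
          rw [extSeq_fin l1 i, extSeq_lt l2 h]
        · rw [dif_neg h]
          simp only [if_neg h]
    _ = ∑ n ∈ Finset.range p, (if n < q then extSeq l1 n * extSeq l2 n else 0) :=
        Fin.sum_univ_eq_sum_range (fun n => if n < q then extSeq l1 n * extSeq l2 n else 0) p
    _ = ∑ n ∈ Finset.range (min p q), extSeq l1 n * extSeq l2 n :=
        sum_truncate p q _
open Matrix in
lemma part1 {p q : ℕ} (S₁ : Matrix (Fin p) (Fin p) ℝ) (S₂ : Matrix (Fin q) (Fin q) ℝ)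
    (U₁ : Matrix (Fin p) (Fin p) ℝ) (l1 : Fin p → ℝ)
    (U₂ : Matrix (Fin q) (Fin q) ℝ) (l2 : Fin q → ℝ)
    (h1 : ∀ i, 0 ≤ l1 i) (h2 : ∀ j, 0 ≤ l2 j)
    (hdec1 : S₁ = U₁ * Matrix.diagonal l1 * U₁ᵀ)
    (hdec2 : S₂ = U₂ * Matrix.diagonal l2 * U₂ᵀ) :
    (blockMat S₁ (PsiM U₁ l1 U₂ l2) S₂).PosSemidef := by
  classical
  have hD1 : Matrix.diagonal (fun i => Real.sqrt (l1 i)) *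
      Matrix.diagonal (fun i => Real.sqrt (l1 i)) = Matrix.diagonal l1 := by
    rw [Matrix.diagonal_mul_diagonal,
      show (fun i => Real.sqrt (l1 i) * Real.sqrt (l1 i)) = l1
        from funext fun i => Real.mul_self_sqrt (h1 i)]
  have hD2 : Matrix.diagonal (fun j => Real.sqrt (l2 j)) *
      Matrix.diagonal (fun j => Real.sqrt (l2 j)) = Matrix.diagonal l2 := by
    rw [Matrix.diagonal_mul_diagonal,
      show (fun j => Real.sqrt (l2 j) * Real.sqrt (l2 j)) = l2
        from funext fun j => Real.mul_self_sqrt (h2 j)]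
  set R : Matrix (Fin q) (Fin q) ℝ :=
    Matrix.diagonal (fun j : Fin q => if p ≤ (j:ℕ) then (1:ℝ) else 0) with hR
  have hsum : (PiBlock p q)ᵀ * PiBlock p q + R * R = 1 := by
    rw [piT_pi, hR, Matrix.diagonal_mul_diagonal, Matrix.diagonal_add]
    have hfun : (fun j : Fin q => (if (j:ℕ) < p then (1:ℝ) else 0) +
        (if p ≤ (j:ℕ) then (1:ℝ) else 0) * (if p ≤ (j:ℕ) then (1:ℝ) else 0))
        = fun _ => (1:ℝ) := by
      funext j
      by_cases h : (j:ℕ) < p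
      · rw [if_pos h, if_neg (not_le.mpr h)]; norm_num
      · rw [if_neg h, if_pos (not_lt.mp h)]; norm_num
    rw [hfun, Matrix.diagonal_one]
  set X : Matrix (Fin p ⊕ Fin q) (Fin p ⊕ Fin q) ℝ :=
    Matrix.fromBlocks (U₁ * Matrix.diagonal (fun i => Real.sqrt (l1 i))) 0
      (U₂ * Matrix.diagonal (fun j => Real.sqrt (l2 j)) * (PiBlock p q)ᵀ)
      (U₂ * Matrix.diagonal (fun j => Real.sqrt (l2 j)) * R) with hX
  have key : X * Xᵀ = Matrix.fromBlocks S₁ (PsiM U₁ l1 U₂ l2) (PsiM U₁ l1 U₂ l2)ᵀ S₂ := by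
    rw [hX, Matrix.fromBlocks_transpose, Matrix.fromBlocks_multiply]
    have g11 : U₁ * Matrix.diagonal (fun i => Real.sqrt (l1 i)) *
        (U₁ * Matrix.diagonal (fun i => Real.sqrt (l1 i)))ᵀ +
        (0 : Matrix (Fin p) (Fin q) ℝ) * (0 : Matrix (Fin p) (Fin q) ℝ)ᵀ = S₁ := by
      rw [Matrix.zero_mul, add_zero, Matrix.transpose_mul, Matrix.diagonal_transpose, hdec1]
      simp only [Matrix.mul_assoc]
      rw [← Matrix.mul_assoc (Matrix.diagonal fun i => Real.sqrt (l1 i)), hD1]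
    have g12 : U₁ * Matrix.diagonal (fun i => Real.sqrt (l1 i)) *
        (U₂ * Matrix.diagonal (fun j => Real.sqrt (l2 j)) * (PiBlock p q)ᵀ)ᵀ +
        (0 : Matrix (Fin p) (Fin q) ℝ) *
          (U₂ * Matrix.diagonal (fun j => Real.sqrt (l2 j)) * R)ᵀ
        = PsiM U₁ l1 U₂ l2 := by
      rw [Matrix.zero_mul, add_zero, PsiM]
      simp only [Matrix.transpose_mul, Matrix.transpose_transpose,
        Matrix.diagonal_transpose, Matrix.mul_assoc]
    have g21 : U₂ * Matrix.diagonal (fun j => Real.sqrt (l2 j)) * (PiBlock p q)ᵀ *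
        (U₁ * Matrix.diagonal (fun i => Real.sqrt (l1 i)))ᵀ +
        U₂ * Matrix.diagonal (fun j => Real.sqrt (l2 j)) * R *
          (0 : Matrix (Fin p) (Fin q) ℝ)ᵀ
        = (PsiM U₁ l1 U₂ l2)ᵀ := by
      rw [Matrix.transpose_zero, Matrix.mul_zero, add_zero, PsiM]
      simp only [Matrix.transpose_mul, Matrix.transpose_transpose,
        Matrix.diagonal_transpose, Matrix.mul_assoc]
    have g22 : U₂ * Matrix.diagonal (fun j => Real.sqrt (l2 j)) * (PiBlock p q)ᵀ *
        (U₂ * Matrix.diagonal (fun j => Real.sqrt (l2 j)) * (PiBlock p q)ᵀ)ᵀ +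
        U₂ * Matrix.diagonal (fun j => Real.sqrt (l2 j)) * R *
          (U₂ * Matrix.diagonal (fun j => Real.sqrt (l2 j)) * R)ᵀ
        = S₂ := by
      have hRT : Rᵀ = R := by rw [hR, Matrix.diagonal_transpose]
      rw [hdec2]
      simp only [Matrix.transpose_mul, Matrix.transpose_transpose,
        Matrix.diagonal_transpose, hRT, Matrix.mul_assoc]
      rw [← Matrix.mul_add, ← Matrix.mul_add,
        ← Matrix.mul_assoc ((PiBlock p q)ᵀ), ← Matrix.mul_assoc R, ← Matrix.add_mul,
        hsum, Matrix.one_mul,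
        ← Matrix.mul_assoc (Matrix.diagonal fun j => Real.sqrt (l2 j))
          (Matrix.diagonal fun j => Real.sqrt (l2 j)) U₂ᵀ, hD2]
    rw [g11, g12, g21, g22]
  have hpsd : (X * Xᵀ).PosSemidef := by
    have h := Matrix.posSemidef_self_mul_conjTranspose X
    rwa [Matrix.conjTranspose_eq_transpose_of_trivial] at h
  rw [key] at hpsd
  rw [blockMat]
  exact hpsd.submatrix _
open Matrix in
lemma part2 {p q : ℕ} (S₁ : Matrix (Fin p) (Fin p) ℝ) (S₂ : Matrix (Fin q) (Fin q) ℝ)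
    (U₁ : Matrix (Fin p) (Fin p) ℝ) (l1 : Fin p → ℝ)
    (U₂ : Matrix (Fin q) (Fin q) ℝ) (l2 : Fin q → ℝ)
    (hU₁ : U₁ * U₁ᵀ = 1) (hU₂ : U₂ * U₂ᵀ = 1)
    (hl1 : Antitone l1) (hl2 : Antitone l2)
    (hl1nn : ∀ i, 0 ≤ l1 i) (hl2nn : ∀ j, 0 ≤ l2 j)
    (hd1 : U₁ᵀ * S₁ * U₁ = Matrix.diagonal l1)
    (hd2 : U₂ᵀ * S₂ * U₂ = Matrix.diagonal l2)
    (Ψ : Matrix (Fin p) (Fin q) ℝ) (hΨ : (blockMat S₁ Ψ S₂).PosSemidef) :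
    (Ψ * Ψᵀ).trace ≤ ∑ n ∈ Finset.range (min p q), extSeq l1 n * extSeq l2 n := by
  classical
  have hM : (Matrix.fromBlocks S₁ Ψ Ψᵀ S₂).PosSemidef := by
    have h := hΨ.submatrix finSumFinEquiv
    rw [blockMat] at h
    rwa [Matrix.submatrix_submatrix, Equiv.symm_comp_self, Matrix.submatrix_id_id] at h
  set K : Matrix (Fin p) (Fin q) ℝ := U₁ᵀ * Ψ * U₂ with hK
  have hN : (Matrix.fromBlocks (Matrix.diagonal l1) K Kᵀ (Matrix.diagonal l2)).PosSemidef := by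
    have h := hM.conjTranspose_mul_mul_same (Matrix.fromBlocks U₁ 0 0 U₂)
    rw [Matrix.conjTranspose_eq_transpose_of_trivial, Matrix.fromBlocks_transpose] at h
    have e : (Matrix.fromBlocks U₁ᵀ (0 : Matrix (Fin q) (Fin p) ℝ)ᵀ
          (0 : Matrix (Fin p) (Fin q) ℝ)ᵀ U₂ᵀ) * (Matrix.fromBlocks S₁ Ψ Ψᵀ S₂) *
          (Matrix.fromBlocks U₁ 0 0 U₂)
        = Matrix.fromBlocks (Matrix.diagonal l1) K Kᵀ (Matrix.diagonal l2) := by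
      rw [Matrix.fromBlocks_multiply, Matrix.fromBlocks_multiply]
      simp only [Matrix.transpose_zero, Matrix.zero_mul, Matrix.mul_zero,
        add_zero, zero_add]
      have hbl : U₂ᵀ * Ψᵀ * U₁ = Kᵀ := by
        rw [hK]
        simp only [Matrix.transpose_mul, Matrix.transpose_transpose, Matrix.mul_assoc]
      rw [hd1, hd2, hbl, hK]
    rw [e] at h
    exact h
  have hquad := quad_of_psd l1 l2 K hN
  have hquad' : ∀ (u : Fin q → ℝ) (v : Fin p → ℝ),
      (∑ j, ∑ i, u j * Kᵀ j i * v i)^2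
        ≤ (∑ j, l2 j * u j^2) * (∑ i, l1 i * v i^2) := by
    intro u v
    have h := hquad v u
    have hs : ∑ j, ∑ i, u j * Kᵀ j i * v i = ∑ i, ∑ j, v i * K i j * u j := by
      rw [Finset.sum_comm]
      exact Finset.sum_congr rfl fun i _ => Finset.sum_congr rfl fun j _ => by
        rw [Matrix.transpose_apply]; ring
    rw [hs, mul_comm]
    exact h
  have hentry : ∀ (i : Fin p) (j : Fin q), K i j ^ 2 ≤ l1 i * l2 j := by
    intro i j
    have h := hquad (fun i' => if i' = i then 1 else 0) (fun j' => if j' = j then 1 else 0)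
    have hB : (∑ i', ∑ j', (if i' = i then (1:ℝ) else 0) * K i' j' *
        (if j' = j then (1:ℝ) else 0)) = K i j := by
      rw [Finset.sum_eq_single i]
      · rw [Finset.sum_eq_single j]
        · rw [if_pos rfl, if_pos rfl, one_mul, mul_one]
        · intro b _ hb; rw [if_neg hb, mul_zero]
        · intro h'; exact absurd (Finset.mem_univ _) h'
      · intro b _ hb
        refine Finset.sum_eq_zero fun j' _ => ?_
        rw [if_neg hb, zero_mul, zero_mul]
      · intro h'; exact absurd (Finset.mem_univ _) h'
    have hA : (∑ i', l1 i' * (if i' = i then (1:ℝ) else 0)^2) = l1 i := by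
      rw [Finset.sum_eq_single i]
      · rw [if_pos rfl, one_pow, mul_one]
      · intro b _ hb; rw [if_neg hb]; ring
      · intro h'; exact absurd (Finset.mem_univ _) h'
    have hC : (∑ j', l2 j' * (if j' = j then (1:ℝ) else 0)^2) = l2 j := by
      rw [Finset.sum_eq_single j]
      · rw [if_pos rfl, one_pow, mul_one]
      · intro b _ hb; rw [if_neg hb]; ring
      · intro h'; exact absurd (Finset.mem_univ _) h'
    rw [hB, hA, hC] at h
    exact h
  have hzero : ∀ (i : Fin p) (j : Fin q), l1 i = 0 ∨ l2 j = 0 → K i j = 0 := by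
    intro i j h
    have h1 := hentry i j
    have h2 : K i j ^ 2 ≤ 0 := by
      rcases h with h | h
      · rw [h, zero_mul] at h1; exact h1
      · rw [h, mul_zero] at h1; exact h1
    have h3 : K i j ^ 2 = 0 := le_antisymm h2 (sq_nonneg _)
    exact pow_eq_zero_iff two_ne_zero |>.mp h3
  set dF : Fin p → Fin q → ℝ :=
    fun i j => if l1 i = 0 ∨ l2 j = 0 then 0 else K i j^2 / (l1 i * l2 j) with hdF
  have hrowF : ∀ i, ∑ j, dF i j ≤ 1 := fun i => row_bound l1 l2 K hl1nn hl2nn hquad i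
  have hcolF : ∀ j, ∑ i, dF i j ≤ 1 := by
    intro j
    have h := row_bound l2 l1 Kᵀ hl2nn hl1nn hquad' j
    refine le_trans (le_of_eq ?_) h
    refine Finset.sum_congr rfl fun i _ => ?_
    simp only [hdF]
    by_cases hc : l1 i = 0 ∨ l2 j = 0
    · rw [if_pos hc, if_pos hc.symm]
    · rw [if_neg hc, if_neg (fun hh => hc hh.symm), Matrix.transpose_apply,
        mul_comm (l2 j) (l1 i)]
  set d : ℕ → ℕ → ℝ := fun n m =>
    if h : n < p then if h' : m < q then dF ⟨n, h⟩ ⟨m, h'⟩ else 0 else 0 with hd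
  have hdFnn : ∀ i j, 0 ≤ dF i j := by
    intro i j
    simp only [hdF]
    by_cases hc : l1 i = 0 ∨ l2 j = 0
    · rw [if_pos hc]
    · rw [if_neg hc]
      push_neg at hc
      have h1 : 0 < l1 i := lt_of_le_of_ne (hl1nn i) (Ne.symm hc.1)
      have h2 : 0 < l2 j := lt_of_le_of_ne (hl2nn j) (Ne.symm hc.2)
      positivity
  have hdnn : ∀ n m, 0 ≤ d n m := by
    intro n m
    simp only [hd]
    by_cases h : n < p
    · rw [dif_pos h]
      by_cases h' : m < q
      · rw [dif_pos h']; exact hdFnn _ _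
      · rw [dif_neg h']
    · rw [dif_neg h]
  have hrow : ∀ n < p, ∑ m ∈ Finset.range q, d n m ≤ 1 := by
    intro n hn
    have he : ∑ m ∈ Finset.range q, d n m = ∑ j : Fin q, dF ⟨n, hn⟩ j := by
      rw [← Fin.sum_univ_eq_sum_range (fun m => d n m) q]
      refine Finset.sum_congr rfl fun j _ => ?_
      simp only [hd]
      simp only [dif_pos hn, dif_pos j.isLt, Fin.eta]
    rw [he]
    exact hrowF _
  have hcol : ∀ m < q, ∑ n ∈ Finset.range p, d n m ≤ 1 := by
    intro m hm
    have he : ∑ n ∈ Finset.range p, d n m = ∑ i : Fin p, dF i ⟨m, hm⟩ := by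
      rw [← Fin.sum_univ_eq_sum_range (fun n => d n m) p]
      refine Finset.sum_congr rfl fun i _ => ?_
      simp only [hd]
      simp only [dif_pos hm, dif_pos i.isLt, Fin.eta]
    rw [he]
    exact hcolF _
  have htr : (Ψ * Ψᵀ).trace
      = ∑ n ∈ Finset.range p, ∑ m ∈ Finset.range q, d n m * (extSeq l1 n * extSeq l2 m) := by
    rw [← trace_conj U₁ U₂ Ψ hU₁ hU₂, ← hK, trace_mul_transpose]
    have hKd : ∀ (i : Fin p) (j : Fin q), K i j ^ 2 = dF i j * (l1 i * l2 j) := by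
      intro i j
      simp only [hdF]
      by_cases hc : l1 i = 0 ∨ l2 j = 0
      · rw [if_pos hc, zero_mul, hzero i j hc, zero_pow two_ne_zero]
      · rw [if_neg hc]
        push_neg at hc
        rw [div_mul_cancel₀ _ (mul_ne_zero hc.1 hc.2)]
    calc ∑ i : Fin p, ∑ j : Fin q, K i j ^ 2
        = ∑ i : Fin p, (fun n => ∑ m ∈ Finset.range q, d n m * (extSeq l1 n * extSeq l2 m)) (i:ℕ) := by
          refine Finset.sum_congr rfl fun i _ => ?_
          show _ = ∑ m ∈ Finset.range q, d (i:ℕ) m * (extSeq l1 (i:ℕ) * extSeq l2 m)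
          rw [← Fin.sum_univ_eq_sum_range (fun m => d (i:ℕ) m * (extSeq l1 (i:ℕ) * extSeq l2 m)) q]
          refine Finset.sum_congr rfl fun j _ => ?_
          rw [hKd i j]
          simp only [hd]
          simp only [dif_pos i.isLt, dif_pos j.isLt, Fin.eta]
          rw [extSeq_fin l1 i, extSeq_fin l2 j]
      _ = ∑ n ∈ Finset.range p, ∑ m ∈ Finset.range q, d n m * (extSeq l1 n * extSeq l2 m) :=
          Fin.sum_univ_eq_sum_range (fun n => ∑ m ∈ Finset.range q, d n m * (extSeq l1 n * extSeq l2 m)) p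
  rw [htr]
  exact rearrange p q (extSeq l1) (extSeq l2) d
    (extSeq_antitone l1 hl1 hl1nn) (extSeq_antitone l2 hl2 hl2nn)
    (fun i hi => extSeq_zero l1 hi) (fun j hj => extSeq_zero l2 hj)
    hdnn hrow hcol

/-- among matrices in `Γ(Σ₁, Σ₂)`, the block `Ψ_m` maximizes `trace(ΨΨᵀ)`,
with maximal value `∑_{j=1}^{min(p,q)} λ_{j,1} λ_{j,2}`. -/
theorem PsiM_maximizes_trace {p q : ℕ}
    (S₁ : Matrix (Fin p) (Fin p) ℝ) (S₂ : Matrix (Fin q) (Fin q) ℝ)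
    (hS₁ : S₁.PosSemidef) (hS₂ : S₂.PosSemidef)
    (U₁ : Matrix (Fin p) (Fin p) ℝ) (l1 : Fin p → ℝ)
    (U₂ : Matrix (Fin q) (Fin q) ℝ) (l2 : Fin q → ℝ)
    (hU₁ : U₁ * U₁ᵀ = 1) (hU₂ : U₂ * U₂ᵀ = 1)
    (hl1 : Antitone l1) (hl2 : Antitone l2)
    (hdec1 : S₁ = U₁ * Matrix.diagonal l1 * U₁ᵀ)
    (hdec2 : S₂ = U₂ * Matrix.diagonal l2 * U₂ᵀ) :
    (blockMat S₁ (PsiM U₁ l1 U₂ l2) S₂).PosSemidef ∧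
    (∀ Ψ : Matrix (Fin p) (Fin q) ℝ, (blockMat S₁ Ψ S₂).PosSemidef →
      (Ψ * Ψᵀ).trace ≤ (PsiM U₁ l1 U₂ l2 * (PsiM U₁ l1 U₂ l2)ᵀ).trace) ∧
    (PsiM U₁ l1 U₂ l2 * (PsiM U₁ l1 U₂ l2)ᵀ).trace =
      ∑ j : Fin (min p q),
        l1 (Fin.castLE (Nat.min_le_left p q) j) * l2 (Fin.castLE (Nat.min_le_right p q) j) := by
  have hU₁' : U₁ᵀ * U₁ = 1 := mul_eq_one_comm.mp hU₁
  have hU₂' : U₂ᵀ * U₂ = 1 := mul_eq_one_comm.mp hU₂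
  have hd1 : U₁ᵀ * S₁ * U₁ = Matrix.diagonal l1 := by
    rw [hdec1]
    simp only [Matrix.mul_assoc]
    rw [hU₁', Matrix.mul_one, ← Matrix.mul_assoc, hU₁', Matrix.one_mul]
  have hd2 : U₂ᵀ * S₂ * U₂ = Matrix.diagonal l2 := by
    rw [hdec2]
    simp only [Matrix.mul_assoc]
    rw [hU₂', Matrix.mul_one, ← Matrix.mul_assoc, hU₂', Matrix.one_mul]
  have hl1nn : ∀ i, 0 ≤ l1 i := by
    have hpsd : (Matrix.diagonal l1).PosSemidef := by
      rw [← hd1, ← Matrix.conjTranspose_eq_transpose_of_trivial U₁]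
      exact hS₁.conjTranspose_mul_mul_same U₁
    exact Matrix.posSemidef_diagonal_iff.mp hpsd
  have hl2nn : ∀ j, 0 ≤ l2 j := by
    have hpsd : (Matrix.diagonal l2).PosSemidef := by
      rw [← hd2, ← Matrix.conjTranspose_eq_transpose_of_trivial U₂]
      exact hS₂.conjTranspose_mul_mul_same U₂
    exact Matrix.posSemidef_diagonal_iff.mp hpsd
  have htr := psiM_trace U₁ l1 U₂ l2 hU₁ hU₂ hl1nn hl2nn
  have hcast : ∑ j : Fin (min p q),
      l1 (Fin.castLE (Nat.min_le_left p q) j) * l2 (Fin.castLE (Nat.min_le_right p q) j)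
      = ∑ n ∈ Finset.range (min p q), extSeq l1 n * extSeq l2 n := by
    rw [← Fin.sum_univ_eq_sum_range (fun n => extSeq l1 n * extSeq l2 n) (min p q)]
    refine Finset.sum_congr rfl fun j _ => ?_
    have h1 : (j:ℕ) < p := lt_of_lt_of_le j.isLt (Nat.min_le_left p q)
    have h2 : (j:ℕ) < q := lt_of_lt_of_le j.isLt (Nat.min_le_right p q)
    rw [extSeq_lt l1 h1, extSeq_lt l2 h2]
    rfl
  refine ⟨part1 S₁ S₂ U₁ l1 U₂ l2 hl1nn hl2nn hdec1 hdec2, fun Ψ hΨ => ?_, ?_⟩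
  · rw [htr]
    exact part2 S₁ S₂ U₁ l1 U₂ l2 hU₁ hU₂ hl1 hl2 hl1nn hl2nn hd1 hd2 Ψ hΨ
  · rw [htr, hcast]
end

section
/- Let A be a real symmetric d×d matrix with d distinct eigenvalues and eigendecomposition A = U L Uᵀ with U orthogonal and L diagonal with strictly decreasing diagonal. For symmetric H_t → H entrywise as t ↓ 0, the map sending a symmetric matrix to the diagonal matrix of its decreasingly ordered eigenvalues satisfies: t^{−1}(L(A + tH_t) − L(A)) converges to the diagonal matrix D_{UᵀHU} whose diagonal equals the diagonal of UᵀHU. -/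
open Matrix Filter Topology
open scoped Classical
set_option maxHeartbeats 1000000

/-- Rearrangement of a tuple in decreasing order. -/
noncomputable def sortedDesc {n : ℕ} (f : Fin n → ℝ) : Fin n → ℝ :=
  fun i => (f ∘ Tuple.sort f) i.rev

/-- `L(M)`: the diagonal matrix of the decreasingly ordered eigenvalues of a symmetric
matrix `M` (and `0` for non-Hermitian `M`). -/
noncomputable def Lmap {d : ℕ} (M : Matrix (Fin d) (Fin d) ℝ) :
    Matrix (Fin d) (Fin d) ℝ :=
  if h : M.IsHermitian then Matrix.diagonal (sortedDesc h.eigenvalues) else 0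

/-- Diagonal part of a square matrix, as a diagonal matrix. -/
def diagPart {d : ℕ} (A : Matrix (Fin d) (Fin d) ℝ) : Matrix (Fin d) (Fin d) ℝ :=
  Matrix.diagonal fun i => A i i

lemma fin_sm_id {n : ℕ} (f : Fin n → Fin n) (h : StrictMono f) : ∀ i, f i = i := by
  intro i
  have i1 : WellFoundedLT (Fin n) := inferInstance
  have i2 : WellFoundedGT (Fin n) := inferInstance
  exact le_antisymm (@StrictMono.apply_le (Fin n) _ i2 f h i) (@StrictMono.le_apply (Fin n) _ i1 f h i)

lemma symm_isHerm {d : ℕ} {M : Matrix (Fin d) (Fin d) ℝ} (hM : Mᵀ = M) : M.IsHermitian := by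
  rw [Matrix.IsHermitian, Matrix.conjTranspose_eq_transpose_of_trivial, hM]

lemma parseval {d : ℕ} {B : Matrix (Fin d) (Fin d) ℝ} (hB : B.IsHermitian) (y : Fin d → ℝ) :
    ∑ k, (⇑(hB.eigenvectorBasis k) ⬝ᵥ y) ^ 2 = ∑ i, (y i) ^ 2 := by
  classical
  set b := hB.eigenvectorBasis with hb
  set yE : EuclideanSpace ℝ (Fin d) := (WithLp.equiv 2 _).symm y with hyE
  have h1 := b.repr.inner_map_map yE yE
  have h2 : ∀ k, b.repr yE k = ⇑(b k) ⬝ᵥ y := by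
    intro k
    rw [b.repr_apply_apply]
    simp [PiLp.inner_apply, RCLike.inner_apply, yE, dotProduct, mul_comm]
  rw [PiLp.inner_apply, PiLp.inner_apply] at h1
  simp only [RCLike.inner_apply, conj_trivial] at h1
  calc ∑ k, (⇑(b k) ⬝ᵥ y) ^ 2 = ∑ k, b.repr yE k * b.repr yE k := by simp [h2, sq]
    _ = ∑ i, y i ^ 2 := by rw [h1]; congr 1; funext i; simp [yE, sq]

lemma sum_sq_eigvec {d : ℕ} {B : Matrix (Fin d) (Fin d) ℝ} (hB : B.IsHermitian) (k : Fin d) :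
    ∑ i, (⇑(hB.eigenvectorBasis k) i) ^ 2 = 1 := by
  have h := orthonormal_iff_ite.mp hB.eigenvectorBasis.orthonormal k k
  simp only [if_pos rfl] at h
  rw [PiLp.inner_apply] at h
  simpa [RCLike.inner_apply, sq] using h

lemma dot_mulVec_eig {d : ℕ} {B : Matrix (Fin d) (Fin d) ℝ} (hB : B.IsHermitian)
    (k : Fin d) (x : Fin d → ℝ) :
    ⇑(hB.eigenvectorBasis k) ⬝ᵥ (B *ᵥ x)
      = hB.eigenvalues k * (⇑(hB.eigenvectorBasis k) ⬝ᵥ x) := by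
  have hBt : Bᵀ = B := by rw [← Matrix.conjTranspose_eq_transpose_of_trivial]; exact hB
  rw [Matrix.dotProduct_mulVec, ← Matrix.mulVec_transpose, hBt,
    hB.mulVec_eigenvectorBasis, smul_dotProduct]
  rfl

lemma sumsq_mulVec {d : ℕ} (V : Matrix (Fin d) (Fin d) ℝ) (hV : Vᵀ * V = 1) (y : Fin d → ℝ) :
    ∑ i, ((V *ᵥ y) i) ^ 2 = ∑ i, (y i) ^ 2 := by
  have h : (V *ᵥ y) ⬝ᵥ (V *ᵥ y) = y ⬝ᵥ y := by
    rw [Matrix.dotProduct_mulVec, ← Matrix.mulVec_transpose, Matrix.mulVec_mulVec, hV,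
      Matrix.one_mulVec]
  simpa [dotProduct, sq] using h

lemma exists_eig_near {d : ℕ} {B : Matrix (Fin d) (Fin d) ℝ} (hB : B.IsHermitian)
    (x : Fin d → ℝ) (hx : ∑ i, x i ^ 2 = 1) (μ R : ℝ) (hR0 : 0 ≤ R)
    (hR : ∑ i, ((B *ᵥ x) i - μ * x i) ^ 2 ≤ R ^ 2) :
    ∃ k, |hB.eigenvalues k - μ| ≤ R := by
  by_contra hcon
  push_neg at hcon
  set y : Fin d → ℝ := fun i => (B *ᵥ x) i - μ * x i with hy
  set cc : Fin d → ℝ := fun k => ⇑(hB.eigenvectorBasis k) ⬝ᵥ x with hcc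
  have hsum : ∑ k, cc k ^ 2 = 1 := by simp only [hcc]; rw [parseval hB x, hx]
  have hyk : ∀ k, ⇑(hB.eigenvectorBasis k) ⬝ᵥ y = (hB.eigenvalues k - μ) * cc k := by
    intro k
    have h1 : y = B *ᵥ x - μ • x := by
      funext i; simp [hy, Pi.sub_apply, Pi.smul_apply, smul_eq_mul]
    rw [h1, dotProduct_sub, dot_mulVec_eig hB k x, dotProduct_smul]
    simp only [hcc, smul_eq_mul]; ring
  have hkey : ∑ k, ((hB.eigenvalues k - μ) * cc k) ^ 2 ≤ R ^ 2 := by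
    calc ∑ k, ((hB.eigenvalues k - μ) * cc k) ^ 2
        = ∑ k, (⇑(hB.eigenvectorBasis k) ⬝ᵥ y) ^ 2 := by simp only [hyk]
      _ = ∑ i, y i ^ 2 := parseval hB y
      _ ≤ R ^ 2 := hR
  have hex : ∃ k, cc k ≠ 0 := by
    by_contra hall; push_neg at hall
    rw [Finset.sum_eq_zero (fun k _ => by rw [hall k]; ring)] at hsum
    exact zero_ne_one hsum
  obtain ⟨k₀, hk₀⟩ := hex
  have hstrict : ∑ k, R ^ 2 * cc k ^ 2 < ∑ k, ((hB.eigenvalues k - μ) * cc k) ^ 2 := by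
    apply Finset.sum_lt_sum
    · intro k _
      rw [mul_pow]
      apply mul_le_mul_of_nonneg_right _ (sq_nonneg _)
      calc R ^ 2 ≤ |hB.eigenvalues k - μ| ^ 2 := pow_le_pow_left₀ hR0 (hcon k).le 2
        _ = (hB.eigenvalues k - μ) ^ 2 := sq_abs _
    · refine ⟨k₀, Finset.mem_univ k₀, ?_⟩
      rw [mul_pow]
      apply mul_lt_mul_of_pos_right _
        (lt_of_le_of_ne (sq_nonneg _) (Ne.symm (pow_ne_zero 2 hk₀)))
      calc R ^ 2 < |hB.eigenvalues k₀ - μ| ^ 2 := by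
            apply pow_lt_pow_left₀ (hcon k₀) hR0 two_ne_zero
        _ = (hB.eigenvalues k₀ - μ) ^ 2 := sq_abs _
  have hcontr : R ^ 2 < R ^ 2 := by
    calc R ^ 2 = ∑ k, R ^ 2 * cc k ^ 2 := by rw [← Finset.mul_sum, hsum, mul_one]
      _ < ∑ k, ((hB.eigenvalues k - μ) * cc k) ^ 2 := hstrict
      _ ≤ R ^ 2 := hkey
  exact lt_irrefl _ hcontr

lemma eig_near_diag {d : ℕ} (ℓ : Fin d → ℝ) (E : Matrix (Fin d) (Fin d) ℝ) (η : ℝ)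
    (hE : ∀ i j, |E i j| ≤ η) (μ : ℝ) (v : Fin d → ℝ) (hv : v ≠ 0)
    (heq : (Matrix.diagonal ℓ + E) *ᵥ v = μ • v) :
    ∃ j, |μ - ℓ j| ≤ (d : ℝ) * η := by
  have hne : (Finset.univ : Finset (Fin d)).Nonempty := by
    obtain ⟨i, hi⟩ := Function.ne_iff.mp hv
    exact ⟨i, Finset.mem_univ i⟩
  obtain ⟨j, -, hj⟩ := Finset.exists_max_image Finset.univ (fun m => |v m|) hne
  have hvj : 0 < |v j| := by
    obtain ⟨i, hi⟩ := Function.ne_iff.mp hv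
    calc (0:ℝ) < |v i| := abs_pos.mpr hi
      _ ≤ |v j| := hj i (Finset.mem_univ i)
  refine ⟨j, ?_⟩
  have hc := congrFun heq j
  simp only [Matrix.add_mulVec, Pi.add_apply, Matrix.mulVec_diagonal, Pi.smul_apply,
    smul_eq_mul] at hc
  have hrel : (μ - ℓ j) * v j = (E *ᵥ v) j := by rw [sub_mul]; linarith
  have hη0 : 0 ≤ η := le_trans (abs_nonneg _) (hE j j)
  have hEvj : |(E *ᵥ v) j| ≤ (d : ℝ) * η * |v j| := by
    have hEv : (E *ᵥ v) j = ∑ k, E j k * v k := rfl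
    rw [hEv]
    calc |∑ k, E j k * v k| ≤ ∑ k, |E j k * v k| := Finset.abs_sum_le_sum_abs _ _
      _ ≤ ∑ _k : Fin d, η * |v j| := Finset.sum_le_sum fun k _ => by
          rw [abs_mul]
          exact mul_le_mul (hE j k) (hj k (Finset.mem_univ k)) (abs_nonneg _) hη0
      _ = (d : ℝ) * (η * |v j|) := by
          rw [Finset.sum_const, Finset.card_univ, Fintype.card_fin, nsmul_eq_mul]
      _ = (d : ℝ) * η * |v j| := by ring
  have hfin : |μ - ℓ j| * |v j| ≤ (d : ℝ) * η * |v j| := by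
    rw [← abs_mul, hrel]; exact hEvj
  exact le_of_mul_le_mul_right hfin hvj

lemma conj_eigen {d : ℕ} (U C : Matrix (Fin d) (Fin d) ℝ) (hU : U * Uᵀ = 1)
    (μ : ℝ) (v : Fin d → ℝ) (hv : (U * C * Uᵀ) *ᵥ v = μ • v) :
    C *ᵥ (Uᵀ *ᵥ v) = μ • (Uᵀ *ᵥ v) := by
  have hUtU : Uᵀ * U = 1 := mul_eq_one_comm.mp hU
  have h2 : Uᵀ * (U * C * Uᵀ) = C * Uᵀ := by
    rw [← Matrix.mul_assoc, ← Matrix.mul_assoc, hUtU, Matrix.one_mul]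
  calc C *ᵥ (Uᵀ *ᵥ v) = (C * Uᵀ) *ᵥ v := Matrix.mulVec_mulVec _ _ _
    _ = (Uᵀ * (U * C * Uᵀ)) *ᵥ v := by rw [h2]
    _ = Uᵀ *ᵥ ((U * C * Uᵀ) *ᵥ v) := (Matrix.mulVec_mulVec _ _ _).symm
    _ = Uᵀ *ᵥ (μ • v) := by rw [hv]
    _ = μ • (Uᵀ *ᵥ v) := Matrix.mulVec_smul _ _ _

lemma exists_gap {d : ℕ} (ℓ : Fin d → ℝ) (hℓ : StrictAnti ℓ) :
    ∃ δ : ℝ, 0 < δ ∧ ∀ i j, i ≠ j → δ ≤ |ℓ i - ℓ j| := by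
  classical
  set T := (Finset.univ.filter (fun p : Fin d × Fin d => p.1 ≠ p.2)).image
      (fun p : Fin d × Fin d => |ℓ p.1 - ℓ p.2|) with hT
  set s := insert (1:ℝ) T with hs
  have hsne : s.Nonempty := ⟨1, Finset.mem_insert_self _ _⟩
  refine ⟨s.min' hsne, ?_, ?_⟩
  · have hmem := s.min'_mem hsne
    rcases Finset.mem_insert.mp hmem with h | h
    · rw [h]; norm_num
    · obtain ⟨p, hp, hpe⟩ := Finset.mem_image.mp h
      have hne : p.1 ≠ p.2 := (Finset.mem_filter.mp hp).2
      rw [← hpe]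
      exact abs_pos.mpr (sub_ne_zero.mpr (fun hc => hne (hℓ.injective hc)))
  · intro i j hij
    apply Finset.min'_le
    exact Finset.mem_insert_of_mem (Finset.mem_image.mpr
      ⟨(i, j), Finset.mem_filter.mpr ⟨Finset.mem_univ _, hij⟩, rfl⟩)

lemma sortedDesc_antitone {n : ℕ} (f : Fin n → ℝ) : Antitone (sortedDesc f) := by
  intro i j hij
  exact Tuple.monotone_sort f (Fin.rev_le_rev.mpr hij)

lemma sorted_near {d : ℕ} (ℓ : Fin d → ℝ) (hℓ : StrictAnti ℓ) (δ : ℝ)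
    (hgap : ∀ i j, i ≠ j → δ ≤ |ℓ i - ℓ j|)
    (U E B : Matrix (Fin d) (Fin d) ℝ) (hU : U * Uᵀ = 1)
    (hBeq : B = U * (Matrix.diagonal ℓ + E) * Uᵀ) (hB : B.IsHermitian)
    (η : ℝ) (hη : 0 ≤ η) (hE : ∀ i j, |E i j| ≤ η)
    (hsmall : 2 * ((d : ℝ) * η) < δ) :
    ∀ i, |sortedDesc hB.eigenvalues i - ℓ i| ≤ (d : ℝ) * η := by
  have hUtU : Uᵀ * U = 1 := mul_eq_one_comm.mp hU
  set r : ℝ := (d : ℝ) * η with hrdef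
  have hr0 : 0 ≤ r := by positivity
  have hδ0 : 0 < δ := lt_of_le_of_lt (by positivity) hsmall
  have E1 : ∀ k, ∃ j, |hB.eigenvalues k - ℓ j| ≤ r := by
    intro k
    set v : Fin d → ℝ := ⇑(hB.eigenvectorBasis k) with hv
    have hv1 : ∑ i, v i ^ 2 = 1 := sum_sq_eigvec hB k
    have hBv : B *ᵥ v = hB.eigenvalues k • v := hB.mulVec_eigenvectorBasis k
    set w : Fin d → ℝ := Uᵀ *ᵥ v with hw
    have hw1 : ∑ i, w i ^ 2 = 1 := by
      rw [hw, sumsq_mulVec Uᵀ (by rw [Matrix.transpose_transpose]; exact hU) v, hv1]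
    have hwne : w ≠ 0 := by
      intro h0; rw [h0] at hw1; simp at hw1
    have heq : (Matrix.diagonal ℓ + E) *ᵥ w = hB.eigenvalues k • w :=
      conj_eigen U _ hU _ v (by rw [← hBeq]; exact hBv)
    exact eig_near_diag ℓ E η hE _ w hwne heq
  have E2 : ∀ j, ∃ k, |hB.eigenvalues k - ℓ j| ≤ r := by
    intro j
    have hd1 : (1 : ℝ) ≤ (d : ℝ) := by exact_mod_cast j.pos
    set x : Fin d → ℝ := U *ᵥ Pi.single j 1 with hx
    have hx1 : ∑ i, x i ^ 2 = 1 := by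
      rw [hx, sumsq_mulVec U hUtU]
      simp [Pi.single_apply, sq]
    have hBx : ∀ i, (B *ᵥ x) i - ℓ j * x i = (U *ᵥ (fun m => E m j)) i := by
      have hmain : B *ᵥ x = ℓ j • x + U *ᵥ (fun m => E m j) := by
        rw [hBeq, hx, Matrix.mulVec_mulVec, Matrix.mul_assoc (U * (Matrix.diagonal ℓ + E)) Uᵀ U,
          hUtU, Matrix.mul_one, ← Matrix.mulVec_mulVec]
        have hde : (Matrix.diagonal ℓ + E) *ᵥ Pi.single j 1
            = ℓ j • (Pi.single j 1 : Fin d → ℝ) + (fun m => E m j) := by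
          rw [Matrix.add_mulVec, Matrix.diagonal_mulVec_single]
          congr 1
          · funext m; simp [Pi.single_apply, Pi.smul_apply, smul_eq_mul, mul_comm]
          · funext m; simp [Matrix.mulVec_single]
        rw [hde, Matrix.mulVec_add, Matrix.mulVec_smul]
      intro i
      rw [hmain]
      simp [Pi.add_apply, Pi.smul_apply, smul_eq_mul]
    have hsum : ∑ i, ((B *ᵥ x) i - ℓ j * x i) ^ 2 ≤ r ^ 2 := by
      have h1 : ∑ i, ((B *ᵥ x) i - ℓ j * x i) ^ 2 = ∑ i, ((U *ᵥ (fun m => E m j)) i) ^ 2 := by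
        apply Finset.sum_congr rfl; intro i _; rw [hBx i]
      rw [h1, sumsq_mulVec U hUtU]
      calc ∑ i, (E i j) ^ 2 ≤ ∑ _i : Fin d, η ^ 2 := by
            apply Finset.sum_le_sum; intro i _
            calc (E i j) ^ 2 = |E i j| ^ 2 := (sq_abs _).symm
              _ ≤ η ^ 2 := by
                  apply pow_le_pow_left₀ (abs_nonneg _) (hE i j)
        _ = (d : ℝ) * η ^ 2 := by
            rw [Finset.sum_const, Finset.card_univ, Fintype.card_fin, nsmul_eq_mul]
        _ ≤ r ^ 2 := by rw [hrdef]; nlinarith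
    exact exists_eig_near hB x hx1 (ℓ j) r hr0 hsum
  have E1' : ∀ i : Fin d, ∃ j, |sortedDesc hB.eigenvalues i - ℓ j| ≤ r := fun i => E1 _
  have E2' : ∀ j : Fin d, ∃ i, |sortedDesc hB.eigenvalues i - ℓ j| ≤ r := by
    intro j
    obtain ⟨k, hk⟩ := E2 j
    refine ⟨((Tuple.sort hB.eigenvalues).symm k).rev, ?_⟩
    have hsk : sortedDesc hB.eigenvalues ((Tuple.sort hB.eigenvalues).symm k).rev
        = hB.eigenvalues k := by
      simp [sortedDesc, Fin.rev_rev]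
    rwa [hsk]
  choose τ hτ using E1'
  have hτsurj : Function.Surjective τ := by
    intro j
    obtain ⟨i', hi'⟩ := E2' j
    refine ⟨i', ?_⟩
    by_contra hne
    have h1' : |ℓ (τ i') - sortedDesc hB.eigenvalues i'| ≤ r := by
      rw [abs_sub_comm]; exact hτ i'
    have htri := abs_sub_le (ℓ (τ i')) (sortedDesc hB.eigenvalues i') (ℓ j)
    have hgg := hgap (τ i') j hne
    linarith
  have hτinj : Function.Injective τ := Finite.injective_iff_surjective.mpr hτsurj
  have hmono : Monotone τ := by
    intro a b hab
    rcases eq_or_lt_of_le hab with rfl | hlt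
    · exact le_rfl
    by_contra hgt
    push_neg at hgt
    have hanti := sortedDesc_antitone hB.eigenvalues hab
    have hlt2 : ℓ (τ a) < ℓ (τ b) := hℓ hgt
    have hne2 : τ a ≠ τ b := fun h => (ne_of_lt hlt) (hτinj h)
    have hgapab := hgap (τ a) (τ b) hne2
    have h1 := abs_le.mp (hτ a)
    have h2 := abs_le.mp (hτ b)
    have habs : ℓ (τ a) - ℓ (τ b) < 0 := by linarith
    rw [abs_of_neg habs] at hgapab
    linarith
  intro i
  have hid := fin_sm_id τ (hmono.strictMono_of_injective hτinj) i
  have h := hτ i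
  rwa [hid] at h

lemma key_est {d : ℕ} (ℓ : Fin d → ℝ) (hℓ : StrictAnti ℓ) (δ : ℝ)
    (hgap : ∀ i j, i ≠ j → δ ≤ |ℓ i - ℓ j|)
    (U E B : Matrix (Fin d) (Fin d) ℝ) (hU : U * Uᵀ = 1)
    (hBeq : B = U * (Matrix.diagonal ℓ + E) * Uᵀ) (hB : B.IsHermitian)
    (η : ℝ) (hη : 0 ≤ η) (hE : ∀ i j, |E i j| ≤ η)
    (hsmall : 2 * ((d : ℝ) * η) < δ)
    (hsmall2 : (d : ℝ) * (2 * ((d : ℝ) * η) / δ) ^ 2 ≤ 1 / 2) :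
    ∀ i, |sortedDesc hB.eigenvalues i - ℓ i - E i i| ≤ 4 * ((d : ℝ) * η) ^ 2 / δ := by
  set r : ℝ := (d : ℝ) * η with hrdef
  have hr0 : 0 ≤ r := by positivity
  have hδ0 : 0 < δ := lt_of_le_of_lt (by positivity) hsmall
  set ρ : ℝ := 2 * r / δ with hρdef
  have hρ0 : 0 ≤ ρ := by positivity
  have hloc := sorted_near ℓ hℓ δ hgap U E B hU hBeq hB η hη hE hsmall
  intro i
  set k : Fin d := Tuple.sort hB.eigenvalues i.rev with hkdef
  set μ : ℝ := hB.eigenvalues k with hμdef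
  have hsi : sortedDesc hB.eigenvalues i = μ := rfl
  set v : Fin d → ℝ := ⇑(hB.eigenvectorBasis k) with hvdef
  have hv1 : ∑ m, v m ^ 2 = 1 := sum_sq_eigvec hB k
  have hBv : B *ᵥ v = μ • v := hB.mulVec_eigenvectorBasis k
  set w : Fin d → ℝ := Uᵀ *ᵥ v with hwdef
  have hw1 : ∑ m, w m ^ 2 = 1 := by
    rw [hwdef, sumsq_mulVec Uᵀ (by rw [Matrix.transpose_transpose]; exact hU) v, hv1]
  have heq : (Matrix.diagonal ℓ + E) *ᵥ w = μ • w :=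
    conj_eigen U _ hU μ v (by rw [← hBeq]; exact hBv)
  have hcoord : ∀ m, ℓ m * w m + (∑ l, E m l * w l) = μ * w m := by
    intro m
    have hc := congrFun heq m
    simp only [Matrix.add_mulVec, Pi.add_apply, Matrix.mulVec_diagonal, Pi.smul_apply,
      smul_eq_mul] at hc
    have hEv : (E *ᵥ w) m = ∑ l, E m l * w l := rfl
    rw [hEv] at hc
    exact hc
  have hwb : ∀ m, |w m| ≤ 1 := by
    intro m
    rw [← sq_le_one_iff_abs_le_one]
    calc w m ^ 2 ≤ ∑ l, w l ^ 2 :=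
          Finset.single_le_sum (fun l _ => sq_nonneg (w l)) (Finset.mem_univ m)
      _ = 1 := hw1
  have hEw : ∀ m, |∑ l, E m l * w l| ≤ r := by
    intro m
    calc |∑ l, E m l * w l| ≤ ∑ l, |E m l * w l| := Finset.abs_sum_le_sum_abs _ _
      _ ≤ ∑ _l : Fin d, η := by
          apply Finset.sum_le_sum; intro l _
          rw [abs_mul]
          calc |E m l| * |w l| ≤ η * 1 := mul_le_mul (hE m l) (hwb l) (abs_nonneg _) hη
            _ = η := mul_one η
      _ = r := by rw [Finset.sum_const, Finset.card_univ, Fintype.card_fin, nsmul_eq_mul, hrdef]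
  have hμi : |μ - ℓ i| ≤ r := by rw [← hsi]; exact hloc i
  have hoff : ∀ m, m ≠ i → |w m| ≤ ρ := by
    intro m hm
    have hgapm : δ ≤ |ℓ i - ℓ m| := hgap i m (Ne.symm hm)
    have h2 : δ / 2 ≤ |μ - ℓ m| := by
      have ht := abs_sub_le (ℓ i) μ (ℓ m)
      have hcomm : |ℓ i - μ| = |μ - ℓ i| := abs_sub_comm _ _
      linarith
    have hrel : (μ - ℓ m) * w m = ∑ l, E m l * w l := by
      rw [sub_mul]; linarith [hcoord m]
    have habs : |μ - ℓ m| * |w m| ≤ r := by rw [← abs_mul, hrel]; exact hEw m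
    have h3 : δ / 2 * |w m| ≤ r :=
      le_trans (mul_le_mul_of_nonneg_right h2 (abs_nonneg _)) habs
    have h4 : |w m| ≤ r / (δ / 2) := by
      rw [le_div_iff₀ (by positivity)]
      linarith
    calc |w m| ≤ r / (δ / 2) := h4
      _ = ρ := by rw [hρdef]; field_simp
  have hwi2 : 1 / 2 ≤ w i ^ 2 := by
    have hsub : ∑ m ∈ Finset.univ.erase i, w m ^ 2 = 1 - w i ^ 2 := by
      rw [Finset.sum_erase_eq_sub (Finset.mem_univ i), hw1]
    have hcard : ((Finset.univ.erase i).card : ℝ) ≤ (d : ℝ) := by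
      have := Finset.card_erase_le (s := (Finset.univ : Finset (Fin d))) (a := i)
      have h2 : (Finset.univ : Finset (Fin d)).card = d := by simp
      exact_mod_cast le_trans this (le_of_eq h2)
    have hb : ∑ m ∈ Finset.univ.erase i, w m ^ 2 ≤ (d : ℝ) * ρ ^ 2 := by
      calc ∑ m ∈ Finset.univ.erase i, w m ^ 2 ≤ ∑ _m ∈ Finset.univ.erase i, ρ ^ 2 := by
            apply Finset.sum_le_sum; intro m hm
            calc w m ^ 2 = |w m| ^ 2 := (sq_abs _).symm
              _ ≤ ρ ^ 2 := pow_le_pow_left₀ (abs_nonneg _) (hoff m (Finset.ne_of_mem_erase hm)) 2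
        _ = ((Finset.univ.erase i).card : ℝ) * ρ ^ 2 := by
            rw [Finset.sum_const, nsmul_eq_mul]
        _ ≤ (d : ℝ) * ρ ^ 2 := mul_le_mul_of_nonneg_right hcard (sq_nonneg _)
    have hsm2 : (d : ℝ) * ρ ^ 2 ≤ 1 / 2 := hsmall2
    linarith
  have hwi : 1 / 2 ≤ |w i| := by
    rw [← sq_abs] at hwi2
    nlinarith [abs_nonneg (w i)]
  have hrel : (μ - ℓ i - E i i) * w i = ∑ l ∈ Finset.univ.erase i, E i l * w l := by
    have hc := hcoord i
    have hsplit : ∑ l, E i l * w l = E i i * w i + ∑ l ∈ Finset.univ.erase i, E i l * w l :=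
      (Finset.add_sum_erase Finset.univ (fun l => E i l * w l) (Finset.mem_univ i)).symm
    rw [sub_mul, sub_mul]
    linarith
  have hRHS : |∑ l ∈ Finset.univ.erase i, E i l * w l| ≤ r * ρ := by
    have hcard : ((Finset.univ.erase i).card : ℝ) ≤ (d : ℝ) := by
      have := Finset.card_erase_le (s := (Finset.univ : Finset (Fin d))) (a := i)
      have h2 : (Finset.univ : Finset (Fin d)).card = d := by simp
      exact_mod_cast le_trans this (le_of_eq h2)
    calc |∑ l ∈ Finset.univ.erase i, E i l * w l|
        ≤ ∑ l ∈ Finset.univ.erase i, |E i l * w l| := Finset.abs_sum_le_sum_abs _ _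
      _ ≤ ∑ _l ∈ Finset.univ.erase i, η * ρ := by
          apply Finset.sum_le_sum; intro l hl
          rw [abs_mul]
          exact mul_le_mul (hE i l) (hoff l (Finset.ne_of_mem_erase hl)) (abs_nonneg _) hη
      _ = ((Finset.univ.erase i).card : ℝ) * (η * ρ) := by
          rw [Finset.sum_const, nsmul_eq_mul]
      _ ≤ (d : ℝ) * (η * ρ) := mul_le_mul_of_nonneg_right hcard (by positivity)
      _ = r * ρ := by rw [hrdef]; ring
  have hfin : |μ - ℓ i - E i i| * (1 / 2) ≤ r * ρ := by
    calc |μ - ℓ i - E i i| * (1 / 2) ≤ |μ - ℓ i - E i i| * |w i| :=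
          mul_le_mul_of_nonneg_left hwi (abs_nonneg _)
      _ = |(μ - ℓ i - E i i) * w i| := (abs_mul _ _).symm
      _ ≤ r * ρ := by rw [hrel]; exact hRHS
  rw [hsi]
  have hfin2 : |μ - ℓ i - E i i| ≤ 2 * (r * ρ) := by linarith
  calc |μ - ℓ i - E i i| ≤ 2 * (r * ρ) := hfin2
    _ = 4 * r ^ 2 / δ := by rw [hρdef]; field_simp; ring

/-- for a symmetric `A = U L Uᵀ` with `d` distinct (strictly decreasing)
eigenvalues and symmetric `H_t → H` as `t ↓ 0`, the ordered-eigenvalue map satisfies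
`t⁻¹(L(A + tH_t) − L(A)) → D_{UᵀHU}`. -/
theorem ordered_eigenvalues_derivative {d : ℕ}
    (A U : Matrix (Fin d) (Fin d) ℝ) (ℓ : Fin d → ℝ)
    (hA : Aᵀ = A) (hU : U * Uᵀ = 1) (hℓ : StrictAnti ℓ)
    (hdec : A = U * Matrix.diagonal ℓ * Uᵀ)
    (H : Matrix (Fin d) (Fin d) ℝ) (hH : Hᵀ = H)
    (Ht : ℝ → Matrix (Fin d) (Fin d) ℝ) (hHt : ∀ t, (Ht t)ᵀ = Ht t)
    (hconv : Tendsto Ht (𝓝[>] (0 : ℝ)) (𝓝 H)) :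
    Tendsto (fun t : ℝ => t⁻¹ • (Lmap (A + t • Ht t) - Lmap A)) (𝓝[>] (0 : ℝ))
      (𝓝 (diagPart (Uᵀ * H * U))) := by
  have hUtU : Uᵀ * U = 1 := mul_eq_one_comm.mp hU
  obtain ⟨δ, hδ0, hgap⟩ := exists_gap ℓ hℓ
  have hBsym : ∀ t : ℝ, (A + t • Ht t).IsHermitian := by
    intro t
    apply symm_isHerm
    rw [Matrix.transpose_add, Matrix.transpose_smul, hHt, hA]
  have hAh : A.IsHermitian := symm_isHerm hA
  have hAeq : A = U * (Matrix.diagonal ℓ + 0) * Uᵀ := by rw [add_zero]; exact hdec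
  have hLA : ∀ i, sortedDesc hAh.eigenvalues i = ℓ i := by
    intro i
    have h0 := key_est ℓ hℓ δ hgap U 0 A hU hAeq hAh 0 le_rfl (by simp)
      (by simpa using hδ0) (by norm_num) i
    simp only [Matrix.zero_apply, sub_zero, mul_zero] at h0
    have h1 : |sortedDesc hAh.eigenvalues i - ℓ i| ≤ 0 := by
      have : (4 : ℝ) * 0 ^ 2 / δ = 0 := by ring
      rwa [this] at h0
    have h2 := abs_eq_zero.mp (le_antisymm h1 (abs_nonneg _))
    linarith [sub_eq_zero.mp h2]
  have hLmapA : Lmap A = Matrix.diagonal ℓ := by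
    rw [Lmap, dif_pos hAh]
    exact congrArg _ (funext hLA)
  have hLmapB : ∀ t : ℝ, Lmap (A + t • Ht t)
      = Matrix.diagonal (sortedDesc (hBsym t).eigenvalues) := by
    intro t; rw [Lmap, dif_pos (hBsym t)]
  set K := Uᵀ * H * U with hKdef
  have hKt : Tendsto (fun t => Uᵀ * Ht t * U) (𝓝[>] (0:ℝ)) (𝓝 K) := by
    have hcont : Continuous fun M : Matrix (Fin d) (Fin d) ℝ => Uᵀ * M * U :=
      (continuous_const.matrix_mul continuous_id).matrix_mul continuous_const
    exact (hcont.tendsto H).comp hconv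
  have hKtij : ∀ i j, Tendsto (fun t => (Uᵀ * Ht t * U) i j) (𝓝[>] (0:ℝ)) (𝓝 (K i j)) := by
    intro i j
    exact tendsto_pi_nhds.mp (tendsto_pi_nhds.mp hKt i) j
  set c : ℝ := 1 + ∑ p : Fin d × Fin d, |K p.1 p.2| with hcdef
  have hsum0 : 0 ≤ ∑ p : Fin d × Fin d, |K p.1 p.2| :=
    Finset.sum_nonneg fun p _ => abs_nonneg _
  have hc0 : 0 < c := by rw [hcdef]; linarith
  have hKbound : ∀ᶠ t in 𝓝[>] (0:ℝ), ∀ i j, |(Uᵀ * Ht t * U) i j| ≤ c := by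
    refine eventually_all.mpr fun i => eventually_all.mpr fun j => ?_
    have h2 : ∀ᶠ t in 𝓝[>] (0:ℝ), |(Uᵀ * Ht t * U) i j - K i j| < 1 := by
      have := Metric.tendsto_nhds.mp (hKtij i j) 1 one_pos
      simpa [Real.dist_eq] using this
    filter_upwards [h2] with t ht
    have hKle : |K i j| ≤ ∑ p : Fin d × Fin d, |K p.1 p.2| :=
      Finset.single_le_sum (f := fun p : Fin d × Fin d => |K p.1 p.2|)
        (fun p _ => abs_nonneg _) (Finset.mem_univ (i, j))
    have h3 := abs_add_le (K i j) ((Uᵀ * Ht t * U) i j - K i j)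
    have h4 : K i j + ((Uᵀ * Ht t * U) i j - K i j) = (Uᵀ * Ht t * U) i j := by ring
    rw [h4] at h3
    rw [hcdef]
    linarith
  have hsm1 : ∀ᶠ t in 𝓝[>] (0:ℝ), 2 * ((d : ℝ) * (t * c)) < δ := by
    have hlin : Tendsto (fun t : ℝ => 2 * ((d : ℝ) * (t * c))) (𝓝[>] (0:ℝ)) (𝓝 0) := by
      have hco : Continuous fun t : ℝ => 2 * ((d : ℝ) * (t * c)) :=
        continuous_const.mul (continuous_const.mul (continuous_id.mul continuous_const))
      have h0 := hco.tendsto 0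
      simp only [mul_zero, zero_mul] at h0
      exact h0.mono_left nhdsWithin_le_nhds
    exact hlin.eventually_lt_const hδ0
  have hsm2 : ∀ᶠ t in 𝓝[>] (0:ℝ), (d : ℝ) * (2 * ((d : ℝ) * (t * c)) / δ) ^ 2 ≤ 1 / 2 := by
    have hlin : Tendsto (fun t : ℝ => (d : ℝ) * (2 * ((d : ℝ) * (t * c)) / δ) ^ 2)
        (𝓝[>] (0:ℝ)) (𝓝 0) := by
      have hco : Continuous fun t : ℝ => (d : ℝ) * (2 * ((d : ℝ) * (t * c)) / δ) ^ 2 :=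
        continuous_const.mul
          (((continuous_const.mul (continuous_const.mul (continuous_id.mul
            continuous_const))).div_const δ).pow 2)
      have h0 := hco.tendsto 0
      simp only [mul_zero, zero_mul, zero_div, ne_eq, OfNat.ofNat_ne_zero,
        not_false_eq_true, zero_pow] at h0
      exact h0.mono_left nhdsWithin_le_nhds
    exact hlin.eventually_le_const (by norm_num)
  have hmain : ∀ᶠ t in 𝓝[>] (0:ℝ), ∀ i,
      |sortedDesc (hBsym t).eigenvalues i - ℓ i - t * ((Uᵀ * Ht t * U) i i)|
        ≤ 4 * ((d : ℝ) * (t * c)) ^ 2 / δ := by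
    filter_upwards [hKbound, hsm1, hsm2, eventually_mem_nhdsWithin] with t hb h1 h2 ht
    have ht0 : (0:ℝ) < t := ht
    have hBeq : A + t • Ht t = U * (Matrix.diagonal ℓ + t • (Uᵀ * Ht t * U)) * Uᵀ := by
      have h1 : U * (t • (Uᵀ * Ht t * U)) * Uᵀ = t • Ht t := by
        rw [Matrix.mul_smul, Matrix.smul_mul]
        congr 1
        calc U * (Uᵀ * Ht t * U) * Uᵀ = U * Uᵀ * Ht t * (U * Uᵀ) := by
              simp only [Matrix.mul_assoc]
          _ = Ht t := by rw [hU, Matrix.one_mul, Matrix.mul_one]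
      rw [Matrix.mul_add, Matrix.add_mul, h1, ← hdec]
    have hEb : ∀ i j, |(t • (Uᵀ * Ht t * U)) i j| ≤ t * c := by
      intro i j
      rw [Matrix.smul_apply, smul_eq_mul, abs_mul, abs_of_pos ht0]
      exact mul_le_mul_of_nonneg_left (hb i j) ht0.le
    have hk := key_est ℓ hℓ δ hgap U (t • (Uᵀ * Ht t * U)) (A + t • Ht t) hU hBeq (hBsym t)
      (t * c) (by positivity) hEb h1 h2
    intro i
    have h := hk i
    simpa [Matrix.smul_apply, smul_eq_mul] using h
  refine tendsto_pi_nhds.mpr fun i => tendsto_pi_nhds.mpr fun j => ?_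
  by_cases hij : i = j
  · subst hij
    simp only [hLmapB, hLmapA, Matrix.smul_apply, Matrix.sub_apply, Matrix.diagonal_apply_eq,
      diagPart, smul_eq_mul]
    have hdiff : Tendsto (fun t : ℝ =>
        t⁻¹ * (sortedDesc (hBsym t).eigenvalues i - ℓ i) - (Uᵀ * Ht t * U) i i)
        (𝓝[>] (0:ℝ)) (𝓝 0) := by
      refine squeeze_zero_norm' (a := fun t => 4 * (d : ℝ) ^ 2 * c ^ 2 / δ * t) ?_ ?_
      · filter_upwards [hmain, eventually_mem_nhdsWithin] with t hm ht
        have ht0 : (0:ℝ) < t := ht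
        have h := hm i
        rw [Real.norm_eq_abs]
        have heq2 : t⁻¹ * (sortedDesc (hBsym t).eigenvalues i - ℓ i) - (Uᵀ * Ht t * U) i i
            = t⁻¹ * (sortedDesc (hBsym t).eigenvalues i - ℓ i - t * ((Uᵀ * Ht t * U) i i)) := by
          field_simp
        rw [heq2, abs_mul, abs_of_pos (inv_pos.mpr ht0)]
        calc t⁻¹ * |sortedDesc (hBsym t).eigenvalues i - ℓ i - t * ((Uᵀ * Ht t * U) i i)|
            ≤ t⁻¹ * (4 * ((d : ℝ) * (t * c)) ^ 2 / δ) :=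
              mul_le_mul_of_nonneg_left h (inv_nonneg.mpr ht0.le)
          _ = 4 * (d : ℝ) ^ 2 * c ^ 2 / δ * t := by field_simp
      · have hco : Continuous fun t : ℝ => 4 * (d : ℝ) ^ 2 * c ^ 2 / δ * t :=
          continuous_const.mul continuous_id
        have h0 := hco.tendsto 0
        simp only [mul_zero] at h0
        exact h0.mono_left nhdsWithin_le_nhds
    have hfinal := hdiff.add (hKtij i i)
    simp only [sub_add_cancel, zero_add] at hfinal
    exact hfinal
  · simp only [hLmapB, hLmapA, Matrix.smul_apply, Matrix.sub_apply,
      Matrix.diagonal_apply_ne _ hij, diagPart, sub_zero, smul_eq_mul, mul_zero]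
    exact tendsto_const_nhds
end
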